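/- arXiv:2001.00519 — 8 statements merged into one kernel-verified Lean document; each statement's English description precedes it below -/
import Mathlib

section
/- Let 1 ≤ M ≤ N be integers and a ≤ b reals. Let φ_1,…,φ_M : ℝ → ℂ, ψ_1,…,ψ_N : ℝ → ℂ and ξ_1,…,ξ_M : ℝ → ℂ be measurable functions, and let ψ̄_{j,k} ∈ ℂ be constants for 1 ≤ j ≤ N and M+1 ≤ k ≤ N. Assume that for all 1 ≤ i ≤ M, 1 ≤ j ≤ N, 1 ≤ k ≤ M the functions φ_i·ψ_j·ξ_k and ψ_j·ξ_k are Lebesgue integrable on [a,b]. For x = (x_1,…,x_M) ∈ ℝ^M, let Φ(x) be the M×M matrix with (i,j) entry φ_i(x_j), and let Ψ(x) be the N×N matrix whose (i,j) entry equals ψ_i(x_j) for 1 ≤ j ≤ M and equals ψ̄_{i,j} for M+1 ≤ j ≤ N. Then ∫_{[a,b]^M} det Φ(x) · det Ψ(x) · Π_{k=1}^M ξ_k(x_k) dx_1⋯dx_M = T(C), where C is the N×N×N tensor with entries: c_{i,j,k} = ∫_a^b φ_i(x) ψ_j(x) ξ_k(x) dx for i ≤ M and k ≤ M; c_{i,j,k}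 = ∫_a^b ψ_j(x) ξ_k(x) dx for i > M and k ≤ M; c_{i,j,k} = 0 for k > M and i < k; and c_{i,j,k} = ψ̄_{j,k} for k > M and i ≥ k. -/
open MeasureTheory


lemma restrict_pi {ι : Type*} [Fintype ι] (s : Set ℝ) :
    (volume : Measure (ι → ℝ)).restrict (Set.pi Set.univ fun _ => s)
      = Measure.pi fun _ : ι => volume.restrict s := by
  refine (Measure.pi_eq (μ := fun _ : ι => volume.restrict s) fun t ht => ?_).symm
  rw [Measure.restrict_apply (MeasurableSet.univ_pi ht), ← Set.pi_inter_distrib]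
  rw [show (volume : Measure (ι → ℝ)) = Measure.pi fun _ => volume from rfl, Measure.pi_pi]
  exact Finset.prod_congr rfl fun i _ => (Measure.restrict_apply (ht i)).symm

lemma pi_integral {ι : Type*} [Fintype ι] (μ : ι → Measure ℝ) [h : ∀ i, SigmaFinite (μ i)]
    (g : ι → ℝ → ℂ) :
    ∫ x : ι → ℝ, ∏ i, g i (x i) ∂(Measure.pi μ) = ∏ i, ∫ t, g i t ∂(μ i) :=
  integral_fintype_prod_eq_prod (E := fun _ => ℝ) g (μ := μ)

lemma pi_integrable {ι : Type*} [Fintype ι] (μ : ι → Measure ℝ) [h : ∀ i, SigmaFinite (μ i)]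
    {g : ι → ℝ → ℂ} (hg : ∀ i, Integrable (g i) (μ i)) :
    Integrable (fun x : ι → ℝ => ∏ i, g i (x i)) (Measure.pi μ) :=
  Integrable.fintype_prod_dep (E := fun _ => ℝ) (f := g) (μ := μ) hg

section helpers
variable {M N : ℕ} (hMN : M ≤ N)

def fsub : Fin M ≃ {j : Fin N // (j : ℕ) < M} where
  toFun k := ⟨Fin.castLE hMN k, k.2⟩
  invFun j := ⟨j.1, j.2⟩
  left_inv k := rfl
  right_inv j := rfl

noncomputable def eperm (ν : Equiv.Perm (Fin M)) : Equiv.Perm (Fin N) :=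
  ν.extendDomain (fsub hMN)

lemma eperm_lt (ν : Equiv.Perm (Fin M)) (k : Fin M) :
    eperm hMN ν (Fin.castLE hMN k) = Fin.castLE hMN (ν k) := by
  have : (Fin.castLE hMN k : Fin N) = ((fsub hMN k : {j : Fin N // (j:ℕ) < M}) : Fin N) := rfl
  rw [eperm, this, Equiv.Perm.extendDomain_apply_image]
  rfl

lemma eperm_ge (ν : Equiv.Perm (Fin M)) (k : Fin N) (hk : ¬ (k : ℕ) < M) :
    eperm hMN ν k = k :=
  Equiv.Perm.extendDomain_apply_not_subtype _ _ hk

lemma eperm_sign (ν : Equiv.Perm (Fin M)) :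
    Equiv.Perm.sign (eperm hMN ν) = Equiv.Perm.sign ν :=
  Equiv.Perm.sign_extendDomain _ _

lemma eperm_inj : Function.Injective (eperm hMN) := by
  intro ν ν' h
  ext k
  have := congrArg (· (Fin.castLE hMN k)) h
  simp only [eperm_lt] at this
  exact congrArg Fin.val (Fin.castLE_injective hMN this)

lemma eperm_surj (μ : Equiv.Perm (Fin N)) (h : ∀ k : Fin N, ¬ (k : ℕ) < M → μ k = k) :
    ∃ ν : Equiv.Perm (Fin M), eperm hMN ν = μ := by
  have hp : ∀ j : Fin N, ((j : ℕ) < M ↔ ((μ j : Fin N) : ℕ) < M) := by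
    intro j
    constructor
    · intro hj
      by_contra hj'
      have h1 : μ (μ j) = μ j := h _ hj'
      have := μ.injective h1
      rw [this] at hj'
      exact hj' hj
    · intro hj
      by_contra hj'
      rw [h j hj'] at hj
      exact hj' hj
  refine ⟨(fsub hMN).permCongr.symm (μ.subtypePerm fun j => (hp j).symm), ?_⟩
  ext k
  by_cases hk : (k : ℕ) < M
  · have hk' : (Fin.castLE hMN (⟨(k:ℕ), hk⟩ : Fin M)) = k := by
      apply Fin.ext; rfl
    rw [← hk', eperm_lt]
    rfl
  · rw [eperm_ge hMN _ k hk, h k hk]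

lemma fix_of_ge (μ : Equiv.Perm (Fin N))
    (h : ∀ k : Fin N, ¬ (k : ℕ) < M → (k : ℕ) ≤ ((μ k : Fin N) : ℕ)) :
    ∀ k : Fin N, ¬ (k : ℕ) < M → μ k = k := by
  intro k hk
  set T : Finset (Fin N) := Finset.univ.filter (fun j : Fin N => (k : ℕ) < (j : ℕ)) with hT
  have hmaps : ∀ j ∈ T, μ j ∈ T := by
    intro j hj
    simp only [hT, Finset.mem_filter, Finset.mem_univ, true_and] at hj ⊢
    have hjM : ¬ (j : ℕ) < M := by omega
    exact lt_of_lt_of_le hj (h j hjM)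
  have hsub : T.image μ ⊆ T := by
    intro x hx
    obtain ⟨j, hj, rfl⟩ := Finset.mem_image.mp hx
    exact hmaps j hj
  have himg : T.image μ = T :=
    Finset.eq_of_subset_of_card_le hsub (le_of_eq (Finset.card_image_of_injective T μ.injective).symm)
  have hle : ((μ k : Fin N) : ℕ) ≤ (k : ℕ) := by
    by_contra hlt
    have : μ k ∈ T := by
      simp only [hT, Finset.mem_filter, Finset.mem_univ, true_and]
      exact Nat.lt_of_not_le hlt
    rw [← himg] at this
    obtain ⟨j, hj, hjk⟩ := Finset.mem_image.mp this
    have := μ.injective hjk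
    rw [this] at hj
    simp only [hT, Finset.mem_filter, Finset.mem_univ, true_and] at hj
    exact lt_irrefl _ hj
  exact Fin.ext (le_antisymm hle (h k hk))

lemma prod_split (F : Fin N → ℂ) :
    ∏ j : Fin N, F j = (∏ k : Fin M, F (Fin.castLE hMN k)) *
      ∏ j ∈ Finset.univ.filter (fun j : Fin N => ¬ (j : ℕ) < M), F j := by
  rw [← Finset.prod_filter_mul_prod_filter_not Finset.univ (fun j : Fin N => (j : ℕ) < M)]
  congr 1
  rw [show Finset.univ.filter (fun j : Fin N => (j : ℕ) < M)
      = Finset.univ.map (Fin.castLEEmb hMN) from ?_, Finset.prod_map]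
  · rfl
  · ext j
    simp only [Finset.mem_filter, Finset.mem_univ, true_and, Finset.mem_map]
    constructor
    · intro hj
      exact ⟨⟨(j : ℕ), hj⟩, by apply Fin.ext; rfl⟩
    · rintro ⟨k, -, rfl⟩
      exact k.2

end helpers



/-- The pseudo-determinant operator on a rank-3 tensor:
`T(A) = Σ_μ Σ_σ sgn(μ) sgn(σ) Π_k a_{μ(k), σ(k), k}`. -/
noncomputable def pseudoDet {N : ℕ} (A : Fin N → Fin N → Fin N → ℂ) : ℂ :=
  ∑ μ : Equiv.Perm (Fin N), ∑ σ : Equiv.Perm (Fin N),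
    ((Equiv.Perm.sign μ : ℤ) : ℂ) * ((Equiv.Perm.sign σ : ℤ) : ℂ) *
      ∏ k : Fin N, A (μ k) (σ k) k

/-- Theorem 2.1: the integral over the hypercube `[a,b]^M` of
`det Φ(x) ⬝ det Ψ(x) ⬝ Π_k ξ_k(x_k)` equals the pseudo-determinant `T(C)`. -/
theorem stmt_1 {M N : ℕ} (hM : 1 ≤ M) (hMN : M ≤ N) {a b : ℝ} (hab : a ≤ b)
    (φ : Fin M → ℝ → ℂ) (ψ : Fin N → ℝ → ℂ) (ξ : Fin M → ℝ → ℂ)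
    (ψbar : Fin N → Fin N → ℂ)
    (hφ : ∀ i, Measurable (φ i)) (hψ : ∀ j, Measurable (ψ j))
    (hξ : ∀ k, Measurable (ξ k))
    (hInt1 : ∀ (i : Fin M) (j : Fin N) (k : Fin M),
      IntegrableOn (fun x => φ i x * ψ j x * ξ k x) (Set.Icc a b))
    (hInt2 : ∀ (j : Fin N) (k : Fin M),
      IntegrableOn (fun x => ψ j x * ξ k x) (Set.Icc a b)) :
    (∫ x : Fin M → ℝ in Set.univ.pi fun _ : Fin M => Set.Icc a b,
      (Matrix.of fun i j : Fin M => φ i (x j)).det *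
      (Matrix.of fun i j : Fin N =>
        if h : (j : ℕ) < M then ψ i (x ⟨j, h⟩) else ψbar i j).det *
      ∏ k : Fin M, ξ k (x k))
    = pseudoDet (fun i j k =>
        if hk : (k : ℕ) < M then
          if hi : (i : ℕ) < M then
            ∫ x in Set.Icc a b, φ ⟨i, hi⟩ x * ψ j x * ξ ⟨k, hk⟩ x
          else ∫ x in Set.Icc a b, ψ j x * ξ ⟨k, hk⟩ x
        else if (i : ℕ) < (k : ℕ) then 0 else ψbar j k) := by
  classical
  set C : Fin N → Fin N → Fin N → ℂ := fun i j k =>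
        if hk : (k : ℕ) < M then
          if hi : (i : ℕ) < M then
            ∫ x in Set.Icc a b, φ ⟨i, hi⟩ x * ψ j x * ξ ⟨k, hk⟩ x
          else ∫ x in Set.Icc a b, ψ j x * ξ ⟨k, hk⟩ x
        else if (i : ℕ) < (k : ℕ) then 0 else ψbar j k with hC
  set cψ : Equiv.Perm (Fin N) → ℂ := fun σ =>
    ∏ j ∈ Finset.univ.filter (fun j : Fin N => ¬ (j : ℕ) < M), ψbar (σ j) j with hcψ
  -- pointwise expansion of the integrand
  have hpt : ∀ x : Fin M → ℝ,
      (Matrix.of fun i j : Fin M => φ i (x j)).det *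
      (Matrix.of fun i j : Fin N =>
        if h : (j : ℕ) < M then ψ i (x ⟨j, h⟩) else ψbar i j).det *
      ∏ k : Fin M, ξ k (x k)
      = ∑ ν : Equiv.Perm (Fin M), ∑ σ : Equiv.Perm (Fin N),
        (((Equiv.Perm.sign ν : ℤ) : ℂ) * ((Equiv.Perm.sign σ : ℤ) : ℂ) * cψ σ) *
          ∏ k : Fin M, (φ (ν k) (x k) * ψ (σ (Fin.castLE hMN k)) (x k) * ξ k (x k)) := by
    intro x
    rw [Matrix.det_apply', Matrix.det_apply', Finset.sum_mul_sum]
    simp only [Finset.sum_mul]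
    refine Finset.sum_congr rfl fun ν _ => Finset.sum_congr rfl fun σ _ => ?_
    have h1 : ∏ j : Fin N, (Matrix.of fun i j : Fin N =>
        if h : (j : ℕ) < M then ψ i (x ⟨j, h⟩) else ψbar i j) (σ j) j
        = (∏ k : Fin M, ψ (σ (Fin.castLE hMN k)) (x k)) * cψ σ := by
      rw [prod_split hMN]
      congr 1
      · refine Finset.prod_congr rfl fun k _ => ?_
        simp only [Matrix.of_apply, Fin.coe_castLE, dif_pos k.isLt, Fin.eta]
      · refine Finset.prod_congr rfl fun j hj => ?_
        rw [Finset.mem_filter] at hj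
        simp only [Matrix.of_apply, dif_neg hj.2]
    have h2 : ∏ k : Fin M, (φ (ν k) (x k) * ψ (σ (Fin.castLE hMN k)) (x k) * ξ k (x k))
        = (∏ k : Fin M, φ (ν k) (x k)) * (∏ k : Fin M, ψ (σ (Fin.castLE hMN k)) (x k)) *
          ∏ k : Fin M, ξ k (x k) := by
      rw [Finset.prod_mul_distrib, Finset.prod_mul_distrib]
    simp only [Matrix.of_apply] at h1 ⊢
    rw [h1, h2]
    ring
  -- integrability
  have hgint : ∀ (ν : Equiv.Perm (Fin M)) (σ : Equiv.Perm (Fin N)) (k : Fin M),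
      Integrable (fun t => φ (ν k) t * ψ (σ (Fin.castLE hMN k)) t * ξ k t)
        (volume.restrict (Set.Icc a b)) := fun ν σ k => hInt1 (ν k) _ k
  have hterm : ∀ (ν : Equiv.Perm (Fin M)) (σ : Equiv.Perm (Fin N)),
      Integrable (fun x : Fin M → ℝ =>
        (((Equiv.Perm.sign ν : ℤ) : ℂ) * ((Equiv.Perm.sign σ : ℤ) : ℂ) * cψ σ) *
          ∏ k : Fin M, (φ (ν k) (x k) * ψ (σ (Fin.castLE hMN k)) (x k) * ξ k (x k)))
        (Measure.pi fun _ : Fin M => volume.restrict (Set.Icc a b)) := fun ν σ =>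
    (pi_integrable _ (fun k => hgint ν σ k)).const_mul _
  -- LHS computation
  have hLHS : (∫ x : Fin M → ℝ in Set.univ.pi fun _ : Fin M => Set.Icc a b,
      (Matrix.of fun i j : Fin M => φ i (x j)).det *
      (Matrix.of fun i j : Fin N =>
        if h : (j : ℕ) < M then ψ i (x ⟨j, h⟩) else ψbar i j).det *
      ∏ k : Fin M, ξ k (x k))
      = ∑ ν : Equiv.Perm (Fin M), ∑ σ : Equiv.Perm (Fin N),
        (((Equiv.Perm.sign ν : ℤ) : ℂ) * ((Equiv.Perm.sign σ : ℤ) : ℂ) * cψ σ) *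
          ∏ k : Fin M, ∫ t in Set.Icc a b,
            φ (ν k) t * ψ (σ (Fin.castLE hMN k)) t * ξ k t := by
    simp only [hpt]
    rw [restrict_pi (ι := Fin M) (Set.Icc a b)]
    rw [integral_finset_sum _ (fun ν _ => integrable_finset_sum _ (fun σ _ => hterm ν σ))]
    refine Finset.sum_congr rfl fun ν _ => ?_
    rw [integral_finset_sum _ (fun σ _ => hterm ν σ)]
    refine Finset.sum_congr rfl fun σ _ => ?_
    rw [integral_const_mul]
    exact congrArg _ (pi_integral (fun _ : Fin M => volume.restrict (Set.Icc a b))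
      (fun k t => φ (ν k) t * ψ (σ (Fin.castLE hMN k)) t * ξ k t))
  rw [hLHS, pseudoDet]
  -- RHS computation
  have hzero : ∀ μ' ∈ (Finset.univ : Finset (Equiv.Perm (Fin N))),
      μ' ∉ Finset.univ.image (eperm hMN) →
      (∑ σ : Equiv.Perm (Fin N),
        ((Equiv.Perm.sign μ' : ℤ) : ℂ) * ((Equiv.Perm.sign σ : ℤ) : ℂ) *
          ∏ k : Fin N, C (μ' k) (σ k) k) = 0 := by
    intro μ' _ hμ'
    have hex : ∃ k : Fin N, ¬ (k : ℕ) < M ∧ ((μ' k : Fin N) : ℕ) < (k : ℕ) := by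
      by_contra hc
      push_neg at hc
      obtain ⟨ν, hν⟩ := eperm_surj hMN μ' (fix_of_ge μ' (fun k hk => hc k (Nat.le_of_not_lt hk)))
      exact hμ' (Finset.mem_image.mpr ⟨ν, Finset.mem_univ _, hν⟩)
    obtain ⟨k, hk1, hk2⟩ := hex
    refine Finset.sum_eq_zero fun σ _ => ?_
    have hCk : C (μ' k) (σ k) k = 0 := by
      simp only [hC]
      rw [dif_neg hk1, if_pos hk2]
    have hprod : (∏ kk : Fin N, C (μ' kk) (σ kk) kk) = 0 :=
      Finset.prod_eq_zero (Finset.mem_univ k) hCk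
    rw [hprod, mul_zero]
  rw [← Finset.sum_subset (Finset.subset_univ (Finset.univ.image (eperm hMN))) hzero,
    Finset.sum_image (fun ν _ ν' _ h => eperm_inj hMN h)]
  refine Finset.sum_congr rfl fun ν _ => Finset.sum_congr rfl fun σ _ => ?_
  have hp : (∏ j : Fin N, C (eperm hMN ν j) (σ j) j)
      = (∏ k : Fin M, ∫ t in Set.Icc a b,
          φ (ν k) t * ψ (σ (Fin.castLE hMN k)) t * ξ k t) * cψ σ := by
    rw [prod_split hMN (F := fun j => C (eperm hMN ν j) (σ j) j)]
    congr 1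
    · refine Finset.prod_congr rfl fun k _ => ?_
      rw [eperm_lt hMN]
      simp only [hC, Fin.coe_castLE, dif_pos k.isLt, dif_pos (ν k).isLt, Fin.eta]
    · refine Finset.prod_congr rfl fun j hj => ?_
      rw [Finset.mem_filter] at hj
      rw [eperm_ge hMN ν j hj.2]
      simp only [hC, dif_neg hj.2, if_neg (lt_irrefl (j : ℕ))]
  rw [eperm_sign hMN, hp]
  ring
end

section
/- Under the matrix setup below, let α ≤ a ≤ b ≤ β. Then ∫_{b ≥ x_1 ≥ x_2 ≥ ⋯ ≥ x_M ≥ a} det Φ(x) · det Ψ(x) · Π_{k=1}^M ξ(x_k) dx = (1/M!) · T(A), where A is the N×N×N tensor with entries: a_{i,j,k} = ∫_a^b φ_i(x) ψ_j(x) ξ(x) dx for i ≤ M and k ≤ M; a_{i,j,k} = ∫_a^b ψ_j(x) ξ(x) dx for i > M and k ≤ M; a_{i,j,k} = 0 for k > M and i < k; and a_{i,j,k} = ψ̄_{j,k} for k > M and i ≥ k. (When K·det Φ·det Ψ·Π ξ is the joint density of M ordered random variables in [α,β], the left-hand side times K is the probability that all of them lie in [a,b].) -/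
open MeasureTheory

/-- `ς_i(x) = φ_i(x) ξ(x)` for `i ≤ M`, and `ς_i(x) = ξ(x)` for `i > M`. -/
def varsigma {M N : ℕ} (φ : Fin M → ℝ → ℂ) (ξ : ℝ → ℂ) (i : Fin N) (x : ℝ) : ℂ :=
  if h : (i : ℕ) < M then φ ⟨i, h⟩ x * ξ x else ξ x

/-- The `M × M` matrix `Φ(x)` with entries `φ_i(x_j)`. -/
def PhiMat {M : ℕ} (φ : Fin M → ℝ → ℂ) (x : Fin M → ℝ) : Matrix (Fin M) (Fin M) ℂ :=
  Matrix.of fun i j => φ i (x j)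

/-- The `N × N` matrix `Ψ(x)` with entries `ψ_i(x_j)` for `j ≤ M` and `ψ̄_{i,j}` for `j > M`. -/
def PsiMat {M N : ℕ} (ψ : Fin N → ℝ → ℂ) (ψbar : Fin N → Fin N → ℂ)
    (x : Fin M → ℝ) : Matrix (Fin N) (Fin N) ℂ :=
  Matrix.of fun i j => if h : (j : ℕ) < M then ψ i (x ⟨j, h⟩) else ψbar i j


def lowEquiv {M N : ℕ} (hMN : M ≤ N) : Fin M ≃ {k : Fin N // (k : ℕ) < M} where
  toFun i := ⟨Fin.castLE hMN i, i.2⟩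
  invFun k := ⟨(k : Fin N), k.2⟩
  left_inv _ := rfl
  right_inv _ := rfl

def permExt {M N : ℕ} (hMN : M ≤ N) (τ : Equiv.Perm (Fin M)) : Equiv.Perm (Fin N) :=
  τ.extendDomain (lowEquiv hMN)

lemma castLE_mk {M N : ℕ} (hMN : M ≤ N) (k : Fin N) (h : (k : ℕ) < M) :
    Fin.castLE hMN (⟨(k : ℕ), h⟩ : Fin M) = k := Fin.ext rfl

lemma permExt_lt {M N : ℕ} (hMN : M ≤ N) (τ : Equiv.Perm (Fin M)) (k : Fin N) (h : (k : ℕ) < M) :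
    permExt hMN τ k = Fin.castLE hMN (τ ⟨k, h⟩) := by
  have := Equiv.Perm.extendDomain_apply_subtype τ (lowEquiv hMN) (b := k) h
  simpa [permExt, lowEquiv] using this

lemma permExt_ge {M N : ℕ} (hMN : M ≤ N) (τ : Equiv.Perm (Fin M)) (k : Fin N) (h : ¬ (k : ℕ) < M) :
    permExt hMN τ k = k :=
  Equiv.Perm.extendDomain_apply_not_subtype τ (lowEquiv hMN) h

lemma permExt_sign {M N : ℕ} (hMN : M ≤ N) (τ : Equiv.Perm (Fin M)) :
    Equiv.Perm.sign (permExt hMN τ) = Equiv.Perm.sign τ :=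
  Equiv.Perm.sign_extendDomain τ (lowEquiv hMN)

lemma permExt_lt' {M N : ℕ} (hMN : M ≤ N) (τ : Equiv.Perm (Fin M)) (i : Fin M) :
    permExt hMN τ (Fin.castLE hMN i) = Fin.castLE hMN (τ i) := by
  have h : ((Fin.castLE hMN i : Fin N) : ℕ) < M := i.2
  rw [permExt_lt hMN τ _ h]
  congr 1

lemma permExt_inj {M N : ℕ} (hMN : M ≤ N) : Function.Injective (permExt hMN) := by
  intro τ τ' h
  ext i
  have h1 := permExt_lt' hMN τ i
  have h2 := permExt_lt' hMN τ' i
  rw [h] at h1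
  have := h1.symm.trans h2
  exact congrArg Fin.val (Fin.castLE_injective hMN this)

lemma permExt_surj {M N : ℕ} (hMN : M ≤ N) (μ : Equiv.Perm (Fin N))
    (hμ : ∀ k : Fin N, ¬ (k : ℕ) < M → μ k = k) :
    ∃ τ : Equiv.Perm (Fin M), permExt hMN τ = μ := by
  have hlow : ∀ k : Fin N, (k : ℕ) < M → ((μ k : ℕ) < M) := by
    intro k hk
    by_contra hc
    have h2 := μ.injective (hμ _ hc)
    rw [h2] at hc
    exact hc hk
  have hlow' : ∀ k : Fin N, (k : ℕ) < M → ((μ.symm k : ℕ) < M) := by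
    intro k hk
    by_contra hc
    have h1 := hμ _ hc
    have h2 : μ.symm k = k := h1.symm.trans (μ.apply_symm_apply k)
    rw [h2] at hc
    exact hc hk
  refine ⟨{
    toFun := fun i => ⟨μ (Fin.castLE hMN i), hlow _ i.2⟩
    invFun := fun i => ⟨μ.symm (Fin.castLE hMN i), hlow' _ i.2⟩
    left_inv := by
      intro i
      apply Fin.ext
      show (μ.symm (Fin.castLE hMN ⟨(μ (Fin.castLE hMN i) : ℕ), _⟩) : ℕ) = (i : ℕ)
      rw [castLE_mk, μ.symm_apply_apply]
      rfl
    right_inv := by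
      intro i
      apply Fin.ext
      show (μ (Fin.castLE hMN ⟨(μ.symm (Fin.castLE hMN i) : ℕ), _⟩) : ℕ) = (i : ℕ)
      rw [castLE_mk, μ.apply_symm_apply]
      rfl }, ?_⟩
  ext k
  by_cases hk : (k : ℕ) < M
  · rw [permExt_lt hMN _ k hk]
    rfl
  · rw [permExt_ge hMN _ k hk, hμ k hk]

lemma exists_high_down {M N : ℕ} (μ : Equiv.Perm (Fin N))
    (hμ : ∃ k : Fin N, ¬ (k : ℕ) < M ∧ μ k ≠ k) :
    ∃ k : Fin N, ¬ (k : ℕ) < M ∧ ((μ k : ℕ) < (k : ℕ)) := by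
  by_contra hcon
  push_neg at hcon
  obtain ⟨k₀, hk₀, hk₀'⟩ := hμ
  have hcon' : ∀ k : Fin N, M ≤ (k : ℕ) → (k : ℕ) ≤ (μ k : ℕ) := by
    intro k hk
    have := hcon k (by omega)
    omega
  set B : ℕ → Finset (Fin N) := fun t => Finset.univ.filter (fun j : Fin N => t ≤ (j : ℕ)) with hB
  have himg : ∀ t : ℕ, M ≤ t → Finset.image μ (B t) = B t := by
    intro t ht
    refine Finset.eq_of_subset_of_card_le ?_ ?_
    · intro j hj
      simp only [hB, Finset.mem_image, Finset.mem_filter, Finset.mem_univ, true_and] at hj ⊢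
      obtain ⟨i, hi, rfl⟩ := hj
      have := hcon' i (by omega)
      omega
    · rw [Finset.card_image_of_injective _ μ.injective]
  have hmem : μ k₀ ∈ B ((k₀ : ℕ) + 1) := by
    have h1 := hcon' k₀ (by omega)
    have hne : (μ k₀ : ℕ) ≠ (k₀ : ℕ) := fun h => hk₀' (Fin.ext h)
    simp only [hB, Finset.mem_filter, Finset.mem_univ, true_and]
    omega
  rw [← himg ((k₀ : ℕ) + 1) (by omega)] at hmem
  obtain ⟨j, hj, hj'⟩ := Finset.mem_image.1 hmem
  have := μ.injective hj'
  subst this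
  simp only [hB, Finset.mem_filter, Finset.mem_univ, true_and] at hj
  omega

lemma aux_sorting {M : ℕ} {x : Fin M → ℝ} (hx : Function.Injective x) :
    ∃! σ : Equiv.Perm (Fin M), ∀ i j : Fin M, i ≤ j → x (σ j) ≤ x (σ i) := by
  have key : ∀ σ : Equiv.Perm (Fin M),
      (∀ i j : Fin M, i ≤ j → x (σ j) ≤ x (σ i)) ↔ Monotone ((fun i => -x i) ∘ σ) := by
    intro σ
    constructor
    · intro h i j hij; simpa using h i j hij
    · intro h i j hij; simpa using h hij
  refine ⟨Tuple.sort (fun i => -x i), (key _).2 (Tuple.monotone_sort _), ?_⟩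
  intro σ hσ
  have h2 := Tuple.unique_monotone (f := fun i => -x i) ((key σ).1 hσ)
    (Tuple.monotone_sort (fun i => -x i))
  ext i
  have := congrFun h2 i
  simp only [Function.comp_apply, neg_inj] at this
  exact congrArg _ (hx this)

lemma aux_null {M : ℕ} : (volume : Measure (Fin M → ℝ)) {x | ¬ Function.Injective x} = 0 := by
  have hsub : {x : Fin M → ℝ | ¬ Function.Injective x} ⊆
      ⋃ (i : Fin M) (j : Fin M) (_ : i ≠ j), {x | x i = x j} := by
    intro x hx
    simp only [Set.mem_setOf_eq, Function.Injective] at hx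
    push_neg at hx
    obtain ⟨i, j, hij, hne⟩ := hx
    exact Set.mem_iUnion.2 ⟨i, Set.mem_iUnion.2 ⟨j, Set.mem_iUnion.2 ⟨hne, hij⟩⟩⟩
  refine measure_mono_null hsub ?_
  refine measure_iUnion_null fun i => measure_iUnion_null fun j => measure_iUnion_null fun hij => ?_
  set ℓ : (Fin M → ℝ) →ₗ[ℝ] ℝ :=
    (LinearMap.proj i : (Fin M → ℝ) →ₗ[ℝ] ℝ) - (LinearMap.proj j : (Fin M → ℝ) →ₗ[ℝ] ℝ) with hℓ
  have hset : {x : Fin M → ℝ | x i = x j} = (LinearMap.ker ℓ : Set (Fin M → ℝ)) := by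
    ext x; simp [hℓ, LinearMap.mem_ker, sub_eq_zero]
  rw [hset]
  refine Measure.addHaar_submodule _ _ ?_
  intro htop
  have h1 : (Pi.single i 1 : Fin M → ℝ) ∈ LinearMap.ker ℓ := by
    rw [htop]; trivial
  simp [hℓ, LinearMap.mem_ker, Pi.single_eq_same, Pi.single_eq_of_ne (Ne.symm hij)] at h1

lemma aux_comp_eq {M : ℕ} (σ : Equiv.Perm (Fin M)) :
    (fun x : Fin M → ℝ => x ∘ σ) =
      ⇑(MeasurableEquiv.piCongrLeft (fun _ : Fin M => ℝ) σ.symm) := by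
  funext x
  funext jj
  have := MeasurableEquiv.piCongrLeft_apply_apply σ.symm (β := fun _ => ℝ) x (σ jj)
  simp only [Equiv.symm_apply_apply] at this
  simpa using this.symm

lemma aux_mp {M : ℕ} (σ : Equiv.Perm (Fin M)) :
    MeasurePreserving (fun x : Fin M → ℝ => x ∘ σ) volume volume := by
  rw [aux_comp_eq]
  exact volume_measurePreserving_piCongrLeft (fun _ : Fin M => ℝ) σ.symm

lemma aux_emb {M : ℕ} (σ : Equiv.Perm (Fin M)) :
    MeasurableEmbedding (fun x : Fin M → ℝ => x ∘ σ) := by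
  rw [aux_comp_eq]
  exact (MeasurableEquiv.piCongrLeft (fun _ : Fin M => ℝ) σ.symm).measurableEmbedding

section Main
open Finset

lemma aux_reindex {M N : ℕ} (hMN : M ≤ N) (F : Fin N → ℂ) :
    ∏ j ∈ Finset.univ.filter (fun j : Fin N => (j : ℕ) < M), F j
      = ∏ i : Fin M, F (Fin.castLE hMN i) := by
  refine Finset.prod_bij' (fun j hj => (⟨(j : ℕ), (Finset.mem_filter.1 hj).2⟩ : Fin M))
    (fun i _ => Fin.castLE hMN i) (fun _ _ => Finset.mem_univ _)
    (fun i _ => Finset.mem_filter.2 ⟨Finset.mem_univ _, i.2⟩)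
    (fun j hj => Fin.ext rfl) (fun i _ => Fin.ext rfl) (fun j hj => ?_)
  exact congrArg F (Fin.ext rfl).symm


lemma aux_Smeas {M : ℕ} {K : Set ℝ} (hK : MeasurableSet K) (σ : Equiv.Perm (Fin M)) :
    MeasurableSet {x : Fin M → ℝ | (∀ i j : Fin M, i ≤ j → x (σ j) ≤ x (σ i)) ∧ ∀ i, x i ∈ K} := by
  have h1 : MeasurableSet (⋂ (i : Fin M) (j : Fin M) (_ : i ≤ j),
      {x : Fin M → ℝ | x (σ j) ≤ x (σ i)}) :=
    MeasurableSet.iInter fun i => MeasurableSet.iInter fun j =>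
      MeasurableSet.iInter fun _ => measurableSet_le (measurable_pi_apply _)
        (measurable_pi_apply _)
  have h2 : MeasurableSet (Set.pi Set.univ (fun _ : Fin M => K)) :=
    MeasurableSet.univ_pi fun _ => hK
  have : {x : Fin M → ℝ | (∀ i j : Fin M, i ≤ j → x (σ j) ≤ x (σ i)) ∧ ∀ i, x i ∈ K}
      = (⋂ (i : Fin M) (j : Fin M) (_ : i ≤ j), {x : Fin M → ℝ | x (σ j) ≤ x (σ i)})
        ∩ Set.pi Set.univ (fun _ : Fin M => K) := by
    ext x
    simp only [Set.mem_setOf_eq, Set.mem_inter_iff, Set.mem_iInter, Set.mem_univ_pi]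
  rw [this]
  exact h1.inter h2


variable {M N : ℕ}

set_option maxHeartbeats 2000000 in
/-- Probability that all eigenvalues lie in `[a,b]`: the integral of
`det Φ ⬝ det Ψ ⬝ Π ξ` over the ordered region `b ≥ x_1 ≥ ⋯ ≥ x_M ≥ a`
equals `(1/M!) ⬝ T(A)`. -/
theorem stmt_7 {M N : ℕ} (hM : 1 ≤ M) (hMN : M ≤ N) {α β a b : ℝ} (hαβ : α < β)
    (φ : Fin M → ℝ → ℂ) (ψ : Fin N → ℝ → ℂ) (ξ : ℝ → ℂ) (ψbar : Fin N → Fin N → ℂ)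
    (hφ : ∀ i, Measurable (φ i)) (hψ : ∀ j, Measurable (ψ j)) (hξ : Measurable ξ)
    (hInt : ∀ (i j : Fin N),
      IntegrableOn (fun x => varsigma φ ξ i x * ψ j x) (Set.Icc α β))
    (hαa : α ≤ a) (hab : a ≤ b) (hbβ : b ≤ β) :
    (∫ x : Fin M → ℝ in
        {x | (∀ i j : Fin M, i ≤ j → x j ≤ x i) ∧ ∀ i : Fin M, x i ∈ Set.Icc a b},
      (PhiMat φ x).det * (PsiMat ψ ψbar x).det * ∏ k : Fin M, ξ (x k))
    = ((M.factorial : ℕ) : ℂ)⁻¹ *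
      pseudoDet (fun i j k =>
        if hk : (k : ℕ) < M then
          if hi : (i : ℕ) < M then ∫ x in Set.Icc a b, φ ⟨i, hi⟩ x * ψ j x * ξ x
          else ∫ x in Set.Icc a b, ψ j x * ξ x
        else if (i : ℕ) < (k : ℕ) then 0 else ψbar j k) := by
  classical
  set K : Set ℝ := Set.Icc a b with hK
  set f : (Fin M → ℝ) → ℂ := fun x => (PhiMat φ x).det * (PsiMat ψ ψbar x).det * ∏ k, ξ (x k)
    with hf
  set g : Equiv.Perm (Fin M) → Equiv.Perm (Fin N) → Fin M → ℝ → ℂ :=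
    fun τ σ i t => φ (τ i) t * ψ (σ (Fin.castLE hMN i)) t * ξ t with hg
  set c : Equiv.Perm (Fin N) → ℂ :=
    fun σ => ∏ j ∈ Finset.univ.filter (fun j : Fin N => ¬ (j : ℕ) < M), ψbar (σ j) j with hc
  set C : Set (Fin M → ℝ) := {x | ∀ i, x i ∈ K} with hCdef
  set S : Equiv.Perm (Fin M) → Set (Fin M → ℝ) :=
    fun σ => {x | (∀ i j : Fin M, i ≤ j → x (σ j) ≤ x (σ i)) ∧ ∀ i, x i ∈ K} with hSdef
  have hCpi : C = Set.pi Set.univ (fun _ : Fin M => K) := by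
    ext x; exact Iff.symm Set.mem_univ_pi
  have hCmeas : MeasurableSet C := by rw [hCpi]; exact MeasurableSet.univ_pi fun _ => measurableSet_Icc
  have hKmeas : MeasurableSet K := measurableSet_Icc
  have hSsub : ∀ σ, S σ ⊆ C := fun σ x hx => hx.2
  have hSmeas : ∀ σ, MeasurableSet (S σ) := fun σ => aux_Smeas hKmeas σ
  -- pointwise decomposition
  have hdecomp : ∀ x : Fin M → ℝ,
      f x = ∑ τ : Equiv.Perm (Fin M), ∑ σ : Equiv.Perm (Fin N),
        ((Equiv.Perm.sign τ : ℤ) : ℂ) * ((Equiv.Perm.sign σ : ℤ) : ℂ) *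
          ((∏ i : Fin M, g τ σ i (x i)) * c σ) := by
    intro x
    have hsplit : ∀ σ : Equiv.Perm (Fin N), ∏ j : Fin N, (PsiMat ψ ψbar x) (σ j) j
        = (∏ i : Fin M, ψ (σ (Fin.castLE hMN i)) (x i)) * c σ := by
      intro σ
      rw [← Finset.prod_filter_mul_prod_filter_not Finset.univ (fun j : Fin N => (j : ℕ) < M)]
      congr 1
      · set F : Fin N → ℂ :=
          fun j => if h : (j : ℕ) < M then ψ (σ j) (x ⟨(j : ℕ), h⟩) else 1 with hF
        have h1 : ∏ j ∈ Finset.univ.filter (fun j : Fin N => (j : ℕ) < M),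
            (PsiMat ψ ψbar x) (σ j) j
            = ∏ j ∈ Finset.univ.filter (fun j : Fin N => (j : ℕ) < M), F j := by
          refine Finset.prod_congr rfl fun j hj => ?_
          have hj' : (j : ℕ) < M := (Finset.mem_filter.1 hj).2
          simp only [PsiMat, Matrix.of_apply, hF, dif_pos hj']
        rw [h1, aux_reindex hMN F]
        refine Finset.prod_congr rfl fun i _ => ?_
        simp only [hF, dif_pos (show ((Fin.castLE hMN i : Fin N) : ℕ) < M from i.2)]
        exact congrArg (ψ (σ (Fin.castLE hMN i))) (congrArg x (Fin.ext rfl))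
      · refine Finset.prod_congr rfl fun j hj => ?_
        have hj' : ¬ (j : ℕ) < M := (Finset.mem_filter.1 hj).2
        simp only [PsiMat, Matrix.of_apply, dif_neg hj']
    simp only [hf]
    rw [Matrix.det_apply' (PhiMat φ x), Matrix.det_apply' (PsiMat ψ ψbar x),
      Finset.sum_mul_sum, Finset.sum_mul]
    refine Finset.sum_congr rfl fun τ _ => ?_
    rw [Finset.sum_mul]
    refine Finset.sum_congr rfl fun σ _ => ?_
    rw [hsplit σ]
    have hφprod : ∏ i : Fin M, (PhiMat φ x) (τ i) i = ∏ i : Fin M, φ (τ i) (x i) :=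
      Finset.prod_congr rfl fun i _ => rfl
    have hgp : ∏ i : Fin M, g τ σ i (x i)
        = (∏ i : Fin M, φ (τ i) (x i)) * (∏ i : Fin M, ψ (σ (Fin.castLE hMN i)) (x i))
          * (∏ i : Fin M, ξ (x i)) := by
      simp only [hg]
      rw [Finset.prod_mul_distrib, Finset.prod_mul_distrib]
    rw [hφprod, hgp]
    ring
  -- 1D integrability
  have hInt1 : ∀ (τ : Equiv.Perm (Fin M)) (σ : Equiv.Perm (Fin N)) (i : Fin M),
      IntegrableOn (g τ σ i) K := by
    intro τ σ i
    have hlt : ((Fin.castLE hMN (τ i) : Fin N) : ℕ) < M := (τ i).2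
    have h := hInt (Fin.castLE hMN (τ i)) (σ (Fin.castLE hMN i))
    have heq : (fun t => varsigma φ ξ (Fin.castLE hMN (τ i)) t * ψ (σ (Fin.castLE hMN i)) t)
        = g τ σ i := by
      funext t
      simp only [hg, varsigma, dif_pos hlt]
      have h2 : (⟨((Fin.castLE hMN (τ i) : Fin N) : ℕ), hlt⟩ : Fin M) = τ i := Fin.ext rfl
      rw [h2]; ring
    rw [← heq, hK]
    exact h.mono_set (Set.Icc_subset_Icc hαa hbβ)
  -- indicator product identity
  have hindprod : ∀ (τ : Equiv.Perm (Fin M)) (σ : Equiv.Perm (Fin N)),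
      C.indicator (fun x => ∏ i : Fin M, g τ σ i (x i))
        = fun x => ∏ i : Fin M, K.indicator (g τ σ i) (x i) := by
    intro τ σ
    funext x
    by_cases hx : x ∈ C
    · rw [Set.indicator_of_mem hx]
      exact Finset.prod_congr rfl fun i _ => (Set.indicator_of_mem (hx i) _).symm
    · rw [Set.indicator_of_notMem hx]
      symm
      have hx' : ¬ ∀ i, x i ∈ K := hx
      push_neg at hx'
      obtain ⟨i₀, hi₀⟩ := hx'
      exact Finset.prod_eq_zero (Finset.mem_univ i₀) (Set.indicator_of_notMem hi₀ _)
  -- integrability of each product term on C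
  have hIntC : ∀ (τ : Equiv.Perm (Fin M)) (σ : Equiv.Perm (Fin N)),
      IntegrableOn (fun x => ∏ i : Fin M, g τ σ i (x i)) C := by
    intro τ σ
    rw [← integrable_indicator_iff hCmeas, hindprod τ σ]
    exact Integrable.fintype_prod (f := fun i => K.indicator (g τ σ i))
      fun i => (integrable_indicator_iff hKmeas).2 (hInt1 τ σ i)
  -- Fubini per term
  have hFub : ∀ (τ : Equiv.Perm (Fin M)) (σ : Equiv.Perm (Fin N)),
      ∫ x in C, (∏ i : Fin M, g τ σ i (x i)) = ∏ i : Fin M, ∫ t in K, g τ σ i t := by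
    intro τ σ
    rw [← integral_indicator hCmeas, hindprod τ σ,
      MeasureTheory.integral_fintype_prod_volume_eq_prod (ι := Fin M) (f := fun i => K.indicator (g τ σ i))]
    exact Finset.prod_congr rfl fun i _ => integral_indicator hKmeas
  -- integrability of f on C
  have hIntf : IntegrableOn f C := by
    rw [show f = (fun x => ∑ τ : Equiv.Perm (Fin M), ∑ σ : Equiv.Perm (Fin N),
        ((Equiv.Perm.sign τ : ℤ) : ℂ) * ((Equiv.Perm.sign σ : ℤ) : ℂ) *
          ((∏ i : Fin M, g τ σ i (x i)) * c σ)) from funext hdecomp]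
    apply integrable_finset_sum
    intro τ _
    apply integrable_finset_sum
    intro σ _
    exact ((hIntC τ σ).mul_const (c σ)).const_mul _
  -- symmetry of f
  have hsym : ∀ (σ : Equiv.Perm (Fin M)) (x : Fin M → ℝ), f (x ∘ σ) = f x := by
    intro σ x
    have hΦ : PhiMat φ (x ∘ σ) = (PhiMat φ x).submatrix id σ := by
      ext i j
      simp only [PhiMat, Matrix.of_apply, Matrix.submatrix_apply, id_eq, Function.comp_apply]
    have hΨ : PsiMat ψ ψbar (x ∘ σ) = (PsiMat ψ ψbar x).submatrix id (permExt hMN σ) := by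
      ext i j
      simp only [PsiMat, Matrix.of_apply, Matrix.submatrix_apply, id_eq]
      by_cases hj : (j : ℕ) < M
      · rw [dif_pos hj, permExt_lt hMN σ j hj]
        have hlt : ((Fin.castLE hMN (σ ⟨j, hj⟩) : Fin N) : ℕ) < M := (σ ⟨j, hj⟩).2
        rw [dif_pos hlt]
        have h2 : (⟨((Fin.castLE hMN (σ ⟨j, hj⟩) : Fin N) : ℕ), hlt⟩ : Fin M) = σ ⟨j, hj⟩ :=
          Fin.ext rfl
        rw [h2]
        rfl
      · rw [dif_neg hj, permExt_ge hMN σ j hj, dif_neg hj]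
    have hprodξ : ∏ k : Fin M, ξ ((x ∘ σ) k) = ∏ k : Fin M, ξ (x k) :=
      Equiv.prod_comp (σ : Fin M ≃ Fin M) (fun k => ξ (x k))
    have hs : ((Equiv.Perm.sign σ : ℤ) : ℂ) * ((Equiv.Perm.sign σ : ℤ) : ℂ) = 1 := by
      have h1 := Int.units_mul_self (Equiv.Perm.sign σ)
      have h2 : ((Equiv.Perm.sign σ : ℤ) * (Equiv.Perm.sign σ : ℤ) : ℤ) = 1 := by
        rw [← Units.val_mul, h1, Units.val_one]
      calc ((Equiv.Perm.sign σ : ℤ) : ℂ) * ((Equiv.Perm.sign σ : ℤ) : ℂ)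
          = (((Equiv.Perm.sign σ : ℤ) * (Equiv.Perm.sign σ : ℤ) : ℤ) : ℂ) := by push_cast; ring
        _ = ((1 : ℤ) : ℂ) := by rw [h2]
        _ = 1 := by norm_num
    simp only [hf]
    rw [hΦ, hΨ, Matrix.det_permute', Matrix.det_permute', permExt_sign, hprodξ]
    push_cast
    linear_combination ((PhiMat φ x).det * (PsiMat ψ ψbar x).det * ∏ k : Fin M, ξ (x k)) * hs
  -- each ordered piece has the same integral
  have hperm : ∀ σ : Equiv.Perm (Fin M), ∫ x in S σ, f x = ∫ x in S 1, f x := by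
    intro σ
    have hpre : S σ = (fun x : Fin M → ℝ => x ∘ σ) ⁻¹' (S 1) := by
      ext x
      simp only [hSdef, Set.mem_preimage, Set.mem_setOf_eq, Function.comp_apply,
        Equiv.Perm.one_apply]
      constructor
      · rintro ⟨h1, h2⟩; exact ⟨h1, fun i => h2 (σ i)⟩
      · rintro ⟨h1, h2⟩
        refine ⟨h1, fun i => ?_⟩
        have := h2 (σ.symm i)
        rwa [Equiv.apply_symm_apply] at this
    calc ∫ x in S σ, f x = ∫ x in (fun x : Fin M → ℝ => x ∘ σ) ⁻¹' (S 1), f (x ∘ σ) := by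
          rw [← hpre]
          exact integral_congr_ae (Filter.Eventually.of_forall fun x => (hsym σ x).symm)
      _ = ∫ y in S 1, f y := (aux_mp σ).setIntegral_preimage_emb (aux_emb σ) f (S 1)
  -- cube splits into ordered pieces
  have hsumS : ∫ x in C, f x = ∑ σ : Equiv.Perm (Fin M), ∫ x in S σ, f x := by
    have hae : ∀ᵐ x : Fin M → ℝ, Function.Injective x := by
      rw [ae_iff]; exact aux_null
    have hind : ∀ᵐ x : Fin M → ℝ,
        (∑ σ : Equiv.Perm (Fin M), (S σ).indicator f x) = C.indicator f x := by
      filter_upwards [hae] with x hx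
      by_cases hxC : x ∈ C
      · obtain ⟨σ₀, hσ₀, huniq⟩ := aux_sorting hx
        rw [Set.indicator_of_mem hxC, Finset.sum_eq_single σ₀]
        · refine Set.indicator_of_mem ?_ f
          rw [hSdef]
          exact ⟨hσ₀, hxC⟩
        · intro σ _ hne
          apply Set.indicator_of_notMem
          intro hmem
          exact hne (huniq σ hmem.1)
        · intro habs; exact absurd (Finset.mem_univ σ₀) habs
      · rw [Set.indicator_of_notMem hxC]
        exact Finset.sum_eq_zero fun σ _ =>
          Set.indicator_of_notMem (fun hmem => hxC (hSsub σ hmem)) f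
    calc ∫ x in C, f x = ∫ x, C.indicator f x := (integral_indicator hCmeas).symm
      _ = ∫ x, ∑ σ : Equiv.Perm (Fin M), (S σ).indicator f x := (integral_congr_ae hind).symm
      _ = ∑ σ : Equiv.Perm (Fin M), ∫ x, (S σ).indicator f x :=
          integral_finset_sum _ fun σ _ =>
            (integrable_indicator_iff (hSmeas σ)).2 (hIntf.mono_set (hSsub σ))
      _ = ∑ σ : Equiv.Perm (Fin M), ∫ x in S σ, f x :=
          Finset.sum_congr rfl fun σ _ => integral_indicator (hSmeas σ)
  -- hence
  have hfact : ∫ x in C, f x = ((M.factorial : ℕ) : ℂ) * ∫ x in S 1, f x := by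
    rw [hsumS]
    simp only [hperm]
    rw [Finset.sum_const, Finset.card_univ, Fintype.card_perm, Fintype.card_fin, nsmul_eq_mul]
  -- compute the cube integral
  have hcube : ∫ x in C, f x = ∑ τ : Equiv.Perm (Fin M), ∑ σ : Equiv.Perm (Fin N),
      ((Equiv.Perm.sign τ : ℤ) : ℂ) * ((Equiv.Perm.sign σ : ℤ) : ℂ) *
        ((∏ i : Fin M, ∫ t in K, g τ σ i t) * c σ) := by
    calc ∫ x in C, f x
        = ∫ x in C, ∑ τ : Equiv.Perm (Fin M), ∑ σ : Equiv.Perm (Fin N),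
            ((Equiv.Perm.sign τ : ℤ) : ℂ) * ((Equiv.Perm.sign σ : ℤ) : ℂ) *
              ((∏ i : Fin M, g τ σ i (x i)) * c σ) :=
          integral_congr_ae (Filter.Eventually.of_forall fun x => hdecomp x)
      _ = ∑ τ : Equiv.Perm (Fin M), ∫ x in C, ∑ σ : Equiv.Perm (Fin N),
            ((Equiv.Perm.sign τ : ℤ) : ℂ) * ((Equiv.Perm.sign σ : ℤ) : ℂ) *
              ((∏ i : Fin M, g τ σ i (x i)) * c σ) :=
          integral_finset_sum _ fun τ _ => integrable_finset_sum _ fun σ _ =>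
            ((hIntC τ σ).mul_const _).const_mul _
      _ = ∑ τ : Equiv.Perm (Fin M), ∑ σ : Equiv.Perm (Fin N), ∫ x in C,
            ((Equiv.Perm.sign τ : ℤ) : ℂ) * ((Equiv.Perm.sign σ : ℤ) : ℂ) *
              ((∏ i : Fin M, g τ σ i (x i)) * c σ) :=
          Finset.sum_congr rfl fun τ _ => integral_finset_sum _ fun σ _ =>
            ((hIntC τ σ).mul_const _).const_mul _
      _ = ∑ τ : Equiv.Perm (Fin M), ∑ σ : Equiv.Perm (Fin N),
            ((Equiv.Perm.sign τ : ℤ) : ℂ) * ((Equiv.Perm.sign σ : ℤ) : ℂ) *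
              ((∏ i : Fin M, ∫ t in K, g τ σ i t) * c σ) := by
          refine Finset.sum_congr rfl fun τ _ => Finset.sum_congr rfl fun σ _ => ?_
          rw [integral_const_mul, integral_mul_const, hFub τ σ]
  -- identify with pseudoDet
  have hRHS : pseudoDet (fun i j k =>
        if hk : (k : ℕ) < M then
          if hi : (i : ℕ) < M then ∫ x in Set.Icc a b, φ ⟨i, hi⟩ x * ψ j x * ξ x
          else ∫ x in Set.Icc a b, ψ j x * ξ x
        else if (i : ℕ) < (k : ℕ) then 0 else ψbar j k)
      = ∑ τ : Equiv.Perm (Fin M), ∑ σ : Equiv.Perm (Fin N),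
        ((Equiv.Perm.sign τ : ℤ) : ℂ) * ((Equiv.Perm.sign σ : ℤ) : ℂ) *
          ((∏ i : Fin M, ∫ t in K, g τ σ i t) * c σ) := by
    unfold pseudoDet
    set A : Fin N → Fin N → Fin N → ℂ := fun i j k =>
        if hk : (k : ℕ) < M then
          if hi : (i : ℕ) < M then ∫ x in Set.Icc a b, φ ⟨i, hi⟩ x * ψ j x * ξ x
          else ∫ x in Set.Icc a b, ψ j x * ξ x
        else if (i : ℕ) < (k : ℕ) then 0 else ψbar j k with hA
    have hA0 : ∀ (μ σ : Equiv.Perm (Fin N)), (¬ ∀ k : Fin N, ¬ (k : ℕ) < M → μ k = k) →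
        ∏ k : Fin N, A (μ k) (σ k) k = 0 := by
      intro μ σ hμ
      push_neg at hμ
      obtain ⟨k₁, hk₁, hlt⟩ := exists_high_down (M := M) μ
        (by obtain ⟨k, hk, h2⟩ := hμ; exact ⟨k, by omega, h2⟩)
      refine Finset.prod_eq_zero (Finset.mem_univ k₁) ?_
      simp only [hA]
      rw [dif_neg hk₁, if_pos hlt]
    have hAprod : ∀ (τ : Equiv.Perm (Fin M)) (σ : Equiv.Perm (Fin N)),
        ∏ k : Fin N, A (permExt hMN τ k) (σ k) k
          = (∏ i : Fin M, ∫ t in K, g τ σ i t) * c σ := by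
      intro τ σ
      rw [← Finset.prod_filter_mul_prod_filter_not Finset.univ (fun k : Fin N => (k : ℕ) < M)]
      congr 1
      · set F : Fin N → ℂ :=
          fun k => if h : (k : ℕ) < M then ∫ t in K, g τ σ ⟨(k : ℕ), h⟩ t else 1 with hF
        have h1 : ∏ k ∈ Finset.univ.filter (fun k : Fin N => (k : ℕ) < M),
            A (permExt hMN τ k) (σ k) k
            = ∏ k ∈ Finset.univ.filter (fun k : Fin N => (k : ℕ) < M), F k := by
          refine Finset.prod_congr rfl fun k hk => ?_
          have hk' : (k : ℕ) < M := (Finset.mem_filter.1 hk).2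
          rw [permExt_lt hMN τ k hk']
          have hlt : ((Fin.castLE hMN (τ ⟨k, hk'⟩) : Fin N) : ℕ) < M := (τ ⟨k, hk'⟩).2
          simp only [hA, hF]
          rw [dif_pos hk', dif_pos hlt, dif_pos hk']
          have h2 : (⟨((Fin.castLE hMN (τ ⟨k, hk'⟩) : Fin N) : ℕ), hlt⟩ : Fin M) = τ ⟨k, hk'⟩ :=
            Fin.ext rfl
          rw [h2]
          simp only [hg]
          have h3 : Fin.castLE hMN (⟨(k : ℕ), hk'⟩ : Fin M) = k := Fin.ext rfl
          rw [h3]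
        rw [h1, aux_reindex hMN F]
        refine Finset.prod_congr rfl fun i _ => ?_
        simp only [hF, dif_pos (show ((Fin.castLE hMN i : Fin N) : ℕ) < M from i.2)]
        exact congrArg (fun i0 : Fin M => ∫ t in K, g τ σ i0 t) (Fin.ext rfl)
      · refine Finset.prod_congr rfl fun k hk => ?_
        have hk' : ¬ (k : ℕ) < M := (Finset.mem_filter.1 hk).2
        rw [permExt_ge hMN τ k hk']
        simp only [hA]
        rw [dif_neg hk', if_neg (lt_irrefl (k : ℕ))]
    have hne0 : ∀ μ ∈ (Finset.univ : Finset (Equiv.Perm (Fin N))),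
        (∑ σ : Equiv.Perm (Fin N), ((Equiv.Perm.sign μ : ℤ) : ℂ) * ((Equiv.Perm.sign σ : ℤ) : ℂ) *
          ∏ k : Fin N, A (μ k) (σ k) k) ≠ 0 →
        (∀ k : Fin N, ¬ (k : ℕ) < M → μ k = k) := by
      intro μ _ hne
      by_contra hP
      apply hne
      refine Finset.sum_eq_zero fun σ _ => ?_
      rw [hA0 μ σ hP, mul_zero]
    rw [← Finset.sum_filter_of_ne hne0]
    refine (Finset.sum_bij (fun (τ : Equiv.Perm (Fin M)) _ => permExt hMN τ) ?_ ?_ ?_ ?_).symm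
    · intro τ _
      exact Finset.mem_filter.2 ⟨Finset.mem_univ _, fun k hk => permExt_ge hMN τ k hk⟩
    · intro τ1 _ τ2 _ h
      exact permExt_inj hMN h
    · intro μ hμ
      obtain ⟨τ, hτ⟩ := permExt_surj hMN μ (Finset.mem_filter.1 hμ).2
      exact ⟨τ, Finset.mem_univ τ, hτ⟩
    · intro τ _
      refine Finset.sum_congr rfl fun σ _ => ?_
      rw [permExt_sign hMN τ, hAprod τ σ]
  -- target set is S 1
  have hS1 : {x : Fin M → ℝ | (∀ i j : Fin M, i ≤ j → x j ≤ x i) ∧ ∀ i : Fin M, x i ∈ Set.Icc a b}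
      = S 1 := rfl
  have hne : ((M.factorial : ℕ) : ℂ) ≠ 0 := by
    exact_mod_cast Nat.cast_ne_zero.2 (Nat.factorial_ne_zero M)
  rw [hS1, hRHS, ← hcube, hfact, inv_mul_cancel_left₀ hne]
end Main
end

section
/- Let M ≥ 1 and a ≤ b be reals. Let φ_1,…,φ_M : ℝ → ℂ, ψ_1,…,ψ_M : ℝ → ℂ and ξ : ℝ → ℂ be measurable functions such that φ_i·ψ_j·ξ is Lebesgue integrable on [a,b] for all 1 ≤ i, j ≤ M. For x = (x_1,…,x_M) let Φ(x) and Ψ(x) be the M×M matrices with (i,j) entries φ_i(x_j) and ψ_i(x_j), respectively. Then ∫_{b ≥ x_1 ≥ x_2 ≥ ⋯ ≥ x_M ≥ a} det Φ(x) · det Ψ(x) · Π_{k=1}^M ξ(x_k) dx = det B, where B is the M×M matrix with entries b_{i,j} = ∫_a^b φ_i(x) ψ_j(x) ξ(x) dx. (When K·det Φ·det Ψ·Π ξ is the joint density of M ordered random variables, multiplying by K gives the probability that all eigenvalues lie in [a,b] as K·det B.) -/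
open MeasureTheory

namespace Andreief

lemma perm_eq_of_strictMono {n : ℕ} (p : Equiv.Perm (Fin n)) (h : StrictMono p) :
    ∀ k, p k = k := by
  have h1 : StrictMono.orderIsoOfSurjective p h p.surjective = OrderIso.refl (Fin n) :=
    Subsingleton.elim _ _
  intro k
  have := congrArg (fun e : Fin n ≃o Fin n => e k) h1
  simpa using this

lemma perm_eq_of_strictAnti {n : ℕ} (x : Fin n → ℝ) (σ τ : Equiv.Perm (Fin n))
    (hσ : StrictAnti (x ∘ σ)) (hτ : StrictAnti (x ∘ τ)) : σ = τ := by
  set p : Equiv.Perm (Fin n) := τ.trans σ.symm with hp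
  have hcomp : ∀ k, (x ∘ τ) k = (x ∘ σ) (p k) := by
    intro k; simp [hp, Function.comp]
  have hmono : StrictMono p := by
    intro i j hij
    have h2 : (x ∘ σ) (p j) < (x ∘ σ) (p i) := by
      rw [← hcomp, ← hcomp]; exact hτ hij
    exact (hσ.lt_iff_gt).mp h2
  have hid := perm_eq_of_strictMono p hmono
  apply Equiv.ext; intro k
  have := hid k
  simp only [hp, Equiv.trans_apply] at this
  have h3 := congrArg σ this
  rw [Equiv.apply_symm_apply] at h3
  exact h3.symm

lemma null_diag {n : ℕ} {i j : Fin n} (hij : i ≠ j) :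
    volume {x : Fin n → ℝ | x i = x j} = 0 := by
  set L : (Fin n → ℝ) →ₗ[ℝ] ℝ := (LinearMap.proj i : (Fin n → ℝ) →ₗ[ℝ] ℝ) - LinearMap.proj j with hL
  have hset : {x : Fin n → ℝ | x i = x j} = (LinearMap.ker L : Set (Fin n → ℝ)) := by
    ext x
    simp [hL, sub_eq_zero, LinearMap.mem_ker]
  rw [hset]
  apply Measure.addHaar_submodule
  intro htop
  have hmem : Function.update (0 : Fin n → ℝ) i 1 ∈ LinearMap.ker L := by
    rw [htop]; trivial
  rw [LinearMap.mem_ker] at hmem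
  simp [hL, LinearMap.sub_apply, Function.update_self,
    Function.update_of_ne hij.symm] at hmem

open Equiv in
lemma det_expand {n : ℕ} (φ ψ : Fin n → ℝ → ℂ) (ξ : ℝ → ℂ) (x : Fin n → ℝ) :
    (Matrix.of fun i j : Fin n => φ i (x j)).det *
      (Matrix.of fun i j : Fin n => ψ i (x j)).det * ∏ k : Fin n, ξ (x k)
    = ∑ τ : Perm (Fin n), ∑ σ : Perm (Fin n),
        (((Perm.sign τ : ℤ) : ℂ) * ((Perm.sign σ : ℤ) : ℂ)) *
          ∏ j : Fin n, (φ (τ j) (x j) * ψ (σ j) (x j) * ξ (x j)) := by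
  rw [Matrix.det_apply, Matrix.det_apply, Finset.sum_mul_sum, Finset.sum_mul]
  refine Finset.sum_congr rfl fun τ _ => ?_
  rw [Finset.sum_mul]
  refine Finset.sum_congr rfl fun σ _ => ?_
  simp only [Matrix.of_apply, Units.smul_def, zsmul_eq_mul]
  rw [show (∏ j : Fin n, (φ (τ j) (x j) * ψ (σ j) (x j) * ξ (x j)))
      = (∏ j : Fin n, φ (τ j) (x j)) * (∏ j : Fin n, ψ (σ j) (x j)) * ∏ j : Fin n, ξ (x j) by
    rw [Finset.prod_mul_distrib, Finset.prod_mul_distrib]]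
  ring

open Equiv in
lemma F_comp_perm {n : ℕ} (φ ψ : Fin n → ℝ → ℂ) (ξ : ℝ → ℂ) (x : Fin n → ℝ)
    (σ : Perm (Fin n)) :
    (Matrix.of fun i j : Fin n => φ i (x (σ j))).det *
      (Matrix.of fun i j : Fin n => ψ i (x (σ j))).det * ∏ k : Fin n, ξ (x (σ k))
    = (Matrix.of fun i j : Fin n => φ i (x j)).det *
      (Matrix.of fun i j : Fin n => ψ i (x j)).det * ∏ k : Fin n, ξ (x k) := by
  have h1 : (Matrix.of fun i j : Fin n => φ i (x (σ j)))
      = (Matrix.of fun i j : Fin n => φ i (x j)).submatrix id σ := rfl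
  have h2 : (Matrix.of fun i j : Fin n => ψ i (x (σ j)))
      = (Matrix.of fun i j : Fin n => ψ i (x j)).submatrix id σ := rfl
  have hs : ((Perm.sign σ : ℤ) : ℂ) * ((Perm.sign σ : ℤ) : ℂ) = 1 := by
    rw [← Int.cast_mul, ← Units.val_mul, Int.units_mul_self]
    simp
  rw [h1, h2, Matrix.det_permute', Matrix.det_permute',
    Equiv.prod_comp σ fun k => ξ (x k), mul_mul_mul_comm, hs, one_mul]

lemma indicator_pi_prod {n : ℕ} (s : Set ℝ) (g : Fin n → ℝ → ℂ) (x : Fin n → ℝ) :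
    ({y : Fin n → ℝ | ∀ i, y i ∈ s}).indicator (fun y => ∏ j, g j (y j)) x
      = ∏ j, s.indicator (g j) (x j) := by
  by_cases hx : ∀ i, x i ∈ s
  · rw [Set.indicator_of_mem (show x ∈ {y : Fin n → ℝ | ∀ i, y i ∈ s} from hx)]
    exact Finset.prod_congr rfl fun j _ => (Set.indicator_of_mem (hx j) _).symm
  · rw [Set.indicator_of_notMem (show x ∉ {y : Fin n → ℝ | ∀ i, y i ∈ s} from hx)]
    push_neg at hx
    obtain ⟨i, hi⟩ := hx
    exact (Finset.prod_eq_zero (Finset.mem_univ i) (Set.indicator_of_notMem hi _)).symm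


open Equiv in
lemma sign_sq {n : ℕ} (σ : Perm (Fin n)) :
    ((Perm.sign σ : ℤ) : ℂ) * ((Perm.sign σ : ℤ) : ℂ) = 1 := by
  rw [← Int.cast_mul, ← Units.val_mul, Int.units_mul_self]
  simp

end Andreief
open Andreief Equiv in
/-- Andréief-type identity (square case `N = M`): the integral of
`det Φ(x) ⬝ det Ψ(x) ⬝ Π_k ξ(x_k)` over the ordered region
`b ≥ x_1 ≥ ⋯ ≥ x_M ≥ a` equals the determinant of the matrix of one-dimensional
integrals `b_{i,j} = ∫_a^b φ_i(x) ψ_j(x) ξ(x) dx`. -/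
theorem stmt_8 {M : ℕ} (hM : 1 ≤ M) {a b : ℝ} (hab : a ≤ b)
    (φ ψ : Fin M → ℝ → ℂ) (ξ : ℝ → ℂ)
    (hφ : ∀ i, Measurable (φ i)) (hψ : ∀ j, Measurable (ψ j)) (hξ : Measurable ξ)
    (hInt : ∀ i j : Fin M,
      IntegrableOn (fun x => φ i x * ψ j x * ξ x) (Set.Icc a b)) :
    (∫ x : Fin M → ℝ in
        {x | (∀ i j : Fin M, i ≤ j → x j ≤ x i) ∧ ∀ i : Fin M, x i ∈ Set.Icc a b},
      (Matrix.of fun i j : Fin M => φ i (x j)).det *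
        (Matrix.of fun i j : Fin M => ψ i (x j)).det * ∏ k : Fin M, ξ (x k))
    = (Matrix.of fun i j : Fin M => ∫ x in Set.Icc a b, φ i x * ψ j x * ξ x).det := by
  classical
  set Bm : Matrix (Fin M) (Fin M) ℂ :=
    Matrix.of fun i j => ∫ x in Set.Icc a b, φ i x * ψ j x * ξ x with hBm
  set F : (Fin M → ℝ) → ℂ := fun x =>
    (Matrix.of fun i j : Fin M => φ i (x j)).det *
      (Matrix.of fun i j : Fin M => ψ i (x j)).det * ∏ k : Fin M, ξ (x k) with hF
  set cube : Set (Fin M → ℝ) := {x | ∀ i, x i ∈ Set.Icc a b} with hcube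
  set T : Set (Fin M → ℝ) :=
    {x | (∀ i j : Fin M, i ≤ j → x j ≤ x i) ∧ ∀ i : Fin M, x i ∈ Set.Icc a b} with hT
  set U : Equiv.Perm (Fin M) → Set (Fin M → ℝ) :=
    fun σ => {x | StrictAnti (x ∘ σ)} ∩ cube with hU
  -- measurability
  have hcubem : MeasurableSet cube := by
    have h : cube = Set.pi Set.univ fun _ : Fin M => Set.Icc a b := by
      ext x
      simp only [hcube, Set.mem_setOf_eq, Set.mem_pi, Set.mem_univ, forall_true_left,
        true_implies]
    rw [h]
    exact MeasurableSet.univ_pi fun _ => measurableSet_Icc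
  have hUm : ∀ σ : Perm (Fin M), MeasurableSet (U σ) := by
    intro σ
    apply MeasurableSet.inter _ hcubem
    have h1 : {x : Fin M → ℝ | StrictAnti (x ∘ σ)}
        = ⋂ (i : Fin M) (j : Fin M) (_ : i < j), {x : Fin M → ℝ | x (σ j) < x (σ i)} := by
      ext x
      simp only [Set.mem_setOf_eq, Set.mem_iInter, StrictAnti, Function.comp]
    rw [h1]
    exact MeasurableSet.iInter fun i => MeasurableSet.iInter fun j =>
      MeasurableSet.iInter fun _ =>
        measurableSet_lt (measurable_pi_apply _) (measurable_pi_apply _)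
  have hTm : MeasurableSet T := by
    have h1 : T = (⋂ (i : Fin M) (j : Fin M) (_ : i ≤ j), {x : Fin M → ℝ | x j ≤ x i}) ∩ cube := by
      ext x
      simp only [hT, hcube, Set.mem_setOf_eq, Set.mem_inter_iff, Set.mem_iInter]
    rw [h1]
    exact MeasurableSet.inter
      (MeasurableSet.iInter fun i => MeasurableSet.iInter fun j =>
        MeasurableSet.iInter fun _ =>
          measurableSet_le (measurable_pi_apply _) (measurable_pi_apply _)) hcubem
  -- the bad (null) set
  set bad : Set (Fin M → ℝ) := {x | ∃ i j : Fin M, i ≠ j ∧ x i = x j} with hbadset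
  have hbad : volume bad = 0 := by
    have hsub : bad ⊆ ⋃ (p : Fin M × Fin M) (_ : p.1 ≠ p.2),
        {x : Fin M → ℝ | x p.1 = x p.2} := by
      rintro x ⟨i, j, hij, hx⟩
      exact Set.mem_iUnion.2 ⟨(i, j), Set.mem_iUnion.2 ⟨hij, hx⟩⟩
    refine measure_mono_null hsub ?_
    exact measure_iUnion_null fun p => measure_iUnion_null fun hp => null_diag hp
  -- integrability of each product term on the cube
  have hterm : ∀ τ σ : Perm (Fin M),
      IntegrableOn (fun x : Fin M → ℝ =>
        ∏ j : Fin M, (φ (τ j) (x j) * ψ (σ j) (x j) * ξ (x j))) cube := by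
    intro τ σ
    have hind : cube.indicator (fun x : Fin M → ℝ =>
        ∏ j : Fin M, (φ (τ j) (x j) * ψ (σ j) (x j) * ξ (x j)))
        = fun x : Fin M → ℝ =>
          ∏ j : Fin M, (Set.Icc a b).indicator
            (fun t => φ (τ j) t * ψ (σ j) t * ξ t) (x j) :=
      funext fun x => indicator_pi_prod (Set.Icc a b)
        (fun j t => φ (τ j) t * ψ (σ j) t * ξ t) x
    have key : Integrable (cube.indicator (fun x : Fin M → ℝ =>
        ∏ j : Fin M, (φ (τ j) (x j) * ψ (σ j) (x j) * ξ (x j)))) := by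
      rw [hind]
      exact Integrable.fintype_prod fun j =>
        (integrable_indicator_iff measurableSet_Icc).2 (hInt (τ j) (σ j))
    exact (integrable_indicator_iff hcubem).1 key
  -- expansion of F
  have hFexp : F = fun x => ∑ τ : Perm (Fin M), ∑ σ : Perm (Fin M),
      (((Perm.sign τ : ℤ) : ℂ) * ((Perm.sign σ : ℤ) : ℂ)) *
        ∏ j : Fin M, (φ (τ j) (x j) * ψ (σ j) (x j) * ξ (x j)) :=
    funext fun x => det_expand φ ψ ξ x
  have hFint : IntegrableOn F cube := by
    rw [hFexp]
    apply integrable_finset_sum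
    intro τ _
    apply integrable_finset_sum
    intro σ _
    exact (hterm τ σ).const_mul _
  -- one-term cube integrals
  have hprodint : ∀ τ σ : Perm (Fin M),
      (∫ x : Fin M → ℝ in cube,
        ∏ j : Fin M, (φ (τ j) (x j) * ψ (σ j) (x j) * ξ (x j)))
      = ∏ j : Fin M, Bm (τ j) (σ j) := by
    intro τ σ
    rw [← integral_indicator hcubem]
    have hind : cube.indicator (fun x : Fin M → ℝ =>
        ∏ j : Fin M, (φ (τ j) (x j) * ψ (σ j) (x j) * ξ (x j)))
        = fun x : Fin M → ℝ =>
          ∏ j : Fin M, (Set.Icc a b).indicator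
            (fun t => φ (τ j) t * ψ (σ j) t * ξ t) (x j) :=
      funext fun x => indicator_pi_prod (Set.Icc a b)
        (fun j t => φ (τ j) t * ψ (σ j) t * ξ t) x
    rw [hind, MeasureTheory.integral_fintype_prod_volume_eq_prod (ι := Fin M)
      (f := fun (j : Fin M) (t : ℝ) => (Set.Icc a b).indicator
        (fun u => φ (τ j) u * ψ (σ j) u * ξ u) t)]
    exact Finset.prod_congr rfl fun j _ => integral_indicator measurableSet_Icc
  -- the cube integral equals card * det Bm
  have hcubeint : (∫ x in cube, F x)
      = (Fintype.card (Perm (Fin M)) : ℂ) * Bm.det := by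
    rw [hFexp]
    have hint1 : ∀ τ : Perm (Fin M), Integrable (fun x : Fin M → ℝ =>
        ∑ σ : Perm (Fin M), (((Perm.sign τ : ℤ) : ℂ) * ((Perm.sign σ : ℤ) : ℂ)) *
          ∏ j : Fin M, (φ (τ j) (x j) * ψ (σ j) (x j) * ξ (x j)))
        (volume.restrict cube) :=
      fun τ => integrable_finset_sum _ fun σ _ => (hterm τ σ).const_mul _
    rw [integral_finset_sum _ fun τ _ => hint1 τ]
    have step : ∀ τ : Perm (Fin M),
        (∫ x : Fin M → ℝ in cube, ∑ σ : Perm (Fin M),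
          (((Perm.sign τ : ℤ) : ℂ) * ((Perm.sign σ : ℤ) : ℂ)) *
            ∏ j : Fin M, (φ (τ j) (x j) * ψ (σ j) (x j) * ξ (x j)))
        = ∑ σ : Perm (Fin M), (((Perm.sign τ : ℤ) : ℂ) * ((Perm.sign σ : ℤ) : ℂ)) *
            ∏ j : Fin M, Bm (τ j) (σ j) := by
      intro τ
      rw [integral_finset_sum _ fun σ _ => (hterm τ σ).const_mul _]
      exact Finset.sum_congr rfl fun σ _ => by rw [MeasureTheory.integral_const_mul, hprodint τ σ]
    rw [Finset.sum_congr rfl fun τ _ => step τ]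
    have inner : ∀ σ : Perm (Fin M),
        (∑ τ : Perm (Fin M), ((Perm.sign τ : ℤ) : ℂ) * ∏ j : Fin M, Bm (τ j) (σ j))
        = ((Perm.sign σ : ℤ) : ℂ) * Bm.det := by
      intro σ
      have h1 : (Bm.submatrix id σ).det
          = ∑ τ : Perm (Fin M), ((Perm.sign τ : ℤ) : ℂ) * ∏ j : Fin M, Bm (τ j) (σ j) := by
        rw [Matrix.det_apply]
        exact Finset.sum_congr rfl fun τ _ => by
          simp [Matrix.submatrix_apply, Units.smul_def, zsmul_eq_mul]
      rw [← h1, Matrix.det_permute']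
    rw [Finset.sum_comm]
    calc ∑ σ : Perm (Fin M), ∑ τ : Perm (Fin M),
          (((Perm.sign τ : ℤ) : ℂ) * ((Perm.sign σ : ℤ) : ℂ)) *
            ∏ j : Fin M, Bm (τ j) (σ j)
        = ∑ σ : Perm (Fin M), ((Perm.sign σ : ℤ) : ℂ) *
            ∑ τ : Perm (Fin M), ((Perm.sign τ : ℤ) : ℂ) * ∏ j : Fin M, Bm (τ j) (σ j) := by
          refine Finset.sum_congr rfl fun σ _ => ?_
          rw [Finset.mul_sum]
          exact Finset.sum_congr rfl fun τ _ => by ring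
      _ = ∑ σ : Perm (Fin M), ((Perm.sign σ : ℤ) : ℂ) * (((Perm.sign σ : ℤ) : ℂ) * Bm.det) := by
          exact Finset.sum_congr rfl fun σ _ => by rw [inner σ]
      _ = ∑ _σ : Perm (Fin M), Bm.det := by
          refine Finset.sum_congr rfl fun σ _ => ?_
          rw [← mul_assoc, sign_sq σ, one_mul]
      _ = (Fintype.card (Perm (Fin M)) : ℂ) * Bm.det := by
          rw [Finset.sum_const, nsmul_eq_mul]
          rfl
  -- decomposition of the cube integral into chambers
  have hdisj : Pairwise (Function.onFun Disjoint U) := by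
    intro σ τ hστ
    rw [Function.onFun, Set.disjoint_left]
    rintro x ⟨hxσ, _⟩ ⟨hxτ, _⟩
    exact hστ (perm_eq_of_strictAnti x σ τ hxσ hxτ)
  have hcover : cube \ (⋃ σ : Perm (Fin M), U σ) ⊆ bad := by
    rintro x ⟨hxc, hxn⟩
    by_contra hxb
    apply hxn
    have hinj : Function.Injective x := by
      intro i j hij
      by_contra hije
      exact hxb ⟨i, j, hije, hij⟩
    set σ : Perm (Fin M) := (Fin.revPerm).trans (Tuple.sort x) with hσ
    have hanti : StrictAnti (x ∘ σ) := by
      have hmono : StrictMono (x ∘ Tuple.sort x) :=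
        (Tuple.monotone_sort x).strictMono_of_injective
          (hinj.comp (Tuple.sort x).injective)
      have h2 : (x ∘ σ) = (x ∘ Tuple.sort x) ∘ Fin.rev := rfl
      rw [h2]
      exact hmono.comp_strictAnti fun i j hij => Fin.rev_lt_rev.2 hij
    exact Set.mem_iUnion.2 ⟨σ, ⟨hanti, hxc⟩⟩
  have hsubU : (⋃ σ : Perm (Fin M), U σ) ⊆ cube := by
    intro x hx
    obtain ⟨σ, hσ⟩ := Set.mem_iUnion.1 hx
    exact hσ.2
  have hdecomp : (∫ x in cube, F x) = ∑ σ : Perm (Fin M), ∫ x in U σ, F x := by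
    have hae : cube =ᵐ[volume] ⋃ σ : Perm (Fin M), U σ := by
      rw [MeasureTheory.ae_eq_set]
      constructor
      · exact measure_mono_null hcover hbad
      · rw [Set.diff_eq_empty.2 hsubU]; simp
    rw [setIntegral_congr_set hae]
    exact integral_iUnion_fintype hUm hdisj fun σ =>
      hFint.mono_set Set.inter_subset_right
  -- each chamber integral equals the identity-chamber integral
  have hUeq : ∀ σ : Perm (Fin M), (∫ x in U σ, F x) = ∫ x in U 1, F x := by
    intro σ
    have hmp := MeasureTheory.volume_measurePreserving_piCongrLeft (fun _ : Fin M => ℝ) σ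
    have hemb := (MeasurableEquiv.piCongrLeft (fun _ : Fin M => ℝ) σ).measurableEmbedding
    have he : ∀ (x : Fin M → ℝ) (j : Fin M),
        (MeasurableEquiv.piCongrLeft (fun _ : Fin M => ℝ) σ) x j = x (σ.symm j) := by
      intro x j
      rw [MeasurableEquiv.coe_piCongrLeft]
      conv_lhs => rw [show j = σ (σ.symm j) from (σ.apply_symm_apply j).symm]
      rw [Equiv.piCongrLeft_apply_apply]
    have hFe : ∀ x : Fin M → ℝ,
        F ((MeasurableEquiv.piCongrLeft (fun _ : Fin M => ℝ) σ) x) = F x := by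
      intro x
      have hx : (MeasurableEquiv.piCongrLeft (fun _ : Fin M => ℝ) σ) x
          = fun j => x (σ.symm j) := funext (he x)
      rw [hF, hx]
      exact F_comp_perm φ ψ ξ x σ.symm
    have hpre : (MeasurableEquiv.piCongrLeft (fun _ : Fin M => ℝ) σ) ⁻¹' (U σ) = U 1 := by
      ext x
      have hcomp : ((MeasurableEquiv.piCongrLeft (fun _ : Fin M => ℝ) σ) x) ∘ ⇑σ
          = x ∘ ⇑(1 : Perm (Fin M)) := by
        funext k
        simp [he x, Equiv.symm_apply_apply]
      simp only [hU, Set.mem_preimage, Set.mem_inter_iff, Set.mem_setOf_eq, hcube]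
      constructor
      · rintro ⟨h1, h2⟩
        refine ⟨by rw [← hcomp]; exact h1, fun i => ?_⟩
        have h3 := h2 (σ i)
        rwa [he x (σ i), Equiv.symm_apply_apply] at h3
      · rintro ⟨h1, h2⟩
        refine ⟨by rw [hcomp]; exact h1, fun i => ?_⟩
        rw [he x i]
        exact h2 (σ.symm i)
    rw [← hmp.setIntegral_preimage_emb hemb F (U σ), hpre]
    exact setIntegral_congr_fun (hUm 1) fun x _ => hFe x
  -- the `T` integral equals the identity-chamber integral
  have hTeq : (∫ x in T, F x) = ∫ x in U 1, F x := by
    have h1 : U 1 ⊆ T := by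
      rintro x ⟨hxa, hxc⟩
      refine ⟨fun i j hij => ?_, hxc⟩
      rcases lt_or_eq_of_le hij with h | h
      · have h2 := hxa h
        simp only [Perm.coe_one, Function.comp, id] at h2
        exact le_of_lt h2
      · simp [h]
    have h2 : T \ U 1 ⊆ bad := by
      rintro x ⟨⟨hxa, hxc⟩, hxn⟩
      by_contra hxb
      apply hxn
      refine ⟨fun i j hij => ?_, hxc⟩
      simp only [Perm.coe_one, Function.comp, id]
      rcases lt_or_eq_of_le (hxa i j (le_of_lt hij)) with h | h
      · exact h
      · exact absurd ⟨j, i, (ne_of_lt hij).symm, h⟩ hxb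
    apply setIntegral_congr_set
    rw [MeasureTheory.ae_eq_set]
    exact ⟨measure_mono_null h2 hbad, by rw [Set.diff_eq_empty.2 h1]; simp⟩
  -- put things together
  have hcard : (Fintype.card (Perm (Fin M)) : ℂ) ≠ 0 := by
    exact_mod_cast Fintype.card_ne_zero
  have hfinal : (Fintype.card (Perm (Fin M)) : ℂ) * (∫ x in T, F x)
      = (Fintype.card (Perm (Fin M)) : ℂ) * Bm.det := by
    rw [← hcubeint, hdecomp,
      Finset.sum_congr rfl fun σ _ => (hUeq σ).trans hTeq.symm,
      Finset.sum_const, nsmul_eq_mul]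
    rfl
  exact mul_left_cancel₀ hcard hfinal
end

section
/- Under the matrix setup below, fix 1 ≤ L ≤ M and reals x_1,…,x_L ∈ [α,β]. Then the (M−L)-fold integral ∫_{[α,β]^{M−L}} det Φ(x) · det Ψ(x) · Π_{k=1}^M ξ(x_k) dx_{L+1}⋯dx_M (with x_1,…,x_L held fixed) equals T(A), where A is the N×N×N tensor with entries: a_{i,j,k} = ς_i(x_k) ψ_j(x_k) for 1 ≤ k ≤ L; a_{i,j,k} = ∫_α^β ς_i(x) ψ_j(x) dx for L < k ≤ M; a_{i,j,k} = 0 for k > M and i < k; and a_{i,j,k} = ψ̄_{j,k} for k > M and i ≥ k. (When (K/M!)·det Φ·det Ψ·Π ξ is the joint density of M unordered exchangeable random variables, this gives the joint marginal density of L of them as (K/M!)·T(A).) -/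
open MeasureTheory

/-- Embedding with the first `L` coordinates fixed at `t_1, …, t_L` and the
remaining `M - L` coordinates free. -/
def embU {M L : ℕ} (t : Fin L → ℝ) (y : {m : Fin M // L ≤ (m : ℕ)} → ℝ)
    (m : Fin M) : ℝ :=
  if h : (m : ℕ) < L then t ⟨m, h⟩ else y ⟨m, le_of_not_gt h⟩

section AuxLemmas
lemma aux_indicator_pi_prod {ι : Type*} [Fintype ι] {a b : ℝ} (f : ι → ℝ → ℂ) :
    (Set.univ.pi fun _ : ι => Set.Icc a b).indicator (fun y => ∏ i, f i (y i))
      = fun y => ∏ i, (Set.Icc a b).indicator (f i) (y i) := by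
  funext y
  by_cases h : y ∈ Set.univ.pi fun _ : ι => Set.Icc a b
  · rw [Set.indicator_of_mem h]
    exact Finset.prod_congr rfl fun i _ =>
      (Set.indicator_of_mem (Set.mem_univ_pi.mp h i) (f i)).symm
  · rw [Set.indicator_of_notMem h]
    rw [Set.mem_univ_pi] at h
    push_neg at h
    obtain ⟨i, hi⟩ := h
    exact (Finset.prod_eq_zero (Finset.mem_univ i)
      (Set.indicator_of_notMem hi (f i))).symm

lemma aux_integrable_pi_prod {ι : Type*} [Fintype ι] {a b : ℝ} (f : ι → ℝ → ℂ)
    (hf : ∀ i, IntegrableOn (f i) (Set.Icc a b)) :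
    IntegrableOn (fun y : ι → ℝ => ∏ i, f i (y i))
      (Set.univ.pi fun _ : ι => Set.Icc a b) := by
  have h : Integrable ((Set.univ.pi fun _ : ι => Set.Icc a b).indicator
      (fun y => ∏ i, f i (y i))) := by
    rw [aux_indicator_pi_prod]
    exact Integrable.fintype_prod fun i => (integrable_indicator_iff measurableSet_Icc).2 (hf i)
  exact (integrable_indicator_iff (MeasurableSet.univ_pi fun _ => measurableSet_Icc)).1 h

lemma aux_integral_pi_prod {ι : Type*} [Fintype ι] {a b : ℝ} (f : ι → ℝ → ℂ) :
    (∫ y : ι → ℝ in Set.univ.pi fun _ : ι => Set.Icc a b, ∏ i, f i (y i))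
      = ∏ i, ∫ x in Set.Icc a b, f i x := by
  rw [← integral_indicator (MeasurableSet.univ_pi fun _ => measurableSet_Icc),
    aux_indicator_pi_prod,
    integral_fintype_prod_volume_eq_prod fun i => (Set.Icc a b).indicator (f i)]
  exact Finset.prod_congr rfl fun i _ => integral_indicator measurableSet_Icc

lemma aux_det_block {M N : ℕ} (hMN : M ≤ N) (B : Matrix (Fin N) (Fin N) ℂ)
    (e : Fin M ⊕ Fin (N - M) ≃ Fin N)
    (heL : ∀ m : Fin M, e (Sum.inl m) = Fin.castLE hMN m)
    (h12 : ∀ (i : Fin M) (k : Fin (N - M)), B (Fin.castLE hMN i) (e (Sum.inr k)) = 0)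
    (htri : ∀ k k' : Fin (N - M), (k : ℕ) < (k' : ℕ) → B (e (Sum.inr k)) (e (Sum.inr k')) = 0) :
    B.det = (Matrix.of fun i m : Fin M => B (Fin.castLE hMN i) (Fin.castLE hMN m)).det *
      ∏ k : Fin (N - M), B (e (Sum.inr k)) (e (Sum.inr k)) := by
  rw [← Matrix.det_submatrix_equiv_self e B]
  have hsub : B.submatrix e e = Matrix.fromBlocks
      (Matrix.of fun i m : Fin M => B (Fin.castLE hMN i) (Fin.castLE hMN m)) 0
      (Matrix.of fun k m => B (e (Sum.inr k)) (Fin.castLE hMN m))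
      (Matrix.of fun k k' => B (e (Sum.inr k)) (e (Sum.inr k'))) := by
    ext i j
    cases i with
    | inl i =>
      cases j with
      | inl j => simp [Matrix.submatrix_apply, heL]
      | inr j => simp [Matrix.submatrix_apply, heL, h12]
    | inr i =>
      cases j with
      | inl j => simp [Matrix.submatrix_apply, heL]
      | inr j => simp [Matrix.submatrix_apply]
  rw [hsub, Matrix.det_fromBlocks_zero₁₂]
  congr 1
  rw [Matrix.det_of_lowerTriangular]
  · simp
  · intro k k' h
    exact htri _ _ (by exact_mod_cast h)

end AuxLemmas

/-- Unordered case, joint marginal of `L` eigenvalues: the `(M-L)`-fold integral of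
`det Φ ⬝ det Ψ ⬝ Π ξ` over `[α,β]^{M-L}` with the first `L` coordinates held
fixed equals `T(A)`. -/
theorem stmt_9 {M N L : ℕ} (hL : 1 ≤ L) (hLM : L ≤ M) (hMN : M ≤ N)
    {α β : ℝ} (hαβ : α < β)
    (φ : Fin M → ℝ → ℂ) (ψ : Fin N → ℝ → ℂ) (ξ : ℝ → ℂ) (ψbar : Fin N → Fin N → ℂ)
    (hφ : ∀ i, Measurable (φ i)) (hψ : ∀ j, Measurable (ψ j)) (hξ : Measurable ξ)
    (hInt : ∀ (i j : Fin N),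
      IntegrableOn (fun x => varsigma φ ξ i x * ψ j x) (Set.Icc α β))
    (t : Fin L → ℝ) (htmem : ∀ ℓ, t ℓ ∈ Set.Icc α β) :
    (∫ y : {m : Fin M // L ≤ (m : ℕ)} → ℝ in
        Set.univ.pi fun _ : {m : Fin M // L ≤ (m : ℕ)} => Set.Icc α β,
      (PhiMat φ (embU t y)).det * (PsiMat ψ ψbar (embU t y)).det *
        ∏ k : Fin M, ξ (embU t y k))
    = pseudoDet (fun i j k =>
        if hk : (k : ℕ) < L then varsigma φ ξ i (t ⟨k, hk⟩) * ψ j (t ⟨k, hk⟩)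
        else if (k : ℕ) < M then ∫ x in Set.Icc α β, varsigma φ ξ i x * ψ j x
        else if (i : ℕ) < (k : ℕ) then 0 else ψbar j k) := by
  classical
  have hNM : M + (N - M) = N := Nat.add_sub_cancel' hMN
  set e : Fin M ⊕ Fin (N - M) ≃ Fin N := finSumFinEquiv.trans (finCongr hNM) with he
  have heL : ∀ m : Fin M, e (Sum.inl m) = Fin.castLE hMN m := by
    intro m; apply Fin.ext; simp [he]
  have heRv : ∀ k : Fin (N - M), ((e (Sum.inr k)) : ℕ) = M + k := by
    intro k; simp [he]
  set eM : ({m : Fin M // (m : ℕ) < L} ⊕ {m : Fin M // L ≤ (m : ℕ)}) ≃ Fin M :=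
    (Equiv.sumCongr (Equiv.refl _) (Equiv.subtypeEquivRight fun m => not_lt.symm)).trans
      (Equiv.sumCompl fun m : Fin M => (m : ℕ) < L) with heM
  have heMl : ∀ a : {m : Fin M // (m : ℕ) < L}, eM (Sum.inl a) = a.1 := fun a => rfl
  have heMr : ∀ b : {m : Fin M // L ≤ (m : ℕ)}, eM (Sum.inr b) = b.1 := fun b => rfl
  have prodM_split : ∀ f : Fin M → ℂ, (∏ m : Fin M, f m)
      = (∏ a : {m : Fin M // (m : ℕ) < L}, f a.1) *
        ∏ b : {m : Fin M // L ≤ (m : ℕ)}, f b.1 := by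
    intro f
    rw [← Equiv.prod_comp eM f, Fintype.prod_sum_type]
    simp only [heMl, heMr]
  have prodN_split : ∀ f : Fin N → ℂ, (∏ j : Fin N, f j)
      = (∏ m : Fin M, f (Fin.castLE hMN m)) * ∏ k : Fin (N - M), f (e (Sum.inr k)) := by
    intro f
    rw [← Equiv.prod_comp e f, Fintype.prod_sum_type]
    simp_rw [heL]
  have hembA : ∀ (y : {m : Fin M // L ≤ (m : ℕ)} → ℝ) (a : {m : Fin M // (m : ℕ) < L}),
      embU t y a.1 = t ⟨a.1, a.2⟩ := by
    intro y a; rw [embU, dif_pos a.2]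
  have hembB : ∀ (y : {m : Fin M // L ≤ (m : ℕ)} → ℝ) (b : {m : Fin M // L ≤ (m : ℕ)}),
      embU t y b.1 = y b := by
    intro y b
    rw [embU, dif_neg (not_lt.2 b.2)]
  have hvs : ∀ (i : Fin M) (x : ℝ), varsigma φ ξ (Fin.castLE hMN i) x = φ i x * ξ x := by
    intro i x
    rw [varsigma, dif_pos (show ((Fin.castLE hMN i : Fin N) : ℕ) < M from i.2)]
    rfl
  have hPsiL : ∀ (x : Fin M → ℝ) (i : Fin N) (m : Fin M),
      PsiMat ψ ψbar x i (Fin.castLE hMN m) = ψ i (x m) := by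
    intro x i m
    show (if h : ((Fin.castLE hMN m : Fin N) : ℕ) < M then ψ i (x ⟨_, h⟩) else _) = _
    rw [dif_pos (show ((Fin.castLE hMN m : Fin N) : ℕ) < M from m.2)]
    rfl
  have hPsiR : ∀ (x : Fin M → ℝ) (i : Fin N) (k : Fin (N - M)),
      PsiMat ψ ψbar x i (e (Sum.inr k)) = ψbar i (e (Sum.inr k)) := by
    intro x i k
    show (if h : ((e (Sum.inr k) : Fin N) : ℕ) < M then ψ i (x ⟨_, h⟩) else _) = _
    rw [dif_neg (by rw [heRv]; omega)]
  trans (∑ τ : Equiv.Perm (Fin N), ∑ σ : Equiv.Perm (Fin M),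
    ((Equiv.Perm.sign τ : ℤ) : ℂ) * ((Equiv.Perm.sign σ : ℤ) : ℂ) *
      ((∏ k : Fin (N - M), ψbar (τ (e (Sum.inr k))) (e (Sum.inr k))) *
       ((∏ a : {m : Fin M // (m : ℕ) < L},
           varsigma φ ξ (Fin.castLE hMN (σ a.1)) (t ⟨a.1, a.2⟩) *
             ψ (τ (Fin.castLE hMN a.1)) (t ⟨a.1, a.2⟩)) *
        ∏ b : {m : Fin M // L ≤ (m : ℕ)},
          ∫ x in Set.Icc α β,
            varsigma φ ξ (Fin.castLE hMN (σ b.1)) x * ψ (τ (Fin.castLE hMN b.1)) x)))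
  · have hpt : ∀ y : {m : Fin M // L ≤ (m : ℕ)} → ℝ,
        (PhiMat φ (embU t y)).det * (PsiMat ψ ψbar (embU t y)).det *
          ∏ k : Fin M, ξ (embU t y k)
        = ∑ τ : Equiv.Perm (Fin N), ∑ σ : Equiv.Perm (Fin M),
            (((Equiv.Perm.sign τ : ℤ) : ℂ) * ((Equiv.Perm.sign σ : ℤ) : ℂ) *
              ((∏ k : Fin (N - M), ψbar (τ (e (Sum.inr k))) (e (Sum.inr k))) *
               ∏ a : {m : Fin M // (m : ℕ) < L},
                 varsigma φ ξ (Fin.castLE hMN (σ a.1)) (t ⟨a.1, a.2⟩) *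
                   ψ (τ (Fin.castLE hMN a.1)) (t ⟨a.1, a.2⟩))) *
            ∏ b : {m : Fin M // L ≤ (m : ℕ)},
              varsigma φ ξ (Fin.castLE hMN (σ b.1)) (y b) *
                ψ (τ (Fin.castLE hMN b.1)) (y b) := by
      intro y
      rw [Matrix.det_apply' (PhiMat φ (embU t y)), Matrix.det_apply' (PsiMat ψ ψbar (embU t y)),
        Finset.sum_mul_sum]
      rw [Finset.sum_mul]
      simp_rw [Finset.sum_mul]
      rw [Finset.sum_comm]
      refine Finset.sum_congr rfl fun τ _ => Finset.sum_congr rfl fun σ _ => ?_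
      have hΨ : (∏ j : Fin N, PsiMat ψ ψbar (embU t y) (τ j) j)
          = (∏ m : Fin M, ψ (τ (Fin.castLE hMN m)) (embU t y m)) *
            ∏ k : Fin (N - M), ψbar (τ (e (Sum.inr k))) (e (Sum.inr k)) := by
        rw [prodN_split]
        congr 1
        · exact Finset.prod_congr rfl fun m _ => hPsiL _ _ m
        · exact Finset.prod_congr rfl fun k _ => hPsiR _ _ k
      have h1 : (∏ m : Fin M, (varsigma φ ξ (Fin.castLE hMN (σ m)) (embU t y m) *
            ψ (τ (Fin.castLE hMN m)) (embU t y m)))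
          = (∏ a : {m : Fin M // (m : ℕ) < L},
              varsigma φ ξ (Fin.castLE hMN (σ a.1)) (t ⟨a.1, a.2⟩) *
                ψ (τ (Fin.castLE hMN a.1)) (t ⟨a.1, a.2⟩)) *
            ∏ b : {m : Fin M // L ≤ (m : ℕ)},
              varsigma φ ξ (Fin.castLE hMN (σ b.1)) (y b) *
                ψ (τ (Fin.castLE hMN b.1)) (y b) := by
        rw [prodM_split]
        congr 1
        · exact Finset.prod_congr rfl fun a _ => by rw [hembA]
        · exact Finset.prod_congr rfl fun b _ => by rw [hembB]
      have h2 : (∏ m : Fin M, (varsigma φ ξ (Fin.castLE hMN (σ m)) (embU t y m) *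
            ψ (τ (Fin.castLE hMN m)) (embU t y m)))
          = (∏ m : Fin M, φ (σ m) (embU t y m)) *
            (∏ m : Fin M, ψ (τ (Fin.castLE hMN m)) (embU t y m)) *
            ∏ m : Fin M, ξ (embU t y m) := by
        rw [← Finset.prod_mul_distrib, ← Finset.prod_mul_distrib]
        refine Finset.prod_congr rfl fun m _ => ?_
        rw [hvs]; ring
      have h3 := h1.symm.trans h2
      simp only [PhiMat, Matrix.of_apply]
      rw [hΨ]
      linear_combination (((Equiv.Perm.sign τ : ℤ) : ℂ) * ((Equiv.Perm.sign σ : ℤ) : ℂ) *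
        ∏ k : Fin (N - M), ψbar (τ (e (Sum.inr k))) (e (Sum.inr k))) * h3.symm
    simp only [hpt]
    rw [integral_finset_sum]
    · refine Finset.sum_congr rfl fun τ _ => ?_
      rw [integral_finset_sum]
      · refine Finset.sum_congr rfl fun σ _ => ?_
        rw [integral_const_mul]
        have haux := aux_integral_pi_prod (a := α) (b := β)
          (fun (b' : {m : Fin M // L ≤ (m : ℕ)}) x =>
            varsigma φ ξ (Fin.castLE hMN (σ b'.1)) x * ψ (τ (Fin.castLE hMN b'.1)) x)
        rw [haux]
        ring
      · intro σ _
        exact (aux_integrable_pi_prod _ fun b' => hInt _ _).const_mul _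
    · intro τ _
      exact integrable_finset_sum _ fun σ _ =>
        (aux_integrable_pi_prod _ fun b' => hInt _ _).const_mul _
  · symm
    simp only [pseudoDet]
    rw [Finset.sum_comm]
    refine Finset.sum_congr rfl fun τ _ => ?_
    set Bτ : Matrix (Fin N) (Fin N) ℂ := Matrix.of fun i k =>
      if hk : (k : ℕ) < L then varsigma φ ξ i (t ⟨k, hk⟩) * ψ (τ k) (t ⟨k, hk⟩)
      else if (k : ℕ) < M then ∫ x in Set.Icc α β, varsigma φ ξ i x * ψ (τ k) x
      else if (i : ℕ) < (k : ℕ) then 0 else ψbar (τ k) k with hB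
    have hcolL : ∀ k : Fin (N - M), ¬ ((e (Sum.inr k) : ℕ) < L) := by
      intro k; rw [heRv]; omega
    have hcolM : ∀ k : Fin (N - M), ¬ ((e (Sum.inr k) : ℕ) < M) := by
      intro k; rw [heRv]; omega
    have h12 : ∀ (i : Fin M) (k : Fin (N - M)),
        Bτ (Fin.castLE hMN i) (e (Sum.inr k)) = 0 := by
      intro i k
      rw [hB]
      simp only [Matrix.of_apply]
      rw [dif_neg (hcolL k), if_neg (hcolM k),
        if_pos (show ((Fin.castLE hMN i : Fin N) : ℕ) < ((e (Sum.inr k) : Fin N) : ℕ) by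
          have h1 : ((Fin.castLE hMN i : Fin N) : ℕ) = (i : ℕ) := rfl
          have h2 := i.isLt
          rw [h1, heRv]; omega)]
    have htri : ∀ k k' : Fin (N - M), (k : ℕ) < (k' : ℕ) →
        Bτ (e (Sum.inr k)) (e (Sum.inr k')) = 0 := by
      intro k k' hkk
      rw [hB]
      simp only [Matrix.of_apply]
      rw [dif_neg (hcolL k'), if_neg (hcolM k'),
        if_pos (show ((e (Sum.inr k) : Fin N) : ℕ) < ((e (Sum.inr k') : Fin N) : ℕ) by
          rw [heRv, heRv]; omega)]
    have hdiag : ∀ k : Fin (N - M),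
        Bτ (e (Sum.inr k)) (e (Sum.inr k)) = ψbar (τ (e (Sum.inr k))) (e (Sum.inr k)) := by
      intro k
      rw [hB]
      simp only [Matrix.of_apply]
      rw [dif_neg (hcolL k), if_neg (hcolM k), if_neg (lt_irrefl _)]
    have hblock := aux_det_block hMN Bτ e heL h12 htri
    have hentry : ∀ i m : Fin M, Bτ (Fin.castLE hMN i) (Fin.castLE hMN m)
        = if h : (m : ℕ) < L then
            varsigma φ ξ (Fin.castLE hMN i) (t ⟨m, h⟩) * ψ (τ (Fin.castLE hMN m)) (t ⟨m, h⟩)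
          else ∫ x in Set.Icc α β,
            varsigma φ ξ (Fin.castLE hMN i) x * ψ (τ (Fin.castLE hMN m)) x := by
      intro i m
      rw [hB]
      simp only [Matrix.of_apply]
      by_cases h : (m : ℕ) < L
      · rw [dif_pos (show ((Fin.castLE hMN m : Fin N) : ℕ) < L from h), dif_pos h]
        rfl
      · rw [dif_neg (show ¬ ((Fin.castLE hMN m : Fin N) : ℕ) < L from h), dif_neg h,
          if_pos (show ((Fin.castLE hMN m : Fin N) : ℕ) < M from m.isLt)]
    have hdetTop : (Matrix.of fun i m : Fin M =>
          Bτ (Fin.castLE hMN i) (Fin.castLE hMN m)).det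
        = ∑ σ : Equiv.Perm (Fin M), ((Equiv.Perm.sign σ : ℤ) : ℂ) *
            ((∏ a : {m : Fin M // (m : ℕ) < L},
                varsigma φ ξ (Fin.castLE hMN (σ a.1)) (t ⟨a.1, a.2⟩) *
                  ψ (τ (Fin.castLE hMN a.1)) (t ⟨a.1, a.2⟩)) *
              ∏ b : {m : Fin M // L ≤ (m : ℕ)},
                ∫ x in Set.Icc α β,
                  varsigma φ ξ (Fin.castLE hMN (σ b.1)) x * ψ (τ (Fin.castLE hMN b.1)) x) := by
      rw [Matrix.det_apply']
      refine Finset.sum_congr rfl fun σ _ => ?_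
      congr 1
      simp only [Matrix.of_apply]
      rw [prodM_split]
      congr 1
      · refine Finset.prod_congr rfl fun a _ => ?_
        rw [hentry (σ a.1) a.1, dif_pos a.2]
      · refine Finset.prod_congr rfl fun b _ => ?_
        rw [hentry (σ b.1) b.1, dif_neg (not_lt.2 b.2)]
    have step1 : (∑ μ : Equiv.Perm (Fin N),
          ((Equiv.Perm.sign μ : ℤ) : ℂ) * ((Equiv.Perm.sign τ : ℤ) : ℂ) *
            ∏ k : Fin N,
              (if hk : (k : ℕ) < L then
                  varsigma φ ξ (μ k) (t ⟨k, hk⟩) * ψ (τ k) (t ⟨k, hk⟩)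
                else if (k : ℕ) < M then
                  ∫ x in Set.Icc α β, varsigma φ ξ (μ k) x * ψ (τ k) x
                else if ((μ k) : ℕ) < (k : ℕ) then 0 else ψbar (τ k) k))
        = ((Equiv.Perm.sign τ : ℤ) : ℂ) * Bτ.det := by
      rw [Matrix.det_apply', Finset.mul_sum]
      refine Finset.sum_congr rfl fun μ _ => ?_
      rw [hB]
      simp only [Matrix.of_apply]
      ring
    calc (∑ μ : Equiv.Perm (Fin N),
          ((Equiv.Perm.sign μ : ℤ) : ℂ) * ((Equiv.Perm.sign τ : ℤ) : ℂ) *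
            ∏ k : Fin N,
              (if hk : (k : ℕ) < L then
                  varsigma φ ξ (μ k) (t ⟨k, hk⟩) * ψ (τ k) (t ⟨k, hk⟩)
                else if (k : ℕ) < M then
                  ∫ x in Set.Icc α β, varsigma φ ξ (μ k) x * ψ (τ k) x
                else if ((μ k) : ℕ) < (k : ℕ) then 0 else ψbar (τ k) k))
        = ((Equiv.Perm.sign τ : ℤ) : ℂ) * Bτ.det := step1
      _ = ((Equiv.Perm.sign τ : ℤ) : ℂ) *
            ((Matrix.of fun i m : Fin M =>
                Bτ (Fin.castLE hMN i) (Fin.castLE hMN m)).det *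
              ∏ k : Fin (N - M), Bτ (e (Sum.inr k)) (e (Sum.inr k))) := by rw [hblock]
      _ = _ := by
        rw [hdetTop, Finset.prod_congr rfl fun k _ => hdiag k, Finset.sum_mul,
          Finset.mul_sum]
        refine Finset.sum_congr rfl fun σ _ => ?_
        ring
end

section
/- Under the matrix setup below, let g_1,…,g_M : ℝ → ℂ be measurable functions such that ς_i·ψ_j·g_k is Lebesgue integrable on [α,β] for all 1 ≤ i ≤ N, 1 ≤ j ≤ N, 1 ≤ k ≤ M. Then ∫_{[α,β]^M} det Φ(x) · det Ψ(x) · Π_{k=1}^M ξ(x_k) g_k(x_k) dx = T(A), where A is the N×N×N tensor with entries: a_{i,j,k} = ∫_α^β φ_i(x) ψ_j(x) ξ(x) g_k(x) dx for i ≤ M and k ≤ M; a_{i,j,k} = ∫_α^β ψ_j(x) ξ(x) g_k(x) dx for i > M and k ≤ M; a_{i,j,k} = 0 for k > M and i < k; and a_{i,j,k} = ψ̄_{j,k} for k > M and i ≥ k. (When (K/M!)·det Φ·det Ψ·Π ξ is the joint density of M unordered exchangeable random variables λ_1,…,λ_M, this gives E[Π_{ℓ=1}^M g_ℓ(λ_ℓ)]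 = (K/M!)·T(A); taking g_ℓ(x) = x^{m_ℓ} yields the joint moments and g_ℓ(x) = e^{ν_ℓ x} yields the joint moment generating function.) -/
open MeasureTheory

open MeasureTheory

/-- Equivalence between `Fin M` and the subtype of `Fin N` with value `< M`. -/
def finLT {M N : ℕ} (hMN : M ≤ N) : Fin M ≃ {i : Fin N // (i : ℕ) < M} where
  toFun k := ⟨Fin.castLE hMN k, k.2⟩
  invFun i := ⟨i.1, i.2⟩
  left_inv k := rfl
  right_inv i := rfl

lemma prod_filter_lt {M N : ℕ} (hMN : M ≤ N) (f : Fin N → ℂ) :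
    ∏ k ∈ Finset.univ.filter (fun k : Fin N => (k : ℕ) < M), f k
      = ∏ k : Fin M, f (Fin.castLE hMN k) := by
  refine Finset.prod_bij' (fun k hk => (⟨(k : ℕ), (Finset.mem_filter.mp hk).2⟩ : Fin M))
    (fun k _ => Fin.castLE hMN k) ?_ ?_ ?_ ?_ ?_ <;>
  simp [Fin.ext_iff]

lemma fix_tail {M N : ℕ} (π : Equiv.Perm (Fin N))
    (h : ∀ k : Fin N, M ≤ (k : ℕ) → (k : ℕ) ≤ (π k : ℕ)) :
    ∀ k : Fin N, M ≤ (k : ℕ) → π k = k := by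
  classical
  set T : Finset (Fin N) := Finset.univ.filter (fun k => M ≤ (k : ℕ)) with hT
  have hmap : ∀ k ∈ T, π k ∈ T := by
    intro k hk
    simp only [hT, Finset.mem_filter, Finset.mem_univ, true_and] at *
    exact hk.trans (h k hk)
  have himg : T.image π = T :=
    Finset.eq_of_subset_of_card_le (Finset.image_subset_iff.mpr hmap)
      (by rw [Finset.card_image_of_injective _ π.injective])
  have hsum : ∑ k ∈ T, ((k : ℕ)) = ∑ k ∈ T, ((π k : ℕ)) := by
    conv_lhs => rw [← himg]
    rw [Finset.sum_image (fun a _ b _ hab => π.injective hab)]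
  have heach := (Finset.sum_eq_sum_iff_of_le
      (fun k hk => h k (by simpa [hT] using hk))).mp hsum
  intro k hk
  exact Fin.ext (heach k (by simp [hT, hk])).symm

/-- Extension of a permutation of `Fin M` to `Fin N` by the identity. -/
noncomputable def extPerm {M N : ℕ} (hMN : M ≤ N) (μ : Equiv.Perm (Fin M)) :
    Equiv.Perm (Fin N) :=
  μ.extendDomain (finLT hMN)

lemma extPerm_injective {M N : ℕ} (hMN : M ≤ N) :
    Function.Injective (extPerm hMN) :=
  fun _ _ h => Equiv.Perm.extendDomainHom_injective (finLT hMN) h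

lemma extPerm_sign {M N : ℕ} (hMN : M ≤ N) (μ : Equiv.Perm (Fin M)) :
    Equiv.Perm.sign (extPerm hMN μ) = Equiv.Perm.sign μ :=
  Equiv.Perm.sign_extendDomain μ (finLT hMN)

lemma extPerm_lt {M N : ℕ} (hMN : M ≤ N) (μ : Equiv.Perm (Fin M)) (k : Fin M) :
    extPerm hMN μ (Fin.castLE hMN k) = Fin.castLE hMN (μ k) :=
  Equiv.Perm.extendDomain_apply_image μ (finLT hMN) k

lemma extPerm_ge {M N : ℕ} (hMN : M ≤ N) (μ : Equiv.Perm (Fin M)) (k : Fin N)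
    (hk : ¬ (k : ℕ) < M) : extPerm hMN μ k = k :=
  Equiv.Perm.extendDomain_apply_not_subtype μ (finLT hMN) hk

lemma mem_image_extPerm {M N : ℕ} (hMN : M ≤ N) (π : Equiv.Perm (Fin N))
    (hfix : ∀ k : Fin N, ¬ (k : ℕ) < M → π k = k) :
    π ∈ Finset.univ.image (extPerm hMN) := by
  classical
  have hp : ∀ x : Fin N, ((x : ℕ) < M ↔ ((π x : ℕ) < M)) := by
    intro x
    constructor
    · intro hx
      by_contra hπx
      have := hfix (π x) hπx
      have : π (π x) = π x := this
      have hx' := π.injective this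
      rw [hx'] at hπx
      exact hπx hx
    · intro hπx
      by_contra hx
      rw [hfix x hx] at hπx
      exact hx hπx
  set μ : Equiv.Perm (Fin M) :=
    (Equiv.permCongr (finLT hMN).symm) (π.subtypePerm (fun x => (hp x).symm)) with hμ
  refine Finset.mem_image.mpr ⟨μ, Finset.mem_univ _, ?_⟩
  ext k
  by_cases hk : (k : ℕ) < M
  · have h1 : extPerm hMN μ k = ((finLT hMN) (μ ((finLT hMN).symm ⟨k, hk⟩)) : Fin N) :=
      Equiv.Perm.extendDomain_apply_subtype μ (finLT hMN) hk
    rw [h1, hμ]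
    simp [Equiv.permCongr_apply, Equiv.Perm.subtypePerm_apply, finLT, Fin.ext_iff]
  · rw [extPerm_ge hMN μ k hk, hfix k hk]
/-- Expected value of a product of functions of the unordered eigenvalues:
`∫_{[α,β]^M} det Φ ⬝ det Ψ ⬝ Π_k ξ(x_k) g_k(x_k) dx = T(A)`. -/
theorem stmt_10 {M N : ℕ} (hM : 1 ≤ M) (hMN : M ≤ N) {α β : ℝ} (hαβ : α < β)
    (φ : Fin M → ℝ → ℂ) (ψ : Fin N → ℝ → ℂ) (ξ : ℝ → ℂ) (ψbar : Fin N → Fin N → ℂ)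
    (hφ : ∀ i, Measurable (φ i)) (hψ : ∀ j, Measurable (ψ j)) (hξ : Measurable ξ)
    (hInt : ∀ (i j : Fin N),
      IntegrableOn (fun x => varsigma φ ξ i x * ψ j x) (Set.Icc α β))
    (g : Fin M → ℝ → ℂ) (hg : ∀ k, Measurable (g k))
    (hIntg : ∀ (i j : Fin N) (k : Fin M),
      IntegrableOn (fun x => varsigma φ ξ i x * ψ j x * g k x) (Set.Icc α β)) :
    (∫ x : Fin M → ℝ in Set.univ.pi fun _ : Fin M => Set.Icc α β,
      (PhiMat φ x).det * (PsiMat ψ ψbar x).det *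
        ∏ k : Fin M, ξ (x k) * g k (x k))
    = pseudoDet (fun i j k =>
        if hk : (k : ℕ) < M then
          if hi : (i : ℕ) < M then
            ∫ x in Set.Icc α β, φ ⟨i, hi⟩ x * ψ j x * ξ x * g ⟨k, hk⟩ x
          else ∫ x in Set.Icc α β, ψ j x * ξ x * g ⟨k, hk⟩ x
        else if (i : ℕ) < (k : ℕ) then 0 else ψbar j k) := by
  classical
  set I : Equiv.Perm (Fin M) → Equiv.Perm (Fin N) → Fin M → ℂ := fun μ σ k =>
    ∫ x in Set.Icc α β, φ (μ k) x * ψ (σ (Fin.castLE hMN k)) x * ξ x * g k x with hI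
  set C : Equiv.Perm (Fin N) → ℂ := fun σ =>
    ∏ j ∈ Finset.univ.filter (fun j : Fin N => ¬ (j : ℕ) < M), ψbar (σ j) j with hC
  have key : ∀ (μ : Equiv.Perm (Fin M)) (σ : Equiv.Perm (Fin N)) (k : Fin M),
      IntegrableOn (fun x => φ (μ k) x * ψ (σ (Fin.castLE hMN k)) x * ξ x * g k x)
        (Set.Icc α β) := by
    intro μ σ k
    have h0 := hIntg (Fin.castLE hMN (μ k)) (σ (Fin.castLE hMN k)) k
    have heq : (fun x => varsigma φ ξ (Fin.castLE hMN (μ k)) x *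
        ψ (σ (Fin.castLE hMN k)) x * g k x)
        = fun x => φ (μ k) x * ψ (σ (Fin.castLE hMN k)) x * ξ x * g k x := by
      funext x
      simp only [varsigma, Fin.coe_castLE, (μ k).isLt, dite_true, Fin.eta]
      ring
    rwa [heq] at h0
  have hLHS : (∫ x : Fin M → ℝ in Set.univ.pi fun _ : Fin M => Set.Icc α β,
      (PhiMat φ x).det * (PsiMat ψ ψbar x).det * ∏ k : Fin M, ξ (x k) * g k (x k))
      = ∑ μ : Equiv.Perm (Fin M), ∑ σ : Equiv.Perm (Fin N),
          ((Equiv.Perm.sign μ : ℤ) : ℂ) * ((Equiv.Perm.sign σ : ℤ) : ℂ) *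
            (∏ k : Fin M, I μ σ k) * C σ := by
    have hSm : MeasurableSet (Set.univ.pi fun _ : Fin M => Set.Icc α β) :=
      MeasurableSet.univ_pi (fun _ => measurableSet_Icc)
    rw [← integral_indicator hSm]
    have hfun : (Set.univ.pi fun _ : Fin M => Set.Icc α β).indicator
        (fun x => (PhiMat φ x).det * (PsiMat ψ ψbar x).det *
          ∏ k : Fin M, ξ (x k) * g k (x k))
        = fun x => ∑ μ : Equiv.Perm (Fin M), ∑ σ : Equiv.Perm (Fin N),
            ((Equiv.Perm.sign μ : ℤ) : ℂ) * ((Equiv.Perm.sign σ : ℤ) : ℂ) *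
              (∏ k : Fin M, (Set.Icc α β).indicator
                (fun t => φ (μ k) t * ψ (σ (Fin.castLE hMN k)) t * ξ t * g k t) (x k)) *
              C σ := by
      funext x
      by_cases hx : x ∈ Set.univ.pi fun _ : Fin M => Set.Icc α β
      · rw [Set.indicator_of_mem hx]
        have hxk : ∀ k : Fin M, x k ∈ Set.Icc α β := fun k => hx k (Set.mem_univ k)
        rw [Matrix.det_apply', Matrix.det_apply', Finset.sum_mul_sum, Finset.sum_mul]
        refine Finset.sum_congr rfl (fun μ _ => ?_)
        rw [Finset.sum_mul]
        refine Finset.sum_congr rfl (fun σ _ => ?_)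
        have hψsplit : ∏ j : Fin N, PsiMat ψ ψbar x (σ j) j
            = (∏ k : Fin M, ψ (σ (Fin.castLE hMN k)) (x k)) * C σ := by
          rw [← Finset.prod_filter_mul_prod_filter_not Finset.univ
            (fun j : Fin N => (j : ℕ) < M), prod_filter_lt hMN]
          congr 1
          · refine Finset.prod_congr rfl (fun k _ => ?_)
            simp [PsiMat, Fin.coe_castLE, k.isLt, Fin.eta]
          · refine Finset.prod_congr rfl (fun j hj => ?_)
            have hjM : ¬ (j : ℕ) < M := (Finset.mem_filter.mp hj).2
            simp [PsiMat, hjM]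
        have hind : ∏ k : Fin M, (Set.Icc α β).indicator
              (fun t => φ (μ k) t * ψ (σ (Fin.castLE hMN k)) t * ξ t * g k t) (x k)
            = (∏ k : Fin M, φ (μ k) (x k)) *
              (∏ k : Fin M, ψ (σ (Fin.castLE hMN k)) (x k)) *
              ∏ k : Fin M, ξ (x k) * g k (x k) := by
          rw [← Finset.prod_mul_distrib, ← Finset.prod_mul_distrib]
          refine Finset.prod_congr rfl (fun k _ => ?_)
          rw [Set.indicator_of_mem (hxk k)]
          ring
        rw [hψsplit, hind]
        simp only [PhiMat, Matrix.of_apply]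
        ring
      · rw [Set.indicator_of_notMem hx]
        rw [Set.mem_pi] at hx
        push_neg at hx
        obtain ⟨k0, -, hk0⟩ := hx
        symm
        refine Finset.sum_eq_zero (fun μ _ => Finset.sum_eq_zero (fun σ _ => ?_))
        rw [Finset.prod_eq_zero (Finset.mem_univ k0)
          (Set.indicator_of_notMem hk0 _)]
        ring
    rw [hfun]
    rw [integral_finset_sum _ (fun μ _ => ?_)]
    swap
    · refine integrable_finset_sum _ (fun σ _ => ?_)
      refine ((Integrable.fintype_prod (f := fun k : Fin M => (Set.Icc α β).indicator
        (fun t => φ (μ k) t * ψ (σ (Fin.castLE hMN k)) t * ξ t * g k t))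
        (fun k => ?_)).const_mul _).mul_const _
      exact (integrable_indicator_iff measurableSet_Icc).mpr (key μ σ k)
    refine Finset.sum_congr rfl (fun μ _ => ?_)
    rw [integral_finset_sum _ (fun σ _ => ?_)]
    swap
    · refine ((Integrable.fintype_prod (f := fun k : Fin M => (Set.Icc α β).indicator
        (fun t => φ (μ k) t * ψ (σ (Fin.castLE hMN k)) t * ξ t * g k t))
        (fun k => ?_)).const_mul _).mul_const _
      exact (integrable_indicator_iff measurableSet_Icc).mpr (key μ σ k)
    refine Finset.sum_congr rfl (fun σ _ => ?_)
    rw [integral_mul_const, integral_const_mul, volume_pi, integral_fintype_prod_eq_prod]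
    congr 1
    congr 1
    refine Finset.prod_congr rfl (fun k _ => ?_)
    rw [integral_indicator measurableSet_Icc]
  rw [hLHS]
  set A : Fin N → Fin N → Fin N → ℂ := fun i j k =>
    if hk : (k : ℕ) < M then
      if hi : (i : ℕ) < M then
        ∫ x in Set.Icc α β, φ ⟨i, hi⟩ x * ψ j x * ξ x * g ⟨k, hk⟩ x
      else ∫ x in Set.Icc α β, ψ j x * ξ x * g ⟨k, hk⟩ x
    else if (i : ℕ) < (k : ℕ) then 0 else ψbar j k with hA
  simp only [pseudoDet]
  have hvan : ∀ π ∈ (Finset.univ : Finset (Equiv.Perm (Fin N))),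
      π ∉ Finset.univ.image (extPerm hMN) →
      (∑ σ : Equiv.Perm (Fin N), ((Equiv.Perm.sign π : ℤ) : ℂ) *
        ((Equiv.Perm.sign σ : ℤ) : ℂ) * ∏ k : Fin N, A (π k) (σ k) k) = 0 := by
    intro π _ hπ
    have hnot : ¬ ∀ k : Fin N, ¬ (k : ℕ) < M → π k = k :=
      fun h => hπ (mem_image_extPerm hMN π h)
    have hex : ¬ ∀ k : Fin N, M ≤ (k : ℕ) → (k : ℕ) ≤ (π k : ℕ) := by
      intro h
      exact hnot (fun k hk => fix_tail π h k (not_lt.mp hk))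
    push_neg at hex
    obtain ⟨k1, hk1M, hk1⟩ := hex
    refine Finset.sum_eq_zero (fun σ _ => ?_)
    have h0 : ∏ k : Fin N, A (π k) (σ k) k = 0 :=
      Finset.prod_eq_zero (Finset.mem_univ k1) (by simp only [hA]; rw [dif_neg (not_lt.mpr hk1M), if_pos hk1])
    rw [h0]
    ring
  rw [← Finset.sum_subset (Finset.subset_univ _) hvan,
    Finset.sum_image (fun a _ b _ h => extPerm_injective hMN h)]
  refine Finset.sum_congr rfl (fun μ _ => Finset.sum_congr rfl (fun σ _ => ?_))
  rw [extPerm_sign]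
  have hsplit : ∏ k : Fin N, A (extPerm hMN μ k) (σ k) k
      = (∏ k : Fin M, I μ σ k) * C σ := by
    rw [← Finset.prod_filter_mul_prod_filter_not Finset.univ (fun k : Fin N => (k : ℕ) < M),
      prod_filter_lt hMN]
    congr 1
    · refine Finset.prod_congr rfl (fun k _ => ?_)
      rw [extPerm_lt]
      simp [hA, Fin.coe_castLE, k.isLt, (μ k).isLt, Fin.eta, hI]
    · refine Finset.prod_congr rfl (fun k hk => ?_)
      have hkM : ¬ (k : ℕ) < M := (Finset.mem_filter.mp hk).2
      rw [extPerm_ge hMN μ k hkM]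
      simp [hA, hkM]
  rw [hsplit]
  ring
end

section
/- Let n ≥ M ≥ 1 be integers. Then ∫_{x_1 ≥ x_2 ≥ ⋯ ≥ x_M ≥ 0} Π_{1≤i<j≤M} (x_i − x_j)^2 · Π_{i=1}^M x_i^{n−M} e^{−x_i} dx_1⋯dx_M = Π_{i=1}^M (n−i)! (M−i)!. (This is the normalizing constant of the joint eigenvalue density of a complex central uncorrelated Wishart matrix of dimension M with n degrees of freedom.) -/
open MeasureTheory


open Finset

-- factorial product identity
lemma fact_add_eq (a j : ℕ) :
    ((a + j).factorial : ℝ) = (a.factorial : ℝ) * ∏ t ∈ range j, ((a : ℝ) + t + 1) := by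
  induction j with
  | zero => simp
  | succ j ih =>
      rw [prod_range_succ, ← mul_assoc, ← ih]
      have : a + (j + 1) = (a + j) + 1 := by ring
      rw [this, Nat.factorial_succ]
      push_cast
      ring

lemma det_vandermonde_natCast (M : ℕ) :
    (Matrix.vandermonde (fun i : Fin M => (i : ℝ))).det
      = ∏ i : Fin M, ((i : ℕ).factorial : ℝ) := by
  cases M with
  | zero => simp [Matrix.det_isEmpty]
  | succ p =>
      rw [Matrix.det_vandermonde_id_eq_superFactorial]
      induction p with
      | zero => simp [Nat.superFactorial]
      | succ q ih =>
          rw [Fin.prod_univ_castSucc]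
          simp only [Fin.coe_castSucc] at *
          rw [← ih]
          simp [Nat.superFactorial]
          push_cast
          ring

lemma hankel_det (m M : ℕ) :
    (Matrix.of fun i j : Fin M => (((m + (i : ℕ) + (j : ℕ)).factorial : ℕ) : ℝ)).det
      = ∏ i : Fin M, (((i : ℕ).factorial : ℝ) * ((m + (i : ℕ)).factorial : ℝ)) := by
  -- polynomials
  set p : Fin M → Polynomial ℝ := fun j => ∏ t ∈ range (j : ℕ), (Polynomial.X + Polynomial.C ((t : ℝ) + 1)) with hp
  have hmonic : ∀ j, (p j).Monic := fun j =>
    Polynomial.monic_prod_of_monic _ _ fun t _ => Polynomial.monic_X_add_C _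
  have hdeg : ∀ j : Fin M, (p j).natDegree = (j : ℕ) := by
    intro j
    rw [hp]
    rw [Polynomial.natDegree_prod_of_monic _ _ fun t _ => Polynomial.monic_X_add_C _]
    simp only [Polynomial.natDegree_X_add_C, Finset.sum_const, Finset.card_range, smul_eq_mul, mul_one]
  have heval : ∀ (v : ℝ) (j : Fin M), (p j).eval v = ∏ t ∈ range (j : ℕ), (v + t + 1) := by
    intro v j
    rw [hp]
    simp [Polynomial.eval_prod, add_assoc]
  have key : ∀ i j : Fin M, (((m + (i : ℕ) + (j : ℕ)).factorial : ℕ) : ℝ)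
      = ((m + (i : ℕ)).factorial : ℝ) * (p j).eval (((m + (i : ℕ) : ℕ)) : ℝ) := by
    intro i j
    rw [heval, ← fact_add_eq (m + i) j]
  calc (Matrix.of fun i j : Fin M => (((m + (i : ℕ) + (j : ℕ)).factorial : ℕ) : ℝ)).det
      = (Matrix.of fun i j : Fin M =>
          ((m + (i : ℕ)).factorial : ℝ) * (Matrix.of (fun i j : Fin M => (p j).eval (((m + (i : ℕ) : ℕ)) : ℝ))) i j).det := by
        congr 1; ext i j; simpa using key i j
    _ = (∏ i : Fin M, ((m + (i : ℕ)).factorial : ℝ)) *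
          (Matrix.of (fun i j : Fin M => (p j).eval (((m + (i : ℕ) : ℕ)) : ℝ))).det :=
        Matrix.det_mul_column _ _
    _ = (∏ i : Fin M, ((m + (i : ℕ)).factorial : ℝ)) *
          (Matrix.vandermonde (fun i : Fin M => (((m + (i : ℕ) : ℕ)) : ℝ))).det := by
        rw [Matrix.det_eval_matrixOfPolynomials_eq_det_vandermonde _ _ hdeg hmonic]
    _ = ∏ i : Fin M, (((i : ℕ).factorial : ℝ) * ((m + (i : ℕ)).factorial : ℝ)) := by
        have : (fun i : Fin M => (((m + (i : ℕ) : ℕ)) : ℝ)) = fun i : Fin M => ((i : ℝ) + m) := by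
          funext i; push_cast; ring
        rw [this, Matrix.det_vandermonde_add, det_vandermonde_natCast]
        rw [Finset.prod_mul_distrib]
        ring

open Finset Equiv

lemma sum_perm_det {M : ℕ} (a : Matrix (Fin M) (Fin M) ℝ) :
    ∑ σ : Perm (Fin M), ∑ τ : Perm (Fin M),
      (((Perm.sign σ : ℤ) : ℝ) * ((Perm.sign τ : ℤ) : ℝ)) * ∏ i, a (σ i) (τ i)
      = (M.factorial : ℝ) * a.det := by
  have inner : ∀ σ : Perm (Fin M),
      ∑ τ : Perm (Fin M),
        (((Perm.sign σ : ℤ) : ℝ) * ((Perm.sign τ : ℤ) : ℝ)) * ∏ i, a (σ i) (τ i) = a.det := by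
    intro σ
    rw [← Equiv.sum_comp (Equiv.mulRight σ)]
    have : ∀ π : Perm (Fin M),
        (((Perm.sign σ : ℤ) : ℝ) * ((Perm.sign (π * σ) : ℤ) : ℝ)) * ∏ i, a (σ i) ((π * σ) i)
        = ((Perm.sign π : ℤ) : ℝ) * ∏ i, a i (π i) := by
      intro π
      have h1 : ∏ i, a (σ i) ((π * σ) i) = ∏ i, a i (π i) := by
        rw [← Equiv.prod_comp σ (fun i => a i (π i))]
        rfl
      have h2 : (((Perm.sign σ : ℤ) : ℝ) * ((Perm.sign (π * σ) : ℤ) : ℝ))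
          = ((Perm.sign π : ℤ) : ℝ) := by
        rw [Perm.sign_mul]
        rcases Int.units_eq_one_or (Perm.sign σ) with h | h <;>
          rcases Int.units_eq_one_or (Perm.sign π) with h' | h' <;>
            simp [h, h']
      rw [h1, h2]
    simp only [Equiv.coe_mulRight, this]
    rw [← Matrix.det_transpose a, Matrix.det_apply']
    exact Finset.sum_congr rfl fun π _ => by simp [Matrix.transpose_apply]
  rw [Finset.sum_congr rfl fun σ _ => inner σ, Finset.sum_const, Finset.card_univ]
  simp [Fintype.card_perm, mul_comm]

open Finset Equiv

noncomputable def Fint (m M : ℕ) (x : Fin M → ℝ) : ℝ :=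
  (Matrix.vandermonde x).det ^ 2 * ∏ i, x i ^ m * Real.exp (-x i)

lemma integrand_eq_Fint (m M : ℕ) (x : Fin M → ℝ) :
    (∏ i : Fin M, ∏ j ∈ Finset.Ioi i, (x i - x j) ^ 2) *
      ∏ i : Fin M, x i ^ m * Real.exp (-x i) = Fint m M x := by
  unfold Fint
  congr 1
  rw [Matrix.det_vandermonde, ← Finset.prod_pow]
  refine Finset.prod_congr rfl fun i _ => ?_
  rw [← Finset.prod_pow]
  exact Finset.prod_congr rfl fun j _ => by ring

lemma vandermonde_det_expand {M : ℕ} (x : Fin M → ℝ) :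
    (Matrix.vandermonde x).det
      = ∑ σ : Perm (Fin M), ((Perm.sign σ : ℤ) : ℝ) * ∏ i, x i ^ (σ i : ℕ) := by
  rw [← Matrix.det_transpose, Matrix.det_apply']
  exact Finset.sum_congr rfl fun σ _ => by simp [Matrix.transpose_apply, Matrix.vandermonde]

lemma Fint_eq_sum (m M : ℕ) (x : Fin M → ℝ) :
    Fint m M x = ∑ σ : Perm (Fin M), ∑ τ : Perm (Fin M),
      (((Perm.sign σ : ℤ) : ℝ) * ((Perm.sign τ : ℤ) : ℝ)) *
        ∏ i, (x i ^ (m + (σ i : ℕ) + (τ i : ℕ)) * Real.exp (-x i)) := by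
  unfold Fint
  rw [vandermonde_det_expand, sq, Finset.sum_mul_sum, Finset.sum_mul]
  refine Finset.sum_congr rfl fun σ _ => ?_
  rw [Finset.sum_mul]
  refine Finset.sum_congr rfl fun τ _ => ?_
  rw [mul_mul_mul_comm, mul_assoc, ← Finset.prod_mul_distrib, ← Finset.prod_mul_distrib]
  congr 1
  refine Finset.prod_congr rfl fun i _ => ?_
  rw [pow_add, pow_add]
  ring

lemma Fint_comp_perm {m M : ℕ} (σ : Perm (Fin M)) (x : Fin M → ℝ) :
    Fint m M (x ∘ σ) = Fint m M x := by
  unfold Fint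
  have h1 : (Matrix.vandermonde (x ∘ σ)).det = Perm.sign σ • (Matrix.vandermonde x).det := by
    have : Matrix.vandermonde (x ∘ σ) = (Matrix.vandermonde x).submatrix σ id := rfl
    rw [this, Matrix.det_permute, Units.smul_def, zsmul_eq_mul]
  have h2 : ((Perm.sign σ • (Matrix.vandermonde x).det) : ℝ) ^ 2
      = (Matrix.vandermonde x).det ^ 2 := by
    rcases Int.units_eq_one_or (Perm.sign σ) with h | h <;> simp [h]
  rw [h1, h2]
  congr 1
  exact Equiv.prod_comp σ (fun i => x i ^ m * Real.exp (-x i))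

open Finset MeasureTheory Set

lemma integrableOn_pow_exp (k : ℕ) :
    IntegrableOn (fun t : ℝ => t ^ k * Real.exp (-t)) (Set.Ici 0) := by
  rw [integrableOn_Ici_iff_integrableOn_Ioi]
  have h := Real.GammaIntegral_convergent (s := (k : ℝ) + 1) (by positivity)
  refine h.congr_fun (fun t ht => ?_) measurableSet_Ioi
  simp only [add_sub_cancel_right, Real.rpow_natCast]
  ring

lemma integral_pow_exp (k : ℕ) :
    ∫ t in Set.Ici (0 : ℝ), t ^ k * Real.exp (-t) = k.factorial := by
  rw [MeasureTheory.integral_Ici_eq_integral_Ioi]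
  have h := Real.Gamma_eq_integral (s := (k : ℝ) + 1) (by positivity)
  rw [Real.Gamma_nat_eq_factorial] at h
  rw [h]
  refine setIntegral_congr_fun measurableSet_Ioi (fun t ht => ?_)
  simp only [add_sub_cancel_right, Real.rpow_natCast]
  ring

def orthant (M : ℕ) : Set (Fin M → ℝ) := {x | ∀ i, 0 ≤ x i}

lemma orthant_eq (M : ℕ) : orthant M = Set.pi Set.univ (fun _ : Fin M => Set.Ici (0:ℝ)) := by
  ext x; simp [orthant, Pi.le_def]

lemma measurableSet_orthant (M : ℕ) : MeasurableSet (orthant M) := by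
  rw [orthant_eq]
  exact MeasurableSet.univ_pi fun i => measurableSet_Ici

lemma indicator_orthant_prod (M : ℕ) (g : Fin M → ℝ → ℝ) :
    (orthant M).indicator (fun x : Fin M → ℝ => ∏ i, g i (x i))
      = fun x : Fin M → ℝ => ∏ i, (Set.Ici (0:ℝ)).indicator (g i) (x i) := by
  funext x
  by_cases hx : x ∈ orthant M
  · rw [Set.indicator_of_mem hx]
    exact (Finset.prod_congr rfl fun i _ => (Set.indicator_of_mem (hx i) _).symm)
  · rw [Set.indicator_of_notMem hx]
    obtain ⟨i, hi⟩ : ∃ i, ¬ (0 ≤ x i) := by simpa [orthant] using hx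
    have hni : x i ∉ Set.Ici (0:ℝ) := by simpa using hi
    exact (Finset.prod_eq_zero (Finset.mem_univ i)
      (Set.indicator_of_notMem hni _)).symm

lemma integrableOn_prod_orthant {M : ℕ} (k : Fin M → ℕ) :
    IntegrableOn (fun x : Fin M → ℝ => ∏ i, (x i ^ k i * Real.exp (-x i))) (orthant M) := by
  refine (integrable_indicator_iff (measurableSet_orthant M)).1 ?_
  rw [indicator_orthant_prod M (fun i t => t ^ k i * Real.exp (-t))]
  exact Integrable.fintype_prod (fun i =>
    (integrable_indicator_iff measurableSet_Ici).2 (integrableOn_pow_exp (k i)))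

lemma integral_prod_orthant {M : ℕ} (k : Fin M → ℕ) :
    ∫ x in orthant M, ∏ i, (x i ^ k i * Real.exp (-x i))
      = ∏ i, ((k i).factorial : ℝ) := by
  rw [← integral_indicator (measurableSet_orthant M)]
  rw [indicator_orthant_prod M (fun i t => t ^ k i * Real.exp (-t))]
  rw [MeasureTheory.integral_fintype_prod_volume_eq_prod
    (f := fun i t => (Set.Ici (0:ℝ)).indicator (fun s => s ^ k i * Real.exp (-s)) t)]
  refine Finset.prod_congr rfl fun i _ => ?_
  rw [integral_indicator measurableSet_Ici]
  exact integral_pow_exp (k i)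

open Finset Equiv Set

def cone (M : ℕ) : Set (Fin M → ℝ) :=
  {x | (∀ i j : Fin M, i ≤ j → x j ≤ x i) ∧ ∀ i : Fin M, 0 ≤ x i}

lemma measurableSet_cone (M : ℕ) : MeasurableSet (cone M) := by
  have : cone M = (⋂ i : Fin M, ⋂ j : Fin M, ⋂ _ : i ≤ j, {x : Fin M → ℝ | x j ≤ x i}) ∩
      (⋂ i : Fin M, {x : Fin M → ℝ | 0 ≤ x i}) := by
    ext x; simp [cone, forall_and]
  rw [this]
  refine MeasurableSet.inter ?_ ?_
  · exact MeasurableSet.iInter fun i => MeasurableSet.iInter fun j =>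
      MeasurableSet.iInter fun _ => measurableSet_le (measurable_pi_apply j) (measurable_pi_apply i)
  · exact MeasurableSet.iInter fun i =>
      measurableSet_le measurable_const (measurable_pi_apply i)

lemma measurable_comp_perm {M : ℕ} (σ : Perm (Fin M)) :
    Measurable (fun x : Fin M → ℝ => x ∘ σ) :=
  measurable_pi_lambda _ fun i => measurable_pi_apply (σ i)

lemma setIntegral_permSet (m M : ℕ) (σ : Perm (Fin M)) :
    ∫ x in {y : Fin M → ℝ | y ∘ σ ∈ cone M}, Fint m M x = ∫ x in cone M, Fint m M x := by
  set e := MeasurableEquiv.piCongrLeft (fun _ : Fin M => ℝ) (σ⁻¹ : Perm (Fin M)) with he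
  have hEx : ∀ x : Fin M → ℝ, e x = x ∘ σ := by
    intro x
    funext j
    have h0 := Equiv.piCongrLeft_apply_apply (fun _ : Fin M => ℝ)
      ((σ⁻¹ : Perm (Fin M)) : Fin M ≃ Fin M) x (σ j)
    rw [show (σ⁻¹ : Perm (Fin M)) (σ j) = j from σ.symm_apply_apply j] at h0
    exact h0
  have hmp : MeasurePreserving e volume volume :=
    volume_measurePreserving_piCongrLeft (fun _ : Fin M => ℝ) _
  have h := hmp.setIntegral_preimage_emb (MeasurableEquiv.measurableEmbedding e)
    (Fint m M) (cone M)
  have hset : e ⁻¹' (cone M) = {y : Fin M → ℝ | y ∘ σ ∈ cone M} := by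
    ext x; simp only [Set.mem_preimage, Set.mem_setOf_eq, hEx]
  rw [hset] at h
  rw [← h]
  refine setIntegral_congr_fun ?_ (fun x _ => ?_)
  · exact measurable_comp_perm σ (measurableSet_cone M)
  · rw [hEx, Fint_comp_perm]

lemma sort_unique {M : ℕ} {x : Fin M → ℝ} (hinj : Function.Injective x)
    {σ τ : Perm (Fin M)}
    (hσ : ∀ i j : Fin M, i ≤ j → x (σ j) ≤ x (σ i))
    (hτ : ∀ i j : Fin M, i ≤ j → x (τ j) ≤ x (τ i)) : σ = τ := by
  have key : ∀ ρ : Perm (Fin M), (∀ i j : Fin M, i ≤ j → x (ρ j) ≤ x (ρ i)) →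
      ρ = Tuple.sort (fun i => -x i) := by
    intro ρ hρ
    rw [Tuple.eq_sort_iff]
    constructor
    · intro i j hij
      simp only [Function.comp_apply, neg_le_neg_iff]
      exact hρ i j hij
    · intro i j hij hfij
      have : x (ρ i) = x (ρ j) := by
        have := neg_injective hfij
        exact this
      exact absurd (ρ.injective (hinj this)) hij.ne
  rw [key σ hσ, key τ hτ]

lemma permSet_subset_orthant {M : ℕ} (σ : Perm (Fin M)) :
    {y : Fin M → ℝ | y ∘ σ ∈ cone M} ⊆ orthant M := by
  intro x hx i
  have := hx.2 (σ⁻¹ i)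
  simpa using this

lemma sum_indicator_eq (m M : ℕ) (x : Fin M → ℝ) :
    ∑ σ : Perm (Fin M), ({y : Fin M → ℝ | y ∘ σ ∈ cone M}).indicator (Fint m M) x
      = (orthant M).indicator (Fint m M) x := by
  by_cases hx : x ∈ orthant M
  · rw [Set.indicator_of_mem hx]
    by_cases hF : Fint m M x = 0
    · rw [hF]
      refine Finset.sum_eq_zero fun σ _ => ?_
      by_cases hσ : x ∈ {y : Fin M → ℝ | y ∘ σ ∈ cone M}
      · rw [Set.indicator_of_mem hσ, hF]
      · rw [Set.indicator_of_notMem hσ]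
    · have hinj : Function.Injective x := by
        intro i j hij
        by_contra hne
        apply hF
        have hdet : (Matrix.vandermonde x).det = 0 :=
          Matrix.det_vandermonde_eq_zero_iff.2 ⟨i, j, hij, hne⟩
        unfold Fint
        rw [hdet]
        ring
      set σ₀ := Tuple.sort (fun i => -x i) with hσ₀
      have hmem : x ∈ {y : Fin M → ℝ | y ∘ σ₀ ∈ cone M} := by
        refine ⟨fun i j hij => ?_, fun i => hx _⟩
        have hmono := Tuple.monotone_sort (fun i => -x i) hij
        simpa using hmono
      rw [Finset.sum_eq_single σ₀]
      · rw [Set.indicator_of_mem hmem]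
      · intro σ _ hne
        rw [Set.indicator_of_notMem]
        intro hσ
        exact hne (sort_unique hinj (fun i j hij => hσ.1 i j hij)
          (fun i j hij => hmem.1 i j hij))
      · intro h
        exact absurd (Finset.mem_univ σ₀) h
  · rw [Set.indicator_of_notMem hx]
    refine Finset.sum_eq_zero fun σ _ => ?_
    rw [Set.indicator_of_notMem fun hσ => hx (permSet_subset_orthant σ hσ)]

lemma integrableOn_Fint (m M : ℕ) : IntegrableOn (Fint m M) (orthant M) := by
  have hfe : Fint m M = fun x => ∑ σ : Perm (Fin M), ∑ τ : Perm (Fin M),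
      (((Perm.sign σ : ℤ) : ℝ) * ((Perm.sign τ : ℤ) : ℝ)) *
        ∏ i, (x i ^ (m + (σ i : ℕ) + (τ i : ℕ)) * Real.exp (-x i)) :=
    funext fun x => Fint_eq_sum m M x
  rw [hfe]
  refine integrable_finset_sum _ fun σ _ => integrable_finset_sum _ fun τ _ => ?_
  exact (integrableOn_prod_orthant (fun i => m + (σ i : ℕ) + (τ i : ℕ))).const_mul _

lemma orthant_int_eq_card_mul (m M : ℕ) :
    ∫ x in orthant M, Fint m M x = (M.factorial : ℝ) * ∫ x in cone M, Fint m M x := by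
  have hms : ∀ σ : Perm (Fin M), MeasurableSet {y : Fin M → ℝ | y ∘ σ ∈ cone M} :=
    fun σ => measurable_comp_perm σ (measurableSet_cone M)
  rw [← integral_indicator (measurableSet_orthant M)]
  have hpt : (orthant M).indicator (Fint m M)
      = fun x => ∑ σ : Perm (Fin M),
          ({y : Fin M → ℝ | y ∘ σ ∈ cone M}).indicator (Fint m M) x :=
    funext fun x => (sum_indicator_eq m M x).symm
  rw [hpt, integral_finset_sum _ fun σ _ =>
    (integrable_indicator_iff (hms σ)).2
      ((integrableOn_Fint m M).mono_set (permSet_subset_orthant σ))]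
  have : ∀ σ : Perm (Fin M),
      ∫ x, ({y : Fin M → ℝ | y ∘ σ ∈ cone M}).indicator (Fint m M) x
        = ∫ x in cone M, Fint m M x := by
    intro σ
    rw [integral_indicator (hms σ)]
    exact setIntegral_permSet m M σ
  rw [Finset.sum_congr rfl fun σ _ => this σ, Finset.sum_const, Finset.card_univ,
    Fintype.card_perm, Fintype.card_fin, nsmul_eq_mul]

set_option maxHeartbeats 1000000 in
lemma orthant_int_eq_det (m M : ℕ) :
    ∫ x in orthant M, Fint m M x
      = (M.factorial : ℝ) * ∏ i : Fin M,
          (((i : ℕ).factorial : ℝ) * ((m + (i : ℕ)).factorial : ℝ)) := by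
  have hfe : ∀ x ∈ orthant M, Fint m M x = ∑ σ : Perm (Fin M), ∑ τ : Perm (Fin M),
      (((Perm.sign σ : ℤ) : ℝ) * ((Perm.sign τ : ℤ) : ℝ)) *
        ∏ i, (x i ^ (m + (σ i : ℕ) + (τ i : ℕ)) * Real.exp (-x i)) :=
    fun x _ => Fint_eq_sum m M x
  rw [setIntegral_congr_fun (measurableSet_orthant M) hfe]
  rw [integral_finset_sum _ fun σ _ => integrable_finset_sum _ fun τ _ =>
    (integrableOn_prod_orthant (fun i => m + (σ i : ℕ) + (τ i : ℕ))).const_mul _]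
  have h1 : ∀ σ : Perm (Fin M),
      ∫ x in orthant M, ∑ τ : Perm (Fin M),
        (((Perm.sign σ : ℤ) : ℝ) * ((Perm.sign τ : ℤ) : ℝ)) *
          ∏ i, (x i ^ (m + (σ i : ℕ) + (τ i : ℕ)) * Real.exp (-x i))
      = ∑ τ : Perm (Fin M),
          (((Perm.sign σ : ℤ) : ℝ) * ((Perm.sign τ : ℤ) : ℝ)) *
            ∏ i, (((m + (σ i : ℕ) + (τ i : ℕ)).factorial : ℕ) : ℝ) := by
    intro σ
    rw [integral_finset_sum _ fun τ _ =>
      (integrableOn_prod_orthant (fun i => m + (σ i : ℕ) + (τ i : ℕ))).const_mul _]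
    refine Finset.sum_congr rfl fun τ _ => ?_
    rw [integral_const_mul, integral_prod_orthant]
  rw [Finset.sum_congr rfl fun σ _ => h1 σ]
  have hsum := sum_perm_det
    (Matrix.of fun i j : Fin M => (((m + (i : ℕ) + (j : ℕ)).factorial : ℕ) : ℝ))
  simp only [Matrix.of_apply] at hsum
  rw [hsum, hankel_det]

/-- Normalizing constant of the joint eigenvalue density of a complex central
uncorrelated Wishart matrix: the integral of the squared Vandermonde determinant
times `Π_i x_i^{n-M} e^{-x_i}` over the ordered cone `x_1 ≥ ⋯ ≥ x_M ≥ 0`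
equals `Π_{i=1}^M (n-i)! (M-i)!`. -/
theorem stmt_11 {M n : ℕ} (hM : 1 ≤ M) (hMn : M ≤ n) :
    (∫ x : Fin M → ℝ in
        {x | (∀ i j : Fin M, i ≤ j → x j ≤ x i) ∧ ∀ i : Fin M, 0 ≤ x i},
      (∏ i : Fin M, ∏ j ∈ Finset.Ioi i, (x i - x j) ^ 2) *
        ∏ i : Fin M, x i ^ (n - M) * Real.exp (-x i))
    = ∏ i : Fin M,
        (((n - ((i : ℕ) + 1)).factorial * (M - ((i : ℕ) + 1)).factorial : ℕ) : ℝ) := by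
  set m := n - M with hm
  have hcone : ∫ x in cone M, Fint m M x
      = ∏ i : Fin M, (((i : ℕ).factorial : ℝ) * ((m + (i : ℕ)).factorial : ℝ)) := by
    have h := (orthant_int_eq_card_mul m M).symm.trans (orthant_int_eq_det m M)
    exact mul_left_cancel₀ (by exact_mod_cast Nat.factorial_ne_zero M) h
  have hset : {x : Fin M → ℝ | (∀ i j : Fin M, i ≤ j → x j ≤ x i) ∧ ∀ i : Fin M, 0 ≤ x i}
      = cone M := rfl
  have hfun : (fun x : Fin M → ℝ =>
      (∏ i : Fin M, ∏ j ∈ Finset.Ioi i, (x i - x j) ^ 2) *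
        ∏ i : Fin M, x i ^ m * Real.exp (-x i)) = Fint m M :=
    funext fun x => integrand_eq_Fint m M x
  rw [hset, hfun, hcone]
  have hR : ∀ i : Fin M,
      ((((n - ((Fin.rev i : ℕ) + 1)).factorial * (M - ((Fin.rev i : ℕ) + 1)).factorial : ℕ)) : ℝ)
        = ((i : ℕ).factorial : ℝ) * ((m + (i : ℕ)).factorial : ℝ) := by
    intro i
    have hi := i.isLt
    have h1 : n - ((Fin.rev i : ℕ) + 1) = m + (i : ℕ) := by
      rw [Fin.val_rev, hm]; omega
    have h2 : M - ((Fin.rev i : ℕ) + 1) = (i : ℕ) := by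
      rw [Fin.val_rev]; omega
    rw [h1, h2]; push_cast; ring
  rw [← Equiv.prod_comp Fin.revPerm (fun i : Fin M =>
    (((n - ((i : ℕ) + 1)).factorial * (M - ((i : ℕ) + 1)).factorial : ℕ) : ℝ))]
  exact Finset.prod_congr rfl fun i _ => (hR i).symm
end

section
/- Let M ≥ 1 be an integer. Then ∫_{x_1 ≥ x_2 ≥ ⋯ ≥ x_M, x ∈ ℝ^M} Π_{1≤i<j≤M} (x_i − x_j)^2 · Π_{i=1}^M e^{−x_i^2} dx_1⋯dx_M = 2^{−M(M−1)/2} · π^{M/2} · Π_{i=1}^M (i−1)!. (This is the normalizing constant of the joint eigenvalue density of the Gaussian unitary ensemble: the GUE consists of complex Hermitian M×M random matrices with i.i.d. complex Gaussian entries of variance 1/2 above the diagonal and real Gaussian entries of variance 1/2 on the diagonal, whose ordered eigenvalues have joint density proportional to Π_{i<j}(x_i − x_j)^2 Π_i e^{−x_i^2}.) -/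
open MeasureTheory Polynomial Real

namespace GUEaux

/-- Real Hermite polynomial (probabilists'). -/
noncomputable def Hp (n : ℕ) : ℝ[X] := (hermite n).map (Int.castRingHom ℝ)

lemma Hp_monic (n : ℕ) : (Hp n).Monic := (hermite_monic n).map _

lemma Hp_natDegree (n : ℕ) : (Hp n).natDegree = n := by
  rw [Hp, (hermite_monic n).natDegree_map, natDegree_hermite]

lemma Hp_succ (n : ℕ) : Hp (n + 1) = X * Hp n - derivative (Hp n) := by
  rw [Hp, hermite_succ]
  simp [Polynomial.derivative_map, Hp]

lemma Hp_zero : Hp 0 = 1 := by simp [Hp, hermite_zero]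

lemma derivative_Hp : ∀ n : ℕ, derivative (Hp n) = (n : ℝ[X]) * Hp (n - 1) := by
  intro n
  induction n using Nat.strong_induction_on with
  | _ n ih =>
    match n with
    | 0 => simp [Hp_zero]
    | 1 => simp [Hp, hermite_one, Hp_zero]
    | (n + 2) =>
      have h1 := ih (n + 1) (by omega)
      have h0 := ih n (by omega)
      rw [show n + 1 - 1 = n from rfl] at h1
      rw [show n + 2 - 1 = n + 1 from rfl]
      rw [Hp_succ (n+1), derivative_sub, derivative_mul, derivative_X, one_mul, h1,
        derivative_mul]
      simp only [Polynomial.derivative_natCast, zero_mul, zero_add]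
      rw [h0]
      have hs : Hp (n + 1) = X * Hp n - (n : ℝ[X]) * Hp (n - 1) := by
        rw [Hp_succ n, h0]
      rw [hs]
      push_cast
      ring

/-- The Gaussian weight `e^{-x²/2}`. -/
noncomputable def G : ℝ → ℝ := fun x => Real.exp (-2⁻¹ * x ^ 2)

lemma G_pos (x : ℝ) : 0 < G x := Real.exp_pos _

lemma integrable_poly_G (p : ℝ[X]) : Integrable fun x : ℝ => p.eval x * G x := by
  induction p using Polynomial.induction_on' with
  | add p q hp hq =>
    simpa [add_mul, Pi.add_def] using hp.add hq
  | monomial n a =>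
    have h := integrable_rpow_mul_exp_neg_mul_sq (b := 2⁻¹) (by norm_num)
      (s := (n : ℝ)) (by exact neg_one_lt_zero.trans_le (Nat.cast_nonneg n))
    have h' : Integrable fun x : ℝ => x ^ n * Real.exp (-2⁻¹ * x ^ 2) := by
      simpa [Real.rpow_natCast] using h
    simpa [Polynomial.eval_monomial, mul_assoc, G] using h'.const_mul a

lemma hasDerivAt_G (x : ℝ) : HasDerivAt G (-x * G x) x := by
  have h : HasDerivAt (fun x : ℝ => -2⁻¹ * x ^ 2) (-x) x := by
    have := (hasDerivAt_pow 2 x).const_mul (-2⁻¹ : ℝ)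
    simpa using this.congr_deriv (by ring)
  have := h.exp
  simp only [G]
  convert this using 1
  · rfl
  ring

lemma hasDerivAt_HpG (n : ℕ) (x : ℝ) :
    HasDerivAt (fun y => (Hp n).eval y * G y) (-((Hp (n+1)).eval x * G x)) x := by
  have h := ((Hp n).hasDerivAt x).mul (hasDerivAt_G x)
  have : (derivative (Hp n)).eval x * G x + (Hp n).eval x * (-x * G x)
      = -((Hp (n+1)).eval x * G x) := by
    rw [Hp_succ n]
    simp only [Polynomial.eval_sub, Polynomial.eval_mul, Polynomial.eval_X]
    ring
  rw [← this]
  exact h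

/-- The key integration-by-parts step. -/
lemma key_step (m n : ℕ) :
    ∫ x : ℝ, (Hp m).eval x * (Hp (n+1)).eval x * G x
      = m * ∫ x : ℝ, (Hp (m-1)).eval x * (Hp n).eval x * G x := by
  have hu : ∀ x : ℝ, HasDerivAt (fun y => (Hp m).eval y)
      ((derivative (Hp m)).eval x) x := fun x => (Hp m).hasDerivAt x
  have hv : ∀ x : ℝ, HasDerivAt (fun y => (Hp n).eval y * G y)
      (-((Hp (n+1)).eval x * G x)) x := fun x => hasDerivAt_HpG n x
  have huv' : Integrable (fun x : ℝ => (Hp m).eval x * -((Hp (n+1)).eval x * G x)) := by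
    have := (integrable_poly_G (Hp m * Hp (n+1))).neg
    apply this.congr
    filter_upwards with x
    simp only [Pi.neg_apply, Polynomial.eval_mul]
    ring
  have hu'v : Integrable (fun x : ℝ => (derivative (Hp m)).eval x * ((Hp n).eval x * G x)) := by
    have := integrable_poly_G (derivative (Hp m) * Hp n)
    apply this.congr
    filter_upwards with x
    simp only [Pi.neg_apply, Polynomial.eval_mul]
    ring
  have huv : Integrable (fun x : ℝ => (Hp m).eval x * ((Hp n).eval x * G x)) := by
    have := integrable_poly_G (Hp m * Hp n)
    apply this.congr
    filter_upwards with x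
    simp only [Pi.neg_apply, Polynomial.eval_mul]
    ring
  have key := integral_mul_deriv_eq_deriv_mul_of_integrable (fun x _ => hu x) (fun x _ => hv x) huv' hu'v huv
  have e1 : ∫ x : ℝ, (Hp m).eval x * -((Hp (n+1)).eval x * G x)
      = -∫ x : ℝ, (Hp m).eval x * (Hp (n+1)).eval x * G x := by
    rw [← integral_neg]
    congr 1; funext x; ring
  have e2 : ∫ x : ℝ, (derivative (Hp m)).eval x * ((Hp n).eval x * G x)
      = m * ∫ x : ℝ, (Hp (m-1)).eval x * (Hp n).eval x * G x := by
    rw [← integral_const_mul]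
    congr 1; funext x
    rw [derivative_Hp m]
    simp only [Polynomial.eval_mul, Polynomial.eval_natCast]
    ring
  rw [e1, e2] at key
  linarith [key]

lemma integral_Hp_G (m : ℕ) :
    ∫ x : ℝ, (Hp m).eval x * G x = if m = 0 then Real.sqrt (2 * π) else 0 := by
  match m with
  | 0 =>
    simp only [Hp_zero, Polynomial.eval_one, one_mul, if_pos rfl]
    have := integral_gaussian 2⁻¹
    rw [show π / 2⁻¹ = 2 * π by ring] at this
    simpa [G] using this
  | (k + 1) =>
    have h := key_step 0 k
    simp only [Nat.cast_zero, zero_mul] at h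
    rw [if_neg (Nat.succ_ne_zero k)]
    rw [← h]
    congr 1; funext x
    simp [Hp_zero]

lemma orth (n : ℕ) : ∀ m : ℕ,
    ∫ x : ℝ, (Hp m).eval x * (Hp n).eval x * G x
      = if m = n then (m.factorial : ℝ) * Real.sqrt (2 * π) else 0 := by
  induction n with
  | zero =>
    intro m
    have h := integral_Hp_G m
    have e : ∫ x : ℝ, (Hp m).eval x * (Hp 0).eval x * G x
        = ∫ x : ℝ, (Hp m).eval x * G x := by
      congr 1; funext x; simp [Hp_zero]
    rw [e, h]
    by_cases hm : m = 0
    · subst hm; simp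
    · simp [hm]
  | succ n ih =>
    intro m
    rw [key_step m n, ih (m - 1)]
    match m with
    | 0 => simp
    | (k + 1) =>
      simp only [Nat.add_sub_cancel, Nat.cast_add, Nat.cast_one, Nat.add_right_cancel_iff]
      by_cases h : k = n
      · subst h
        rw [if_pos rfl, if_pos rfl, Nat.factorial_succ]
        push_cast
        ring
      · rw [if_neg h, if_neg h, mul_zero]

/-- Rescaled Hermite polynomials, orthogonal w.r.t. `e^{-x²}`. -/
noncomputable def Hs (n : ℕ) : ℝ[X] := (Hp n).comp (C (Real.sqrt 2) * X)

lemma Hs_eval (n : ℕ) (x : ℝ) : (Hs n).eval x = (Hp n).eval (Real.sqrt 2 * x) := by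
  simp [Hs, Polynomial.eval_comp]

lemma sqrt2_ne : (Real.sqrt 2 : ℝ) ≠ 0 := by positivity

lemma Hs_natDegree (n : ℕ) : (Hs n).natDegree = n := by
  rw [Hs, Polynomial.natDegree_comp, Hp_natDegree, Polynomial.natDegree_C_mul_X _ sqrt2_ne,
    mul_one]

lemma Hs_leadingCoeff (n : ℕ) : (Hs n).leadingCoeff = Real.sqrt 2 ^ n := by
  rw [Hs, Polynomial.leadingCoeff_comp (by rw [Polynomial.natDegree_C_mul_X _ sqrt2_ne]; omega),
    (Hp_monic n).leadingCoeff, one_mul, Hp_natDegree]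
  congr 1
  rw [Polynomial.leadingCoeff, Polynomial.natDegree_C_mul_X _ sqrt2_ne]
  simp

lemma integrable_poly_w (p : ℝ[X]) : Integrable fun x : ℝ => p.eval x * Real.exp (-x ^ 2) := by
  induction p using Polynomial.induction_on' with
  | add p q hp hq => simpa [add_mul, Pi.add_def] using hp.add hq
  | monomial n a =>
    have h := integrable_rpow_mul_exp_neg_mul_sq (b := 1) (by norm_num)
      (s := (n : ℝ)) (by exact neg_one_lt_zero.trans_le (Nat.cast_nonneg n))
    have h' : Integrable fun x : ℝ => x ^ n * Real.exp (-x ^ 2) := by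
      simpa [Real.rpow_natCast] using h
    simpa [Polynomial.eval_monomial, mul_assoc] using h'.const_mul a

lemma G_sqrt2 (x : ℝ) : G (Real.sqrt 2 * x) = Real.exp (-x ^ 2) := by
  rw [G, mul_pow, Real.sq_sqrt (by norm_num : (0:ℝ) ≤ 2)]
  ring_nf

lemma orth_s (m n : ℕ) :
    ∫ x : ℝ, (Hs m).eval x * (Hs n).eval x * Real.exp (-x ^ 2)
      = if m = n then (m.factorial : ℝ) * Real.sqrt π else 0 := by
  have key : (∫ x : ℝ, (Hs m).eval x * (Hs n).eval x * Real.exp (-x ^ 2))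
      = |((Real.sqrt 2)⁻¹ : ℝ)| • ∫ x : ℝ, (Hp m).eval x * (Hp n).eval x * G x := by
    rw [← MeasureTheory.Measure.integral_comp_mul_left
      (fun y => (Hp m).eval y * (Hp n).eval y * G y) (Real.sqrt 2)]
    congr 1; funext x
    rw [Hs_eval, Hs_eval, G_sqrt2]
  rw [key, orth]
  rw [abs_of_pos (by positivity), smul_eq_mul]
  by_cases h : m = n
  · rw [if_pos h, if_pos h]
    rw [show (2:ℝ) * π = 2 * π from rfl, Real.sqrt_mul (by norm_num) π]
    field_simp
  · rw [if_neg h, if_neg h, mul_zero]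

section Expansion

variable {M : ℕ}

/-- The matrix of rescaled Hermite polynomials evaluated at the points `x`. -/
noncomputable def Amat (x : Fin M → ℝ) : Matrix (Fin M) (Fin M) ℝ :=
  Matrix.of fun i j => (Hs (i : ℕ)).eval (x j)

/-- The symmetrized integrand. -/
noncomputable def T (x : Fin M → ℝ) : ℝ :=
  (Amat x).det ^ 2 * ∏ i, Real.exp (-(x i ^ 2))

lemma det_Amat (x : Fin M → ℝ) :
    (Amat x).det = (∏ j : Fin M, Real.sqrt 2 ^ (j : ℕ)) *
      ∏ i : Fin M, ∏ j ∈ Finset.Ioi i, (x j - x i) := by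
  classical
  have hdeg : ∀ j : Fin M, (C ((Real.sqrt 2)⁻¹ ^ (j : ℕ)) * Hs (j : ℕ)).natDegree = (j : ℕ) := by
    intro j
    rw [Polynomial.natDegree_C_mul (by positivity), Hs_natDegree]
  have hmonic : ∀ j : Fin M, (C ((Real.sqrt 2)⁻¹ ^ (j : ℕ)) * Hs (j : ℕ)).Monic := by
    intro j
    have : (C ((Real.sqrt 2)⁻¹ ^ (j : ℕ)) * Hs (j : ℕ)).leadingCoeff = 1 := by
      rw [Polynomial.leadingCoeff_mul, Polynomial.leadingCoeff_C, Hs_leadingCoeff]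
      rw [inv_pow]
      exact inv_mul_cancel₀ (by positivity)
    exact this
  have key := Matrix.det_eval_matrixOfPolynomials_eq_det_vandermonde x
    (fun j : Fin M => C ((Real.sqrt 2)⁻¹ ^ (j : ℕ)) * Hs (j : ℕ)) hdeg hmonic
  have expand : (Matrix.of fun i j : Fin M =>
      ((C ((Real.sqrt 2)⁻¹ ^ (j : ℕ)) * Hs (j : ℕ)).eval (x i))).det
      = (∏ j : Fin M, (Real.sqrt 2)⁻¹ ^ (j : ℕ)) *
        (Matrix.of fun i j : Fin M => (Hs (j : ℕ)).eval (x i)).det := by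
    rw [← Matrix.det_mul_row (fun j : Fin M => (Real.sqrt 2)⁻¹ ^ (j : ℕ))]
    congr 1
    ext i j
    simp [Matrix.of_apply]
  rw [expand] at key
  have hAT : (Amat x).det = (Matrix.of fun i j : Fin M => (Hs (j:ℕ)).eval (x i)).det := by
    rw [← Matrix.det_transpose]
    congr 1
  rw [hAT]
  rw [Matrix.det_vandermonde] at key
  have h2 : (∏ j : Fin M, Real.sqrt 2 ^ (j : ℕ)) * (∏ j : Fin M, (Real.sqrt 2)⁻¹ ^ (j : ℕ))
      = 1 := by
    rw [← Finset.prod_mul_distrib]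
    apply Finset.prod_eq_one
    intro j _
    rw [inv_pow, mul_inv_cancel₀ (by positivity)]
  rw [key, ← mul_assoc, h2, one_mul]

end Expansion

section Andreief

variable {M : ℕ}

open Equiv

lemma term_integrable (σ τ : Equiv.Perm (Fin M)) :
    Integrable (fun x : Fin M → ℝ => ∏ j : Fin M,
      ((Hs ((σ j : ℕ))).eval (x j) * (Hs ((τ j : ℕ))).eval (x j) * Real.exp (-(x j ^ 2)))) := by
  have : ∀ j : Fin M, Integrable (fun t : ℝ =>
      (Hs ((σ j : ℕ))).eval t * (Hs ((τ j : ℕ))).eval t * Real.exp (-(t ^ 2))) := by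
    intro j
    have := integrable_poly_w (Hs ((σ j : ℕ)) * Hs ((τ j : ℕ)))
    apply this.congr
    filter_upwards with t
    simp [Polynomial.eval_mul]
  exact Integrable.fintype_prod (E := ℝ) this

lemma term_integral (σ τ : Equiv.Perm (Fin M)) :
    (∫ x : Fin M → ℝ, ∏ j : Fin M,
      ((Hs ((σ j : ℕ))).eval (x j) * (Hs ((τ j : ℕ))).eval (x j) * Real.exp (-(x j ^ 2))))
    = if σ = τ then ∏ j : Fin M, (((j : ℕ).factorial : ℝ) * Real.sqrt π) else 0 := by
  rw [MeasureTheory.integral_fintype_prod_volume_eq_prod (f := fun j t =>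
    (Hs ((σ j : ℕ))).eval t * (Hs ((τ j : ℕ))).eval t * Real.exp (-(t ^ 2)))]
  have e : ∀ j : Fin M, (∫ t : ℝ,
      (Hs ((σ j : ℕ))).eval t * (Hs ((τ j : ℕ))).eval t * Real.exp (-(t ^ 2)))
      = if σ j = τ j then (((σ j : ℕ)).factorial : ℝ) * Real.sqrt π else 0 := by
    intro j
    rw [show (fun t : ℝ => (Hs ((σ j : ℕ))).eval t * (Hs ((τ j : ℕ))).eval t
      * Real.exp (-(t ^ 2))) = fun t : ℝ => (Hs ((σ j : ℕ))).eval t * (Hs ((τ j : ℕ))).eval t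
      * Real.exp (-t ^ 2) by funext t; ring_nf]
    rw [orth_s]
    congr 1
    simp [Fin.val_eq_val]
  by_cases h : σ = τ
  · subst h
    rw [if_pos rfl]
    calc ∏ j : Fin M, (∫ t : ℝ, (Hs ((σ j : ℕ))).eval t * (Hs ((σ j : ℕ))).eval t
          * Real.exp (-(t ^ 2)))
        = ∏ j : Fin M, ((((σ j : ℕ)).factorial : ℝ) * Real.sqrt π) := by
          apply Finset.prod_congr rfl
          intro j _
          rw [e j, if_pos rfl]
      _ = ∏ j : Fin M, (((j : ℕ).factorial : ℝ) * Real.sqrt π) :=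
          Equiv.prod_comp σ fun j => (((j : ℕ).factorial : ℝ) * Real.sqrt π)
  · rw [if_neg h]
    obtain ⟨j, hj⟩ : ∃ j, σ j ≠ τ j := by
      by_contra hc
      push_neg at hc
      exact h (Equiv.ext hc)
    apply Finset.prod_eq_zero (Finset.mem_univ j)
    rw [e j, if_neg hj]

lemma T_expand (x : Fin M → ℝ) :
    T x = ∑ σ : Equiv.Perm (Fin M), ∑ τ : Equiv.Perm (Fin M),
      (((Equiv.Perm.sign σ : ℤ) : ℝ) * ((Equiv.Perm.sign τ : ℤ) : ℝ)) * ∏ j : Fin M,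
      ((Hs ((σ j : ℕ))).eval (x j) * (Hs ((τ j : ℕ))).eval (x j) * Real.exp (-(x j ^ 2))) := by
  have hdet : (Amat x).det = ∑ σ : Equiv.Perm (Fin M),
      ((Equiv.Perm.sign σ : ℤ) : ℝ) * ∏ j : Fin M, (Hs ((σ j : ℕ))).eval (x j) := by
    rw [Matrix.det_apply]
    apply Finset.sum_congr rfl
    intro σ _
    simp only [Amat, Matrix.of_apply, Units.smul_def, zsmul_eq_mul]
  rw [T, hdet, sq, Finset.sum_mul_sum]
  rw [Finset.sum_mul]
  apply Finset.sum_congr rfl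
  intro σ _
  rw [Finset.sum_mul]
  apply Finset.sum_congr rfl
  intro τ _
  rw [Finset.prod_mul_distrib, Finset.prod_mul_distrib]
  ring

lemma integrable_T : Integrable (T (M := M)) := by
  rw [show T (M := M) = fun x => ∑ σ : Equiv.Perm (Fin M), ∑ τ : Equiv.Perm (Fin M),
      (((Equiv.Perm.sign σ : ℤ) : ℝ) * ((Equiv.Perm.sign τ : ℤ) : ℝ)) * ∏ j : Fin M,
      ((Hs ((σ j : ℕ))).eval (x j) * (Hs ((τ j : ℕ))).eval (x j) * Real.exp (-(x j ^ 2)))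
    from funext T_expand]
  apply integrable_finset_sum
  intro σ _
  apply integrable_finset_sum
  intro τ _
  exact (term_integrable σ τ).const_mul _

lemma integral_T :
    ∫ x : Fin M → ℝ, T x = (M.factorial : ℝ) *
      ∏ j : Fin M, (((j : ℕ).factorial : ℝ) * Real.sqrt π) := by
  rw [show (fun x : Fin M → ℝ => T x) = fun x => ∑ σ : Equiv.Perm (Fin M),
      ∑ τ : Equiv.Perm (Fin M),
      (((Equiv.Perm.sign σ : ℤ) : ℝ) * ((Equiv.Perm.sign τ : ℤ) : ℝ)) * ∏ j : Fin M,
      ((Hs ((σ j : ℕ))).eval (x j) * (Hs ((τ j : ℕ))).eval (x j) * Real.exp (-(x j ^ 2)))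
    from funext T_expand]
  rw [integral_finset_sum _ (fun σ _ => integrable_finset_sum _
    (fun τ _ => (term_integrable σ τ).const_mul _))]
  rw [Finset.sum_congr rfl fun σ _ => integral_finset_sum _
    (fun τ _ => (term_integrable σ τ).const_mul _)]
  have e1 : ∀ σ : Equiv.Perm (Fin M), (∑ τ : Equiv.Perm (Fin M), ∫ x : Fin M → ℝ,
      (((Equiv.Perm.sign σ : ℤ) : ℝ) * ((Equiv.Perm.sign τ : ℤ) : ℝ)) * ∏ j : Fin M,
      ((Hs ((σ j : ℕ))).eval (x j) * (Hs ((τ j : ℕ))).eval (x j) * Real.exp (-(x j ^ 2))))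
      = ∏ j : Fin M, (((j : ℕ).factorial : ℝ) * Real.sqrt π) := by
    intro σ
    have e2 : ∀ τ : Equiv.Perm (Fin M), (∫ x : Fin M → ℝ,
        (((Equiv.Perm.sign σ : ℤ) : ℝ) * ((Equiv.Perm.sign τ : ℤ) : ℝ)) * ∏ j : Fin M,
        ((Hs ((σ j : ℕ))).eval (x j) * (Hs ((τ j : ℕ))).eval (x j) * Real.exp (-(x j ^ 2))))
        = if σ = τ then ∏ j : Fin M, (((j : ℕ).factorial : ℝ) * Real.sqrt π) else 0 := by
      intro τ
      rw [integral_const_mul, term_integral]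
      by_cases h : σ = τ
      · subst h
        rw [if_pos rfl]
        have hsq : ((Equiv.Perm.sign σ : ℤ) : ℝ) * ((Equiv.Perm.sign σ : ℤ) : ℝ) = 1 := by
          rcases Int.units_eq_one_or (Equiv.Perm.sign σ) with hs | hs <;> rw [hs] <;> simp
        rw [hsq, one_mul]
      · rw [if_neg h, mul_zero]
    rw [Finset.sum_congr rfl fun τ _ => e2 τ]
    simp
  rw [Finset.sum_congr rfl fun σ _ => e1 σ, Finset.sum_const, Finset.card_univ,
    Fintype.card_perm, Fintype.card_fin, nsmul_eq_mul]

end Andreief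

section Symmetrization

variable {M : ℕ}

/-- The closed Weyl chamber. -/
def chamber (M : ℕ) : Set (Fin M → ℝ) := {x | ∀ i j : Fin M, i ≤ j → x j ≤ x i}

/-- Open permuted chambers. -/
def oc (σ : Equiv.Perm (Fin M)) : Set (Fin M → ℝ) :=
  {x | ∀ i j : Fin M, i < j → x (σ j) < x (σ i)}

lemma measurableSet_oc (σ : Equiv.Perm (Fin M)) : MeasurableSet (oc σ) := by
  have : oc σ = ⋂ i : Fin M, ⋂ j : Fin M, {x : Fin M → ℝ | i < j → x (σ j) < x (σ i)} := by
    ext x; simp [oc, Set.mem_iInter]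
  rw [this]
  refine MeasurableSet.iInter fun i => MeasurableSet.iInter fun j => ?_
  by_cases h : i < j
  · simp only [h, forall_true_left]
    exact measurableSet_lt (measurable_pi_apply _) (measurable_pi_apply _)
  · simp only [h]
    simp

lemma measurableSet_chamber : MeasurableSet (chamber M) := by
  have : chamber M = ⋂ i : Fin M, ⋂ j : Fin M, {x : Fin M → ℝ | i ≤ j → x j ≤ x i} := by
    ext x; simp [chamber, Set.mem_iInter]
  rw [this]
  refine MeasurableSet.iInter fun i => MeasurableSet.iInter fun j => ?_
  by_cases h : i ≤ j
  · simp only [h, forall_true_left]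
    exact measurableSet_le (measurable_pi_apply _) (measurable_pi_apply _)
  · simp only [h]
    simp

lemma null_noninj :
    volume {x : Fin M → ℝ | ¬ Function.Injective x} = 0 := by
  have hsub : {x : Fin M → ℝ | ¬ Function.Injective x} ⊆
      ⋃ i : Fin M, ⋃ j : Fin M, ⋃ _ : i ≠ j, {x : Fin M → ℝ | x i = x j} := by
    intro x hx
    simp only [Function.Injective, not_forall] at hx
    obtain ⟨i, j, hij, hne⟩ := hx
    exact Set.mem_iUnion.2 ⟨i, Set.mem_iUnion.2 ⟨j, Set.mem_iUnion.2 ⟨hne, hij⟩⟩⟩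
  refine measure_mono_null hsub ?_
  refine measure_iUnion_null fun i => measure_iUnion_null fun j => measure_iUnion_null fun h => ?_
  have heq : {x : Fin M → ℝ | x i = x j} =
      (LinearMap.ker ((LinearMap.proj i : (Fin M → ℝ) →ₗ[ℝ] ℝ) - LinearMap.proj j) :
        Set (Fin M → ℝ)) := by
    ext x; simp [sub_eq_zero, LinearMap.mem_ker]
  rw [heq]
  apply MeasureTheory.Measure.addHaar_submodule
  intro htop
  have h1 : (Pi.single i 1 : Fin M → ℝ) ∈ LinearMap.ker
      ((LinearMap.proj i : (Fin M → ℝ) →ₗ[ℝ] ℝ) - LinearMap.proj j) :=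
    htop ▸ Submodule.mem_top
  simp [LinearMap.mem_ker, Pi.single_apply, h, h.symm] at h1

lemma inj_of_mem_oc {σ : Equiv.Perm (Fin M)} {x : Fin M → ℝ} (hx : x ∈ oc σ) :
    Function.Injective x := by
  have hanti : StrictAnti (fun i => x (σ i)) := fun i j hij => hx i j hij
  have hinj : Function.Injective (fun i => x (σ i)) := hanti.injective
  intro a b hab
  have := hinj (a₁ := σ.symm a) (a₂ := σ.symm b) (by simpa using hab)
  simpa using congrArg σ this

lemma oc_disjoint {σ τ : Equiv.Perm (Fin M)} (h : σ ≠ τ) : Disjoint (oc σ) (oc τ) := by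
  rw [Set.disjoint_left]
  intro x hxσ hxτ
  apply h
  have hinj : Function.Injective x := inj_of_mem_oc hxσ
  have hmσ : Monotone ((fun i => -(x i)) ∘ σ) := by
    intro i j hij
    rcases lt_or_eq_of_le hij with h' | h'
    · simpa using (hxσ i j h').le
    · rw [h']
  have hmτ : Monotone ((fun i => -(x i)) ∘ τ) := by
    intro i j hij
    rcases lt_or_eq_of_le hij with h' | h'
    · simpa using (hxτ i j h').le
    · rw [h']
  have heq := Tuple.unique_monotone hmσ hmτ
  ext i
  have := congrFun heq i
  simp only [Function.comp_apply, neg_inj] at this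
  exact congrArg Fin.val (hinj this)

lemma cover_oc {x : Fin M → ℝ} (hx : Function.Injective x) :
    ∃ σ : Equiv.Perm (Fin M), x ∈ oc σ := by
  classical
  set σ₀ := Tuple.sort x with hσ₀
  have hmono : Monotone (x ∘ σ₀) := Tuple.monotone_sort x
  have hstrict : StrictMono (x ∘ σ₀) := hmono.strictMono_of_injective (hx.comp σ₀.injective)
  refine ⟨σ₀ * Fin.revPerm, fun i j hij => ?_⟩
  have : (Fin.revPerm j : Fin M) < Fin.revPerm i := by
    simpa using (Fin.rev_lt_rev).2 hij
  simpa using hstrict this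

end Symmetrization

section Transport

variable {M : ℕ}

lemma setIntegral_oc_eq (f : (Fin M → ℝ) → ℝ)
    (hsymm : ∀ (σ : Equiv.Perm (Fin M)) (x : Fin M → ℝ), f (x ∘ σ) = f x)
    (σ : Equiv.Perm (Fin M)) :
    ∫ x in oc σ, f x = ∫ x in oc 1, f x := by
  have mp : MeasurePreserving (MeasurableEquiv.piCongrLeft (fun _ : Fin M => ℝ) σ.symm)
      volume volume := volume_measurePreserving_piCongrLeft _ σ.symm
  have key := mp.setIntegral_preimage_emb
    (MeasurableEquiv.piCongrLeft (fun _ : Fin M => ℝ) σ.symm).measurableEmbedding f (oc 1)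
  have hpre : (MeasurableEquiv.piCongrLeft (fun _ : Fin M => ℝ) σ.symm) ⁻¹' (oc 1) = oc σ := by
    ext x
    simp only [Set.mem_preimage, oc, Set.mem_setOf_eq, Equiv.Perm.one_apply]
    constructor
    · intro h i j hij
      simpa [MeasurableEquiv.piCongrLeft, Equiv.piCongrLeft, Equiv.piCongrLeft']
        using h i j hij
    · intro h i j hij
      simpa [MeasurableEquiv.piCongrLeft, Equiv.piCongrLeft, Equiv.piCongrLeft']
        using h i j hij
  have hfe : (fun x : Fin M → ℝ =>
      f ((MeasurableEquiv.piCongrLeft (fun _ : Fin M => ℝ) σ.symm) x)) = f := by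
    funext x
    have : (MeasurableEquiv.piCongrLeft (fun _ : Fin M => ℝ) σ.symm) x = x ∘ σ := by
      funext i
      simp [MeasurableEquiv.piCongrLeft, Equiv.piCongrLeft]
    rw [this, hsymm σ x]
  rw [hpre] at key
  rw [← key]
  exact (congrArg (fun g => ∫ x in oc σ, g x) hfe).symm

lemma oc_one_subset : oc (1 : Equiv.Perm (Fin M)) ⊆ chamber M := by
  intro x hx i j hij
  rcases lt_or_eq_of_le hij with h' | h'
  · exact le_of_lt (show x j < x i by simpa using hx i j h')
  · rw [h']

lemma chamber_diff_subset :
    chamber M \ oc (1 : Equiv.Perm (Fin M)) ⊆ {x : Fin M → ℝ | ¬ Function.Injective x} := by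
  rintro x ⟨hc, hno⟩
  simp only [oc, Set.mem_setOf_eq, Equiv.Perm.one_apply, not_forall] at hno
  obtain ⟨i, j, hij, hge⟩ := hno
  intro hinj
  have h1 : x j ≤ x i := hc i j hij.le
  have h2 : x i = x j := le_antisymm (not_lt.mp hge) h1
  exact absurd (hinj h2) (ne_of_lt hij)

lemma integral_eq_factorial_mul (f : (Fin M → ℝ) → ℝ) (hf : Integrable f)
    (hsymm : ∀ (σ : Equiv.Perm (Fin M)) (x : Fin M → ℝ), f (x ∘ σ) = f x) :
    ∫ x, f x = (M.factorial : ℝ) * ∫ x in chamber M, f x := by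
  classical
  have hcompl : volume (⋃ σ : Equiv.Perm (Fin M), oc σ)ᶜ = 0 := by
    refine measure_mono_null ?_ null_noninj
    intro x hx
    simp only [Set.mem_compl_iff, Set.mem_iUnion, not_exists] at hx
    intro hinj
    obtain ⟨σ, hσ⟩ := cover_oc hinj
    exact hx σ hσ
  have h1 : ∫ x, f x = ∫ x in ⋃ σ : Equiv.Perm (Fin M), oc σ, f x := by
    rw [← setIntegral_univ]
    exact (setIntegral_congr_set (ae_eq_univ.2 hcompl)).symm
  have h2 : ∫ x in ⋃ σ : Equiv.Perm (Fin M), oc σ, f x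
      = ∑' σ : Equiv.Perm (Fin M), ∫ x in oc σ, f x :=
    integral_iUnion measurableSet_oc (fun σ τ h => oc_disjoint h) hf.integrableOn
  have h3 : (∑' σ : Equiv.Perm (Fin M), ∫ x in oc σ, f x)
      = ∑ σ : Equiv.Perm (Fin M), ∫ x in oc σ, f x := tsum_fintype _
  have h4 : ∀ σ : Equiv.Perm (Fin M), ∫ x in oc σ, f x = ∫ x in oc 1, f x :=
    setIntegral_oc_eq f hsymm
  have h5 : ∫ x in oc (1 : Equiv.Perm (Fin M)), f x = ∫ x in chamber M, f x := by
    apply setIntegral_congr_set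
    rw [MeasureTheory.ae_eq_set]
    constructor
    · rw [Set.diff_eq_empty.2 oc_one_subset]; simp
    · exact measure_mono_null chamber_diff_subset null_noninj
  rw [h1, h2, h3, Finset.sum_congr rfl fun σ _ => (h4 σ).trans h5, Finset.sum_const,
    Finset.card_univ, Fintype.card_perm, Fintype.card_fin, nsmul_eq_mul]

end Transport

section Final

variable {M : ℕ}

lemma T_symm (σ : Equiv.Perm (Fin M)) (x : Fin M → ℝ) : T (x ∘ σ) = T x := by
  have hA : Amat (x ∘ σ) = (Amat x).submatrix id σ := by
    ext i j
    simp [Amat, Matrix.submatrix_apply]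
  have hdet : (Amat (x ∘ σ)).det = (Equiv.Perm.sign σ : ℤ) * (Amat x).det := by
    rw [hA, Matrix.det_permute']
  have hsq : ((Amat (x ∘ σ)).det) ^ 2 = ((Amat x).det) ^ 2 := by
    rw [hdet, mul_pow]
    rcases Int.units_eq_one_or (Equiv.Perm.sign σ) with hs | hs <;> rw [hs] <;> norm_num
  have hprod : (∏ i, Real.exp (-((x ∘ σ) i ^ 2))) = ∏ i, Real.exp (-(x i ^ 2)) :=
    Equiv.prod_comp σ fun i => Real.exp (-(x i ^ 2))
  rw [T, T, hsq, hprod]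

lemma T_eq (x : Fin M → ℝ) :
    T x = 2 ^ (∑ j : Fin M, (j : ℕ)) *
      ((∏ i : Fin M, ∏ j ∈ Finset.Ioi i, (x i - x j) ^ 2) *
        ∏ i : Fin M, Real.exp (-(x i ^ 2))) := by
  rw [T, det_Amat, mul_pow]
  have h1 : (∏ j : Fin M, Real.sqrt 2 ^ (j : ℕ)) ^ 2 = 2 ^ (∑ j : Fin M, (j : ℕ)) := by
    rw [← Finset.prod_pow]
    rw [← Finset.prod_pow_eq_pow_sum]
    apply Finset.prod_congr rfl
    intro j _
    rw [← pow_mul, mul_comm (j : ℕ) 2, pow_mul, Real.sq_sqrt (by norm_num : (0:ℝ) ≤ 2)]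
  have h2 : (∏ i : Fin M, ∏ j ∈ Finset.Ioi i, (x j - x i)) ^ 2
      = ∏ i : Fin M, ∏ j ∈ Finset.Ioi i, (x i - x j) ^ 2 := by
    rw [← Finset.prod_pow]
    apply Finset.prod_congr rfl
    intro i _
    rw [← Finset.prod_pow]
    apply Finset.prod_congr rfl
    intro j _
    ring
  rw [h1, h2]
  ring

end Final

end GUEaux

open MeasureTheory

/-- Normalizing constant of the joint eigenvalue density of the Gaussian unitary
ensemble: the integral of the squared Vandermonde determinant times
`Π_i e^{-x_i²}` over the ordered region `x_1 ≥ ⋯ ≥ x_M` equals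
`2^{-M(M-1)/2} π^{M/2} Π_{i=1}^M (i-1)!`. -/
theorem stmt_12 {M : ℕ} (hM : 1 ≤ M) :
    (∫ x : Fin M → ℝ in {x | ∀ i j : Fin M, i ≤ j → x j ≤ x i},
      (∏ i : Fin M, ∏ j ∈ Finset.Ioi i, (x i - x j) ^ 2) *
        ∏ i : Fin M, Real.exp (-(x i ^ 2)))
    = Real.pi ^ ((M : ℝ) / 2) / 2 ^ (M * (M - 1) / 2) *
        ∏ i : Fin M, ((i : ℕ).factorial : ℝ) := by
  classical
  open GUEaux in
  have hc : (∑ j : Fin M, (j : ℕ)) = M * (M - 1) / 2 := by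
    rw [show (∑ j : Fin M, (j : ℕ)) = ∑ i ∈ Finset.range M, i from
      Fin.sum_univ_eq_sum_range (fun i => i) M]
    exact Finset.sum_range_id M
  have hset : {x : Fin M → ℝ | ∀ i j : Fin M, i ≤ j → x j ≤ x i} = GUEaux.chamber M := rfl
  have hchamberT : ∫ x in GUEaux.chamber M, GUEaux.T x
      = ∏ j : Fin M, (((j : ℕ).factorial : ℝ) * Real.sqrt Real.pi) := by
    have hs := GUEaux.integral_eq_factorial_mul (M := M) GUEaux.T GUEaux.integrable_T GUEaux.T_symm
    have hv := GUEaux.integral_T (M := M)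
    rw [hv] at hs
    have hMfac : (M.factorial : ℝ) ≠ 0 := Nat.cast_ne_zero.2 (Nat.factorial_ne_zero M)
    exact (mul_left_cancel₀ hMfac hs).symm
  have hint : ∫ x in GUEaux.chamber M,
      ((∏ i : Fin M, ∏ j ∈ Finset.Ioi i, (x i - x j) ^ 2) *
        ∏ i : Fin M, Real.exp (-(x i ^ 2)))
      = ((2 : ℝ) ^ (M * (M - 1) / 2))⁻¹ *
        ∏ j : Fin M, (((j : ℕ).factorial : ℝ) * Real.sqrt Real.pi) := by
    rw [← hchamberT, ← integral_const_mul]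
    apply setIntegral_congr_fun GUEaux.measurableSet_chamber
    intro x _
    simp only []
    rw [GUEaux.T_eq, hc]
    have h2 : ((2:ℝ) ^ (M * (M - 1) / 2)) ≠ 0 := by positivity
    field_simp
  rw [hset, hint]
  rw [Finset.prod_mul_distrib, Finset.prod_const, Finset.card_univ, Fintype.card_fin]
  have hpi : Real.sqrt Real.pi ^ M = Real.pi ^ ((M : ℝ) / 2) := by
    rw [Real.sqrt_eq_rpow, ← Real.rpow_natCast (Real.pi ^ ((1:ℝ)/2)) M,
      ← Real.rpow_mul Real.pi_pos.le]
    congr 1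
    ring
  rw [hpi]
  ring
end

section
/- Let N ≥ 1, let A = (a_{i,j,k})_{1≤i,j,k≤N} be a rank-3 tensor with complex entries, and let {B_1,…,B_r} be a partition of {1,…,N} such that a_{i,j,k} = a_{i,j,k'} whenever k and k' lie in the same block. For a permutation μ of {1,…,N}, let A^{(μ)} denote the N×N matrix with (i,j) entry a_{μ(i),j,i}. Then: (i) for every permutation τ that maps each block B_t to itself and every permutation μ, sgn(μ∘τ) · det A^{(μ∘τ)} = sgn(μ) · det A^{(μ)}; and consequently (ii) T(A) = (Π_{t=1}^r |B_t|!) · Σ_{μ ∈ R} sgn(μ) · det A^{(μ)}, where R is the set of permutations μ of {1,…,N} whose restriction to each block B_t is increasing (i.e., for k < k' in the same block, μ(k) < μ(k')). In particular the number of determinant evaluations needed to compute T(A) reduces from N! to N!/Π_{t=1}^r |B_t|!. -/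
open MeasureTheory

/-- The matrix `A^{(μ)}` with `(i,j)` entry `a_{μ(i), j, i}`. -/
def permMat {N : ℕ} (A : Fin N → Fin N → Fin N → ℂ) (μ : Equiv.Perm (Fin N)) :
    Matrix (Fin N) (Fin N) ℂ :=
  Matrix.of fun i j => A (μ i) j i

open Finset Equiv

namespace Stmt14Aux

variable {N r : ℕ}

/-- Block `b` of the partition. -/
def sB (P : Fin N → Fin r) (b : Fin r) : Finset (Fin N) :=
  Finset.univ.filter fun k => P k = b

lemma mem_sB {P : Fin N → Fin r} {b : Fin r} {k : Fin N} : k ∈ sB P b ↔ P k = b := by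
  simp [sB]

lemma card_image_sB (P : Fin N → Fin r) (μ : Equiv.Perm (Fin N)) (b : Fin r) :
    ((sB P b).image μ).card = (sB P b).card :=
  Finset.card_image_of_injective _ μ.injective

/-- images of distinct blocks under a permutation are disjoint. -/
lemma t_disjoint (P : Fin N → Fin r) (μ : Equiv.Perm (Fin N)) {b b' : Fin r} {x : Fin N}
    (hx : x ∈ (sB P b).image μ) (hx' : x ∈ (sB P b').image μ) : b = b' := by
  rcases Finset.mem_image.1 hx with ⟨a, ha, rfl⟩
  rcases Finset.mem_image.1 hx' with ⟨a', ha', h⟩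
  have : a' = a := μ.injective h
  subst this
  rw [← mem_sB.1 ha, ← mem_sB.1 ha']

/-- The increasing representative of the coset of `μ`, as a function. -/
noncomputable def repFun (P : Fin N → Fin r) (μ : Equiv.Perm (Fin N)) (k : Fin N) : Fin N :=
  ((sB P (P k)).image μ).orderEmbOfFin (card_image_sB P μ (P k))
    (((sB P (P k)).orderIsoOfFin rfl).symm ⟨k, mem_sB.2 rfl⟩)

lemma repFun_eq (P : Fin N → Fin r) (μ : Equiv.Perm (Fin N)) (k : Fin N) {b : Fin r}
    (hb : P k = b) :
    repFun P μ k = ((sB P b).image μ).orderEmbOfFin (card_image_sB P μ b)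
      (((sB P b).orderIsoOfFin rfl).symm ⟨k, mem_sB.2 hb⟩) := by
  subst hb; rfl

lemma repFun_mem (P : Fin N → Fin r) (μ : Equiv.Perm (Fin N)) (k : Fin N) :
    repFun P μ k ∈ (sB P (P k)).image μ :=
  Finset.orderEmbOfFin_mem _ _ _

lemma repFun_injective (P : Fin N → Fin r) (μ : Equiv.Perm (Fin N)) :
    Function.Injective (repFun P μ) := by
  intro k k' h
  have hb : P k = P k' := t_disjoint P μ (repFun_mem P μ k) (h ▸ repFun_mem P μ k')
  rw [repFun_eq P μ k hb, repFun_eq P μ k' rfl] at h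
  have h2 := (((sB P (P k')).image μ).orderEmbOfFin (card_image_sB P μ (P k'))).injective h
  have h3 := ((sB P (P k')).orderIsoOfFin rfl).symm.injective h2
  exact congrArg Subtype.val h3

lemma repFun_strictMono (P : Fin N → Fin r) (μ : Equiv.Perm (Fin N)) {k k' : Fin N}
    (hb : P k = P k') (h : k < k') : repFun P μ k < repFun P μ k' := by
  rw [repFun_eq P μ k hb, repFun_eq P μ k' rfl]
  apply (((sB P (P k')).image μ).orderEmbOfFin (card_image_sB P μ (P k'))).strictMono
  exact ((sB P (P k')).orderIsoOfFin rfl).symm.strictMono (Subtype.mk_lt_mk.2 h)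

/-- The increasing representative as a permutation. -/
noncomputable def rep (P : Fin N → Fin r) (μ : Equiv.Perm (Fin N)) : Equiv.Perm (Fin N) :=
  Equiv.ofBijective _ (Finite.injective_iff_bijective.mp (repFun_injective P μ))

lemma rep_apply (P : Fin N → Fin r) (μ : Equiv.Perm (Fin N)) (k : Fin N) :
    rep P μ k = repFun P μ k := rfl

lemma image_rep (P : Fin N → Fin r) (μ : Equiv.Perm (Fin N)) (b : Fin r) :
    (sB P b).image (rep P μ) = (sB P b).image μ := by
  apply Finset.eq_of_subset_of_card_le
  · intro x hx
    rcases Finset.mem_image.1 hx with ⟨a, ha, rfl⟩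
    have : P a = b := mem_sB.1 ha
    rw [rep_apply]
    exact this ▸ repFun_mem P μ a
  · rw [card_image_sB, Finset.card_image_of_injective _ (rep P μ).injective]

/-- Two maps strictly monotone on `s` with the same image on `s` agree on `s`. -/
lemma eq_on_of_strictMonoOn {f g : Fin N → Fin N} {s : Finset (Fin N)}
    (hf : ∀ k ∈ s, ∀ k' ∈ s, k < k' → f k < f k')
    (hg : ∀ k ∈ s, ∀ k' ∈ s, k < k' → g k < g k')
    (himg : s.image f = s.image g) : ∀ k ∈ s, f k = g k := by
  have hfm : StrictMono fun i : Fin s.card => f (s.orderEmbOfFin rfl i) := fun i j hij =>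
    hf _ (Finset.orderEmbOfFin_mem _ _ _) _ (Finset.orderEmbOfFin_mem _ _ _)
      ((s.orderEmbOfFin rfl).strictMono hij)
  have hgm : StrictMono fun i : Fin s.card => g (s.orderEmbOfFin rfl i) := fun i j hij =>
    hg _ (Finset.orderEmbOfFin_mem _ _ _) _ (Finset.orderEmbOfFin_mem _ _ _)
      ((s.orderEmbOfFin rfl).strictMono hij)
  have hfinj : Set.InjOn f s := fun a ha b hb hab => by
    rcases lt_trichotomy a b with h | h | h
    · exact absurd hab (ne_of_lt (hf a ha b hb h))
    · exact h
    · exact absurd hab.symm (ne_of_lt (hf b hb a ha h))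
  have hcf : (s.image f).card = s.card := Finset.card_image_of_injOn hfinj
  have hF := Finset.orderEmbOfFin_unique hcf
    (f := fun i : Fin s.card => f (s.orderEmbOfFin rfl i))
    (fun i => Finset.mem_image_of_mem f (Finset.orderEmbOfFin_mem _ _ _)) hfm
  have hG := Finset.orderEmbOfFin_unique hcf
    (f := fun i : Fin s.card => g (s.orderEmbOfFin rfl i))
    (fun i => himg ▸ Finset.mem_image_of_mem g (Finset.orderEmbOfFin_mem _ _ _)) hgm
  intro k hk
  have : k ∈ Set.range (s.orderEmbOfFin rfl) := by
    rw [Finset.range_orderEmbOfFin]; exact hk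
  rcases this with ⟨i, rfl⟩
  exact (congrFun hF i).trans (congrFun hG i).symm

/-- Uniqueness of the increasing representative. -/
lemma rep_unique (P : Fin N → Fin r) (μ ρ : Equiv.Perm (Fin N))
    (h1 : ∀ k k' : Fin N, P k = P k' → k < k' → ρ k < ρ k')
    (h2 : ∀ b, (sB P b).image ρ = (sB P b).image μ) : ρ = rep P μ := by
  apply Equiv.ext
  intro k
  refine eq_on_of_strictMonoOn (s := sB P (P k)) ?_ ?_ ?_ k (mem_sB.2 rfl)
  · intro a ha b hb hab
    exact h1 a b ((mem_sB.1 ha).trans (mem_sB.1 hb).symm) hab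
  · intro a ha b hb hab
    exact repFun_strictMono P μ ((mem_sB.1 ha).trans (mem_sB.1 hb).symm) hab
  · rw [h2, ← image_rep P μ]

end Stmt14Aux

namespace Stmt14Aux

variable {N r : ℕ}

lemma rep_inv_mul_mem (P : Fin N → Fin r) (μ : Equiv.Perm (Fin N)) (k : Fin N) :
    P (((rep P μ)⁻¹ * μ) k) = P k := by
  have hj : rep P μ ((rep P μ)⁻¹ (μ k)) = μ k := Equiv.apply_symm_apply _ _
  have h1 : repFun P μ ((rep P μ)⁻¹ (μ k)) ∈
      (sB P (P ((rep P μ)⁻¹ (μ k)))).image μ := repFun_mem P μ _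
  have h2 : μ k ∈ (sB P (P k)).image μ :=
    Finset.mem_image_of_mem _ (mem_sB.2 rfl)
  exact t_disjoint P μ ((rep_apply P μ _ ▸ hj) ▸ h1) h2

lemma image_of_blockPreserving (P : Fin N → Fin r) (τ : Equiv.Perm (Fin N))
    (hτ : ∀ k, P (τ k) = P k) (b : Fin r) : (sB P b).image τ = sB P b := by
  apply Finset.eq_of_subset_of_card_le
  · intro x hx
    rcases Finset.mem_image.1 hx with ⟨a, ha, rfl⟩
    exact mem_sB.2 ((hτ a).trans (mem_sB.1 ha))
  · rw [Finset.card_image_of_injective _ τ.injective]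

lemma rep_mul (P : Fin N → Fin r) (ρ τ : Equiv.Perm (Fin N))
    (hρ : ∀ k k', P k = P k' → k < k' → ρ k < ρ k')
    (hτ : ∀ k, P (τ k) = P k) : rep P (ρ * τ) = ρ := by
  refine (rep_unique P (ρ * τ) ρ hρ fun b => ?_).symm
  conv_rhs => rw [Equiv.Perm.coe_mul, ← Finset.image_image,
    image_of_blockPreserving P τ hτ]

end Stmt14Aux


open Stmt14Aux in
/-- Complexity reduction for the pseudo-determinant of a tensor whose entries only
depend on the third index through the block of a partition (the partition of
`{1,…,N}` is encoded by the block-assignment map `P : Fin N → Fin r`, whose fibers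
are the blocks).  (i) For every block-preserving permutation `τ`,
`sgn(μ∘τ) det A^{(μ∘τ)} = sgn(μ) det A^{(μ)}`; (ii) `T(A)` equals
`Π_t |B_t|!` times the sum of `sgn(μ) det A^{(μ)}` restricted to the permutations
that are increasing on each block. -/
theorem stmt_14 {N r : ℕ} (hN : 1 ≤ N) (A : Fin N → Fin N → Fin N → ℂ)
    (P : Fin N → Fin r) (hP : Function.Surjective P)
    (hA : ∀ i j k k', P k = P k' → A i j k = A i j k') :
    (∀ (τ μ : Equiv.Perm (Fin N)), (∀ k, P (τ k) = P k) →
        ((Equiv.Perm.sign (μ * τ) : ℤ) : ℂ) * (permMat A (μ * τ)).det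
          = ((Equiv.Perm.sign μ : ℤ) : ℂ) * (permMat A μ).det) ∧
      pseudoDet A =
        (∏ b : Fin r, (((Finset.univ.filter fun k => P k = b).card.factorial : ℕ) : ℂ)) *
          ∑ μ ∈ Finset.univ.filter
              (fun μ : Equiv.Perm (Fin N) =>
                ∀ k k' : Fin N, P k = P k' → k < k' → μ k < μ k'),
            ((Equiv.Perm.sign μ : ℤ) : ℂ) * (permMat A μ).det := by
  classical
  have part1 : ∀ (τ μ : Equiv.Perm (Fin N)), (∀ k, P (τ k) = P k) →
      ((Equiv.Perm.sign (μ * τ) : ℤ) : ℂ) * (permMat A (μ * τ)).det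
        = ((Equiv.Perm.sign μ : ℤ) : ℂ) * (permMat A μ).det := by
    intro τ μ hτ
    have hM : permMat A μ = (permMat A (μ * τ)).submatrix ⇑(τ⁻¹) id := by
      ext i j
      simp only [permMat, Matrix.submatrix_apply, Matrix.of_apply, id_eq,
        Equiv.Perm.coe_mul, Function.comp_apply, Equiv.Perm.coe_inv, Equiv.apply_symm_apply]
      exact hA _ _ _ _ (by rw [← hτ (τ.symm i), Equiv.apply_symm_apply])
    rw [hM, Matrix.det_permute]
    rcases Int.units_eq_one_or (Equiv.Perm.sign τ) with h | h <;>
      simp [Equiv.Perm.sign_mul, Equiv.Perm.sign_inv, h] <;> ring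
  refine ⟨part1, ?_⟩
  set f : Equiv.Perm (Fin N) → ℂ :=
    fun μ => ((Equiv.Perm.sign μ : ℤ) : ℂ) * (permMat A μ).det with hf
  have hpd : pseudoDet A = ∑ μ : Equiv.Perm (Fin N), f μ := by
    unfold pseudoDet
    refine Finset.sum_congr rfl fun μ _ => ?_
    rw [hf]
    simp only
    rw [← Matrix.det_transpose (permMat A μ), Matrix.det_apply', Finset.mul_sum]
    refine Finset.sum_congr rfl fun σ _ => ?_
    simp only [Matrix.transpose_apply, permMat, Matrix.of_apply]
    ring
  set R : Finset (Equiv.Perm (Fin N)) := Finset.univ.filter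
    (fun μ : Equiv.Perm (Fin N) =>
      ∀ k k' : Fin N, P k = P k' → k < k' → μ k < μ k') with hR
  set H : Finset (Equiv.Perm (Fin N)) := Finset.univ.filter
    (fun τ : Equiv.Perm (Fin N) => ∀ k, P (τ k) = P k) with hH
  have hsum : ∑ μ : Equiv.Perm (Fin N), f μ = ∑ p ∈ R ×ˢ H, f (p.1 * p.2) := by
    refine Finset.sum_nbij' (fun μ => (rep P μ, (rep P μ)⁻¹ * μ))
      (fun p => p.1 * p.2) ?_ ?_ ?_ ?_ ?_
    · intro μ _
      rw [Finset.mem_product]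
      constructor
      · rw [hR, Finset.mem_filter]
        exact ⟨Finset.mem_univ _, fun k k' hkk' h => repFun_strictMono P μ hkk' h⟩
      · rw [hH, Finset.mem_filter]
        exact ⟨Finset.mem_univ _, fun k => rep_inv_mul_mem P μ k⟩
    · intro p _; exact Finset.mem_univ _
    · intro μ _; exact mul_inv_cancel_left _ _
    · intro p hp
      rw [Finset.mem_product, hR, hH, Finset.mem_filter, Finset.mem_filter] at hp
      obtain ⟨ρ, τ⟩ := p
      simp only [rep_mul P ρ τ hp.1.2 hp.2.2, inv_mul_cancel_left]
    · intro μ _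
      rw [mul_inv_cancel_left]
  have hcount : ∀ ρ ∈ R, ∑ τ ∈ H, f (ρ * τ) = (H.card : ℂ) * f ρ := by
    intro ρ _
    rw [Finset.sum_congr rfl fun τ hτ => part1 τ ρ ((Finset.mem_filter.1 hτ).2),
      Finset.sum_const, nsmul_eq_mul]
  have hHcard : H.card = ∏ b : Fin r, ((Finset.univ.filter fun k => P k = b).card).factorial := by
    have h1 : H.card = Fintype.card {g : Equiv.Perm (Fin N) // P ∘ ⇑g = P} := by
      rw [Fintype.card_subtype, hH]
      congr 1
      ext τ
      simp [funext_iff, Function.comp]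
    rw [h1, DomMulAct.stabilizer_card]
    exact Finset.prod_congr rfl fun b _ => by rw [Fintype.card_subtype]
  rw [hpd, hsum, Finset.sum_product, Finset.sum_congr rfl hcount, ← Finset.mul_sum]
  congr 1
  rw [hHcard]
  push_cast
  rfl
end
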